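/- arXiv:2102.01947 — 5 statements merged into one kernel-verified Lean document; each statement's English description precedes it below -/
import Mathlib

section
/- Let μ ⊢ n and λ ⊢ n+1 with λ obtained from μ by adding one box in column k, and let L(λ, μ) denote the number of x ∈ F_q^n extending a fixed nilpotent X of type μ to a nilpotent matrix of type λ (as in the preceding counting result). Let ψ_{λ/μ}(t) := 1 − t^{m_{k−1}(μ)} for k > 1 and ψ_{λ/μ}(t) := 1 for k = 1 be the Hall–Littlewood Pieri coefficient. Then L(λ, μ) = ψ_{λ/μ}(q^{−1}) · q^{n(μ) − n(n−1)/2} / q^{n(λ) − (n+1)n/2}, where n(ν) := Σ_{i ≥ 1} (i−1) ν_i. -/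
open scoped BigOperators

def IsPartitionFun (f : ℕ → ℕ) : Prop := Antitone f ∧ ∃ N, ∀ n, N ≤ n → f n = 0

/-- The `k`-th part `μ'_k = #{i : μ_i ≥ k}` of the conjugate partition (for `k ≥ 1`). -/
noncomputable def conjP (μ : ℕ → ℕ) (k : ℕ) : ℕ := Nat.card {i : ℕ | k ≤ μ i}

/-- `m_j(μ)`, the number of parts of `μ` equal to `j`. -/
noncomputable def mcount (μ : ℕ → ℕ) (j : ℕ) : ℕ := Nat.card {i : ℕ | μ i = j}

/-- The statistic `n(μ) = Σ_{i ≥ 1} (i-1) μ_i` (with 0-based indexing, `Σ_i i * μ i`). -/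
noncomputable def nstat (μ : ℕ → ℕ) : ℕ := ∑ᶠ i, i * μ i

lemma aux_card_eq (P : ℕ → Prop) [DecidablePred P] (N : ℕ) (h : ∀ i, P i → i < N) :
    Nat.card {i : ℕ | P i} = ((Finset.range N).filter P).card := by
  rw [Nat.card_coe_set_eq, ← Set.ncard_coe_finset]
  congr 1
  ext i; simp [h i]
  exact fun hi => h i hi

lemma aux_conjP_eq (μ : ℕ → ℕ) (N : ℕ) (hN : ∀ i, N ≤ i → μ i = 0)
    (j : ℕ) (hj : 1 ≤ j) :
    conjP μ j = ((Finset.range N).filter (fun i => j ≤ μ i)).card := by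
  apply aux_card_eq
  intro i hi
  by_contra hc
  have := hN i (by omega)
  omega

lemma aux_conjP_lt_iff (μ : ℕ → ℕ) (hμ : IsPartitionFun μ) (j : ℕ) (hj : 1 ≤ j) (i : ℕ) :
    i < conjP μ j ↔ j ≤ μ i := by
  obtain ⟨hanti, N, hN⟩ := hμ
  rw [aux_conjP_eq μ N hN j hj]
  constructor
  · intro h
    by_contra hc
    push_neg at hc
    have hsub : (Finset.range N).filter (fun i' => j ≤ μ i') ⊆ Finset.range i := by
      intro i' hi'
      simp only [Finset.mem_filter, Finset.mem_range] at hi' ⊢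
      by_contra hge
      have : μ i' ≤ μ i := hanti (by omega)
      omega
    have := Finset.card_le_card hsub
    simp at this; omega
  · intro h
    have hiN : i < N := by
      by_contra hc
      have := hN i (by omega); omega
    have hsub : Finset.range (i + 1) ⊆ (Finset.range N).filter (fun i' => j ≤ μ i') := by
      intro i' hi'
      simp only [Finset.mem_range] at hi'
      simp only [Finset.mem_filter, Finset.mem_range]
      have : μ i ≤ μ i' := hanti (by omega)
      omega
    have := Finset.card_le_card hsub
    simp at this; omega

lemma aux_rowset (μ : ℕ → ℕ) (hμ : IsPartitionFun μ) (i : ℕ) :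
    {j : ℕ | 1 ≤ j ∧ i < conjP μ j} = ↑(Finset.Icc 1 (μ i)) := by
  ext j
  simp only [Set.mem_setOf_eq, Finset.coe_Icc, Set.mem_Icc]
  constructor
  · rintro ⟨h1, h2⟩
    exact ⟨h1, (aux_conjP_lt_iff μ hμ j h1 i).1 h2⟩
  · rintro ⟨h1, h2⟩
    exact ⟨h1, (aux_conjP_lt_iff μ hμ j h1 i).2 h2⟩

lemma aux_row_eq (μ : ℕ → ℕ) (hμ : IsPartitionFun μ) (i : ℕ) :
    Nat.card {j : ℕ | 1 ≤ j ∧ i < conjP μ j} = μ i := by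
  rw [aux_rowset μ hμ i, Nat.card_coe_set_eq, Set.ncard_coe_finset, Nat.card_Icc]
  omega

lemma aux_lam_eq (μ lam : ℕ → ℕ) (hμ : IsPartitionFun μ) (hlam : IsPartitionFun lam)
    (k : ℕ) (hk : 1 ≤ k)
    (hboxk : conjP lam k = conjP μ k + 1)
    (hbox : ∀ i, 1 ≤ i → i ≠ k → conjP lam i = conjP μ i) (i : ℕ) :
    lam i = μ i + (if i = conjP μ k then 1 else 0) := by
  rcases eq_or_ne i (conjP μ k) with hi | hi
  · subst hi
    rw [if_pos rfl]
    rw [← aux_row_eq lam hlam]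
    have hμrk : ¬ (k ≤ μ (conjP μ k)) := by
      rw [← aux_conjP_lt_iff μ hμ k hk]; omega
    have hset : {j : ℕ | 1 ≤ j ∧ conjP μ k < conjP lam j}
        = ↑(insert k (Finset.Icc 1 (μ (conjP μ k)))) := by
      rw [Finset.coe_insert, ← aux_rowset μ hμ (conjP μ k)]
      ext j
      simp only [Set.mem_setOf_eq, Set.mem_insert_iff]
      rcases eq_or_ne j k with hj | hj
      · subst hj
        simp [hk, hboxk]
      · rcases Nat.eq_zero_or_pos j with h0 | h0
        · subst h0
          constructor
          · rintro ⟨h1, _⟩; omega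
          · rintro (h | ⟨h1, _⟩) <;> omega
        · rw [hbox j h0 hj]
          tauto
    rw [hset, Nat.card_coe_set_eq, Set.ncard_coe_finset,
      Finset.card_insert_of_notMem (by simp; omega), Nat.card_Icc]
    omega
  · rw [← aux_row_eq lam hlam, ← aux_row_eq μ hμ]
    simp only [if_neg hi, Nat.add_zero]
    have hset : {j : ℕ | 1 ≤ j ∧ i < conjP lam j} = {j : ℕ | 1 ≤ j ∧ i < conjP μ j} := by
      ext j
      simp only [Set.mem_setOf_eq]
      rcases eq_or_ne j k with hj | hj
      · subst hj
        rw [hboxk]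
        constructor
        · rintro ⟨h1, h2⟩
          refine ⟨h1, ?_⟩
          rcases Nat.lt_or_ge i (conjP μ j) with h | h
          · exact h
          · omega
        · rintro ⟨h1, h2⟩; exact ⟨h1, by omega⟩
      · rcases Nat.eq_zero_or_pos j with h0 | h0
        · subst h0; simp
        · rw [hbox j h0 hj]
    rw [hset]

lemma aux_nstat (μ lam : ℕ → ℕ) (hμ : IsPartitionFun μ) (hlam : IsPartitionFun lam)
    (k : ℕ) (hk : 1 ≤ k)
    (hboxk : conjP lam k = conjP μ k + 1)
    (hbox : ∀ i, 1 ≤ i → i ≠ k → conjP lam i = conjP μ i) :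
    nstat lam = nstat μ + conjP μ k := by
  obtain ⟨hanti, N, hN⟩ := hμ
  set r := conjP μ k with hr
  have hle : ∀ i, (fun i => i * lam i) i = (fun i => i * μ i) i + (fun i => if i = r then i else 0) i := by
    intro i
    simp only
    rw [aux_lam_eq μ lam ⟨hanti, N, hN⟩ hlam k hk hboxk hbox i]
    rcases eq_or_ne i r with h | h <;> simp [h, ← hr] <;> ring
  have h1 : (Function.support fun i => i * μ i).Finite := by
    apply Set.Finite.subset (Set.finite_Iio N)
    intro i hi
    simp only [Function.support, Set.mem_setOf_eq] at hi
    simp only [Set.mem_Iio]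
    by_contra hc
    rw [hN i (by omega)] at hi
    simp at hi
  have h2 : (Function.support fun i => if i = r then i else 0).Finite := by
    apply Set.Finite.subset (Set.finite_singleton r)
    intro i hi
    simp only [Function.support, Set.mem_setOf_eq] at hi
    rcases eq_or_ne i r with h | h
    · simp [h]
    · simp [h] at hi
  calc nstat lam = ∑ᶠ i, ((fun i => i * μ i) i + (fun i => if i = r then i else 0) i) := by
        unfold nstat; exact finsum_congr hle
    _ = (∑ᶠ i, i * μ i) + ∑ᶠ i, (if i = r then i else 0) := finsum_add_distrib h1 h2
    _ = nstat μ + r := by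
        congr 1
        rw [finsum_eq_single _ r (fun x hx => by simp [hx])]
        simp

lemma aux_sum_mcount (μ : ℕ → ℕ) (hμ : IsPartitionFun μ) (k : ℕ) (hk : 1 ≤ k) :
    ∑ᶠ j, (if k ≤ j then mcount μ j else 0) = conjP μ k := by
  obtain ⟨hanti, N, hN⟩ := hμ
  have hmc : ∀ j, 1 ≤ j → mcount μ j = ((Finset.range N).filter (fun i => μ i = j)).card := by
    intro j hj
    apply aux_card_eq
    intro i hi
    by_contra hc
    have := hN i (by omega)
    omega
  have hsupp : (Function.support fun j => if k ≤ j then mcount μ j else 0)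
      ⊆ ↑(Finset.range (μ 0 + 1)) := by
    intro j hj
    simp only [Function.support, Set.mem_setOf_eq] at hj
    simp only [Finset.coe_range, Set.mem_Iio]
    by_contra hc
    push_neg at hc
    have hkj : k ≤ j := by by_contra h; simp [h] at hj
    rw [if_pos hkj] at hj
    -- mcount μ j ≠ 0 with j > μ 0 : contradiction since μ i ≤ μ 0 < j
    rw [hmc j (by omega)] at hj
    apply hj
    rw [Finset.card_eq_zero]
    ext i
    simp only [Finset.mem_filter, Finset.mem_range, Finset.notMem_empty, iff_false, not_and]
    intro _
    have : μ i ≤ μ 0 := hanti (Nat.zero_le i)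
    omega
  rw [finsum_eq_sum_of_support_subset _ hsupp]
  rw [aux_conjP_eq μ N hN k hk]
  rw [Finset.card_eq_sum_card_fiberwise
    (f := μ) (t := (Finset.range (μ 0 + 1)).filter (fun j => k ≤ j))
    (by
      intro i hi
      simp only [Finset.mem_coe, Finset.mem_filter, Finset.mem_range] at hi ⊢
      have : μ i ≤ μ 0 := hanti (Nat.zero_le i)
      omega)]
  rw [Finset.sum_filter]
  apply Finset.sum_congr rfl
  intro j hj
  rcases Nat.lt_or_ge j k with h | h
  · simp [Nat.not_le.mpr h]
  · rw [if_pos h, if_pos h, hmc j (by omega)]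
    congr 1
    ext i
    simp only [Finset.mem_filter, Finset.mem_range]
    constructor
    · rintro ⟨h1, h2⟩
      exact ⟨⟨h1, by omega⟩, h2⟩
    · rintro ⟨⟨h1, _⟩, h2⟩
      exact ⟨h1, h2⟩

lemma aux_conjP_le (μ : ℕ → ℕ) (hμ : IsPartitionFun μ) (n k : ℕ) (hk : 1 ≤ k)
    (hμn : ∑ᶠ i, μ i = n) : conjP μ k ≤ n := by
  obtain ⟨hanti, N, hN⟩ := hμ
  have hsupp : (Function.support μ) ⊆ ↑(Finset.range N) := by
    intro i hi
    simp only [Function.support, Set.mem_setOf_eq] at hi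
    simp only [Finset.coe_range, Set.mem_Iio]
    by_contra hc
    exact hi (hN i (by omega))
  rw [finsum_eq_sum_of_support_subset _ hsupp] at hμn
  rw [aux_conjP_eq μ N hN k hk]
  calc ((Finset.range N).filter (fun i => k ≤ μ i)).card
      = ∑ i ∈ (Finset.range N).filter (fun i => k ≤ μ i), 1 := by simp
    _ ≤ ∑ i ∈ (Finset.range N).filter (fun i => k ≤ μ i), μ i := by
        apply Finset.sum_le_sum; intro i hi
        simp only [Finset.mem_filter] at hi
        omega
    _ ≤ ∑ i ∈ Finset.range N, μ i :=
        Finset.sum_le_sum_of_subset (Finset.filter_subset _ _)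
    _ = n := hμn

/-- Let `λ ⊢ n+1` be obtained from `μ ⊢ n` by adding one box in column `k`, and let `L(λ, μ)`
be the count `q^(n − Σ_{j≥k} m_j(μ))(1 − q^(−m_{k−1}(μ)))` for `k > 1`, resp.
`q^(n − Σ_{j≥1} m_j(μ))` for `k = 1`.  With the Hall–Littlewood Pieri coefficient
`ψ_{λ/μ}(t) = 1 − t^(m_{k−1}(μ))` for `k > 1` and `ψ_{λ/μ}(t) = 1` for `k = 1`, one has
`L(λ, μ) = ψ_{λ/μ}(q⁻¹) · q^(n(μ) − n(n−1)/2) / q^(n(λ) − (n+1)n/2)`. -/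
theorem stmt4 (q n k : ℕ) (hq : IsPrimePow q) (hk : 1 ≤ k) (μ lam : ℕ → ℕ)
    (hμ : IsPartitionFun μ) (hlam : IsPartitionFun lam)
    (hμn : ∑ᶠ i, μ i = n) (hlamn : ∑ᶠ i, lam i = n + 1)
    (hboxk : conjP lam k = conjP μ k + 1)
    (hbox : ∀ i, 1 ≤ i → i ≠ k → conjP lam i = conjP μ i) :
    (if k = 1 then (q : ℚ) ^ (n - ∑ᶠ j, (if 1 ≤ j then mcount μ j else 0))
      else (q : ℚ) ^ (n - ∑ᶠ j, (if k ≤ j then mcount μ j else 0)) *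
        (1 - (q : ℚ) ^ (-(mcount μ (k - 1) : ℤ))))
    = (if k = 1 then 1 else 1 - ((q : ℚ)⁻¹) ^ (mcount μ (k - 1))) *
        (q : ℚ) ^ ((nstat μ : ℤ) - (n * (n - 1) / 2 : ℕ)) /
        (q : ℚ) ^ ((nstat lam : ℤ) - ((n + 1) * n / 2 : ℕ)) := by
  have hq0 : (q : ℚ) ≠ 0 := by
    have := hq.one_lt
    exact_mod_cast Nat.cast_ne_zero.mpr (by omega)
  have hr_le : conjP μ k ≤ n := aux_conjP_le μ hμ n k hk hμn
  have hnstat : nstat lam = nstat μ + conjP μ k := aux_nstat μ lam hμ hlam k hk hboxk hbox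
  have hsum : ∑ᶠ j, (if k ≤ j then mcount μ j else 0) = conjP μ k := aux_sum_mcount μ hμ k hk
  have hpow : (q : ℚ) ^ ((nstat μ : ℤ) - (n * (n - 1) / 2 : ℕ)) /
      (q : ℚ) ^ ((nstat lam : ℤ) - ((n + 1) * n / 2 : ℕ)) = (q : ℚ) ^ (n - conjP μ k) := by
    rw [← zpow_sub₀ hq0, hnstat]
    have heven1 : Even (n * (n - 1)) := by
      rcases n with _ | m
      · simp
      · simpa [Nat.mul_comm] using Nat.even_mul_succ_self m
    have heven2 : Even ((n + 1) * n) := by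
      simpa [Nat.mul_comm] using Nat.even_mul_succ_self n
    have h1 : 2 * (n * (n - 1) / 2) = n * (n - 1) := Nat.two_mul_div_two_of_even heven1
    have h2 : 2 * ((n + 1) * n / 2) = (n + 1) * n := Nat.two_mul_div_two_of_even heven2
    have h3 : (n + 1) * n = n * (n - 1) + 2 * n := by
      rcases n with _ | m
      · simp
      · simp only [Nat.succ_sub_one]
        ring
    have he : (nstat μ : ℤ) - (↑(n * (n - 1) / 2) : ℤ) -
        ((↑(nstat μ + conjP μ k) : ℤ) - ↑((n + 1) * n / 2)) = ↑(n - conjP μ k) := by omega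
    rw [he, zpow_natCast]
  by_cases hk1 : k = 1
  · subst hk1
    rw [if_pos rfl, if_pos rfl, hsum, one_mul, hpow]
  · simp only [if_neg hk1]
    rw [hsum, mul_div_assoc, hpow]
    have hψ : (q : ℚ) ^ (-(mcount μ (k - 1) : ℤ)) = ((q : ℚ)⁻¹) ^ (mcount μ (k - 1)) := by
      rw [zpow_neg, zpow_natCast, inv_pow]
    rw [hψ, mul_comm]
end

section
/- Every Radon measure on the locally compact group L(q) of almost strictly upper triangular infinite matrices over F_q that is invariant under conjugation by the infinite symmetric group S(∞) (acting via permutation matrices) and has finite total mass is a nonnegative multiple of the Dirac measure at the zero matrix. -/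
open MeasureTheory Topology

/-- `M` is "upper triangular beyond level `n`": `m_{ij} = 0` whenever `j ≤ i` and `i ≥ n`. -/
def ULT {F : Type*} [Field F] (n : ℕ) (M : ℕ → ℕ → F) : Prop :=
  ∀ i j, j ≤ i → n ≤ i → M i j = 0

/-- The space `𝕃(q)` of almost strictly upper triangular infinite matrices over `F`. -/
def LSpace (F : Type*) [Field F] : Type _ := {M : ℕ → ℕ → F // ∃ n, ULT n M}

/-- The product topology on infinite matrices, where `F` carries the discrete topology. -/
def piTop (F : Type*) [Field F] : TopologicalSpace (ℕ → ℕ → F) :=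
  @Pi.topologicalSpace ℕ (fun _ => ℕ → F) fun _ =>
    @Pi.topologicalSpace ℕ (fun _ => F) fun _ => ⊥

/-- The inductive limit topology on `𝕃(q)`: the finest topology making all the inclusions of
the compact subgroups `𝕃_n(q)` (with their pointwise-convergence topology) continuous. -/
instance instLSpaceTop (F : Type*) [Field F] : TopologicalSpace (LSpace F) :=
  ⨆ n : ℕ, TopologicalSpace.coinduced
    (fun M : {M : ℕ → ℕ → F // ULT n M} => (⟨M.val, n, M.prop⟩ : LSpace F))
    (TopologicalSpace.induced Subtype.val (piTop F))

instance instLSpaceMeas (F : Type*) [Field F] : MeasurableSpace (LSpace F) := borel (LSpace F)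

instance (F : Type*) [Field F] : BorelSpace (LSpace F) := ⟨rfl⟩

/-- The zero matrix, as an element of `𝕃(q)`. -/
def zeroL (F : Type*) [Field F] : LSpace F := ⟨fun _ _ => 0, 0, fun _ _ _ _ => rfl⟩

/-- Conjugation of `M ∈ 𝕃(q)` by the permutation matrix of a finitary permutation `σ`:
`(P_σ M P_σ⁻¹)_{ij} = M_{σ⁻¹ i, σ⁻¹ j}`. -/
def permConj (F : Type*) [Field F] (σ : Equiv.Perm ℕ) (hσ : {i | σ i ≠ i}.Finite)
    (M : LSpace F) : LSpace F := by
  refine ⟨fun i j => M.val (σ⁻¹ i) (σ⁻¹ j), ?_⟩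
  obtain ⟨n, hn⟩ := M.prop
  refine ⟨max n (hσ.toFinset.sup id + 1), fun i j hji hi => ?_⟩
  have hsup : ∀ a : ℕ, σ a ≠ a → a ≤ hσ.toFinset.sup id := fun a ha =>
    Finset.le_sup (f := id) (hσ.mem_toFinset.mpr ha)
  have hii : σ⁻¹ i = i := by
    by_contra h
    have hmem : σ i ≠ i := by
      intro he
      apply h
      have h2 : σ⁻¹ i = σ⁻¹ (σ i) := by rw [he]
      rw [show σ⁻¹ (σ i) = i from σ.symm_apply_apply i] at h2
      exact h2
    have := hsup i hmem
    omega
  apply hn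
  · by_cases h : σ⁻¹ j = j
    · rw [h, hii]; exact hji
    · have hmem : σ (σ⁻¹ j) ≠ σ⁻¹ j := by
        rw [show σ (σ⁻¹ j) = j from σ.apply_symm_apply j]
        exact fun he => h he.symm
      have := hsup _ hmem
      rw [hii]
      omega
  · rw [hii]; omega

lemma entry_isOpen {F : Type*} [Field F] (a b : ℕ) (x : F) :
    IsOpen {M : LSpace F | M.val a b = x} := by
  refine isOpen_iSup_iff.mpr fun n => ?_
  refine isOpen_coinduced.mpr ?_
  letI : TopologicalSpace (ℕ → ℕ → F) := piTop F
  refine isOpen_induced_iff.mpr ⟨{f : ℕ → ℕ → F | f a b = x}, ?_, rfl⟩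
  letI : TopologicalSpace F := ⊥
  haveI : DiscreteTopology F := ⟨rfl⟩
  have hp : (piTop F : TopologicalSpace (ℕ → ℕ → F)) = Pi.topologicalSpace := rfl
  show IsOpen[piTop F] _
  rw [hp]
  have hc : Continuous (fun f : ℕ → ℕ → F => f a b) :=
    (continuous_apply (A := fun _ : ℕ => F) b).comp
      (continuous_apply (A := fun _ : ℕ => ℕ → F) a)
  exact hc.isOpen_preimage {x} (isOpen_discrete _)

lemma entry_measurable {F : Type*} [Field F] (a b : ℕ) (x : F) :
    MeasurableSet {M : LSpace F | M.val a b ≠ x} :=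
  (entry_isOpen a b x).measurableSet.compl

lemma swap_finite (a b : ℕ) : {i | Equiv.swap a b i ≠ i}.Finite := by
  apply Set.Finite.subset ((Set.finite_singleton b).insert a)
  intro i hi
  by_contra hcon
  simp only [Set.mem_insert_iff, Set.mem_singleton_iff, not_or] at hcon
  exact hi (Equiv.swap_apply_of_ne_of_ne hcon.1 hcon.2)

/-- Every `S(∞)`-invariant finite Borel (Radon) measure on the space `𝕃(q)` of almost strictly
upper triangular matrices over a finite field is a nonnegative multiple of the Dirac measure
at the zero matrix. -/
theorem stmt6 {F : Type*} [Field F] [Fintype F]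
    (μ : Measure (LSpace F)) [IsFiniteMeasure μ]
    (hinv : ∀ (σ : Equiv.Perm ℕ) (hσ : {i | σ i ≠ i}.Finite),
      Measure.map (permConj F σ hσ) μ = μ) :
    ∃ c : NNReal, μ = c • Measure.dirac (zeroL F) := by
  classical
  have key : ∀ (σ : Equiv.Perm ℕ) (hσ : {i | σ i ≠ i}.Finite) (a b : ℕ),
      μ {M : LSpace F | M.val a b ≠ 0} = μ {M : LSpace F | M.val (σ⁻¹ a) (σ⁻¹ b) ≠ 0} := by
    intro σ hσ a b
    by_cases h : AEMeasurable (permConj F σ hσ) μ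
    · have h1 : μ {M : LSpace F | M.val a b ≠ 0}
          = Measure.map (permConj F σ hσ) μ {M : LSpace F | M.val a b ≠ 0} := by
        rw [hinv σ hσ]
      rw [h1, Measure.map_apply_of_aemeasurable h (entry_measurable a b 0)]
      rfl
    · have h0 : μ = 0 := by
        rw [← hinv σ hσ]; exact Measure.map_of_not_aemeasurable h
      simp [h0]
  have lower : ∀ j a : ℕ, j < a → μ {M : LSpace F | M.val a j ≠ 0} = 0 := by
    intro j
    have heq : ∀ a : ℕ, j < a → μ {M : LSpace F | M.val a j ≠ 0}
        = μ {M : LSpace F | M.val (j + 1) j ≠ 0} := by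
      intro a ha
      have hk := key (Equiv.swap a (j + 1)) (swap_finite _ _) a j
      have e1 : (Equiv.swap a (j + 1))⁻¹ a = j + 1 := by
        rw [Equiv.swap_inv]; exact Equiv.swap_apply_left _ _
      have e2 : (Equiv.swap a (j + 1))⁻¹ j = j := by
        rw [Equiv.swap_inv]; exact Equiv.swap_apply_of_ne_of_ne (by omega) (by omega)
      rw [hk, e1, e2]
    set U : ℕ → Set (LSpace F) :=
      fun N => ⋃ a : ℕ, {M : LSpace F | M.val (j + 1 + N + a) j ≠ 0} with hU
    have hUmeas : ∀ N, MeasurableSet (U N) :=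
      fun N => MeasurableSet.iUnion fun a => entry_measurable _ _ _
    have hanti : Antitone U := by
      intro N N' hNN' M hM
      simp only [hU, Set.mem_iUnion, Set.mem_setOf_eq] at hM ⊢
      obtain ⟨a, ha⟩ := hM
      exact ⟨N' - N + a, by rwa [show j + 1 + N + (N' - N + a) = j + 1 + N' + a by omega]⟩
    have hempty : ⋂ N, U N = ∅ := by
      ext M
      simp only [Set.mem_iInter, hU, Set.mem_iUnion, Set.mem_setOf_eq,
        Set.mem_empty_iff_false, iff_false, not_forall]
      by_contra hc
      push_neg at hc
      obtain ⟨n, hn⟩ := M.prop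
      obtain ⟨a, ha⟩ := hc n
      exact ha (hn _ _ (by omega) (by omega))
    have hinf : μ (⋂ N, U N) = ⨅ N, μ (U N) :=
      Directed.measure_iInter (fun N => (hUmeas N).nullMeasurableSet)
        hanti.directed_ge ⟨0, measure_ne_top μ _⟩
    have hlb : ∀ N, μ {M : LSpace F | M.val (j + 1) j ≠ 0} ≤ μ (U N) := by
      intro N
      calc μ {M : LSpace F | M.val (j + 1) j ≠ 0}
          = μ {M : LSpace F | M.val (j + 1 + N + 0) j ≠ 0} := (heq _ (by omega)).symm
        _ ≤ μ (U N) := measure_mono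
            (Set.subset_iUnion (fun a => {M : LSpace F | M.val (j + 1 + N + a) j ≠ 0}) 0)
    have hbase : μ {M : LSpace F | M.val (j + 1) j ≠ 0} = 0 := by
      have h1 := le_iInf hlb
      rw [← hinf, hempty, measure_empty] at h1
      exact le_antisymm h1 zero_le
    intro a ha
    rw [heq a ha, hbase]
  have diag : ∀ a : ℕ, μ {M : LSpace F | M.val a a ≠ 0} = 0 := by
    have heq : ∀ a : ℕ, μ {M : LSpace F | M.val a a ≠ 0}
        = μ {M : LSpace F | M.val 0 0 ≠ 0} := by
      intro a
      have hk := key (Equiv.swap a 0) (swap_finite _ _) a a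
      have e1 : (Equiv.swap a 0)⁻¹ a = 0 := by
        rw [Equiv.swap_inv]; exact Equiv.swap_apply_left _ _
      rw [hk, e1]
    set U : ℕ → Set (LSpace F) :=
      fun N => ⋃ a : ℕ, {M : LSpace F | M.val (N + a) (N + a) ≠ 0} with hU
    have hUmeas : ∀ N, MeasurableSet (U N) :=
      fun N => MeasurableSet.iUnion fun a => entry_measurable _ _ _
    have hanti : Antitone U := by
      intro N N' hNN' M hM
      simp only [hU, Set.mem_iUnion, Set.mem_setOf_eq] at hM ⊢
      obtain ⟨a, ha⟩ := hM
      exact ⟨N' - N + a, by rwa [show N + (N' - N + a) = N' + a by omega]⟩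
    have hempty : ⋂ N, U N = ∅ := by
      ext M
      simp only [Set.mem_iInter, hU, Set.mem_iUnion, Set.mem_setOf_eq,
        Set.mem_empty_iff_false, iff_false, not_forall]
      by_contra hc
      push_neg at hc
      obtain ⟨n, hn⟩ := M.prop
      obtain ⟨a, ha⟩ := hc n
      exact ha (hn _ _ le_rfl (by omega))
    have hinf : μ (⋂ N, U N) = ⨅ N, μ (U N) :=
      Directed.measure_iInter (fun N => (hUmeas N).nullMeasurableSet)
        hanti.directed_ge ⟨0, measure_ne_top μ _⟩
    have hlb : ∀ N, μ {M : LSpace F | M.val 0 0 ≠ 0} ≤ μ (U N) := by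
      intro N
      calc μ {M : LSpace F | M.val 0 0 ≠ 0}
          = μ {M : LSpace F | M.val (N + 0) (N + 0) ≠ 0} := (heq _).symm
        _ ≤ μ (U N) := measure_mono
            (Set.subset_iUnion (fun a => {M : LSpace F | M.val (N + a) (N + a) ≠ 0}) 0)
    have hbase : μ {M : LSpace F | M.val 0 0 ≠ 0} = 0 := by
      have h1 := le_iInf hlb
      rw [← hinf, hempty, measure_empty] at h1
      exact le_antisymm h1 zero_le
    intro a
    rw [heq a, hbase]
  have allz : ∀ i j : ℕ, μ {M : LSpace F | M.val i j ≠ 0} = 0 := by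
    intro i j
    rcases lt_trichotomy i j with h | h | h
    · have hk := key (Equiv.swap i (j + 1)) (swap_finite _ _) (j + 1) j
      have e1 : (Equiv.swap i (j + 1))⁻¹ (j + 1) = i := by
        rw [Equiv.swap_inv]; exact Equiv.swap_apply_right _ _
      have e2 : (Equiv.swap i (j + 1))⁻¹ j = j := by
        rw [Equiv.swap_inv]; exact Equiv.swap_apply_of_ne_of_ne (by omega) (by omega)
      rw [e1, e2] at hk
      rw [← hk]
      exact lower j (j + 1) (by omega)
    · subst h; exact diag i
    · exact lower j i h
  have hz : μ ({zeroL F}ᶜ : Set (LSpace F)) = 0 := by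
    have hsub : ({zeroL F}ᶜ : Set (LSpace F))
        ⊆ ⋃ i : ℕ, ⋃ j : ℕ, {M : LSpace F | M.val i j ≠ 0} := by
      intro M hM
      simp only [Set.mem_compl_iff, Set.mem_singleton_iff] at hM
      by_contra h
      simp only [Set.mem_iUnion, Set.mem_setOf_eq, not_exists, not_not] at h
      exact hM (Subtype.ext (funext fun i => funext fun j => h i j))
    exact measure_mono_null hsub
      (measure_iUnion_null fun i => measure_iUnion_null fun j => allz i j)
  refine ⟨(μ Set.univ).toNNReal, ?_⟩
  ext s hs
  rw [Measure.smul_apply, Measure.dirac_apply' _ hs, ENNReal.smul_def, smul_eq_mul]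
  by_cases hzs : zeroL F ∈ s
  · have h1 : μ sᶜ = 0 := by
      refine measure_mono_null ?_ hz
      intro M hM
      simp only [Set.mem_compl_iff, Set.mem_singleton_iff]
      intro he
      exact hM (he ▸ hzs)
    have h2 : μ s = μ Set.univ := by
      have h3 := measure_add_measure_compl (μ := μ) hs
      rw [h1, add_zero] at h3
      exact h3
    rw [h2, Set.indicator_of_mem hzs, Pi.one_apply, mul_one,
      ENNReal.coe_toNNReal (measure_ne_top μ _)]
  · have h1 : μ s = 0 := by
      refine measure_mono_null ?_ hz
      intro M hM
      simp only [Set.mem_compl_iff, Set.mem_singleton_iff]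
      intro he
      exact hzs (he ▸ hM)
    rw [h1, Set.indicator_of_notMem hzs, mul_zero]
end

section
/- Any Radon measure on L(q) that is invariant under conjugation by the group GL(∞, q) of finitary invertible matrices is automatically invariant under conjugation by the larger group GLB of invertible infinite matrices over F_q with finitely many nonzero entries below the diagonal. -/
open MeasureTheory
open scoped BigOperators

/-- Product of two infinite matrices (each column of `B` is required to have finite support for
this to be the actual matrix product; `∑ᶠ` returns `0` on infinite supports). -/
noncomputable def matMul {F : Type*} [Field F] (A B : ℕ → ℕ → F) : ℕ → ℕ → F :=
  fun i j => ∑ᶠ k, A i k * B k j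

/-- The identity infinite matrix. -/
def idMat (F : Type*) [Field F] : ℕ → ℕ → F := fun i j => if i = j then 1 else 0

/-- The group `𝔾𝕃𝔹` of invertible infinite matrices over `F` having only finitely many nonzero
entries below the diagonal (an element is recorded together with its inverse). -/
structure GLBs (F : Type*) [Field F] where
  g : ℕ → ℕ → F
  ginv : ℕ → ℕ → F
  hg : {p : ℕ × ℕ | p.2 < p.1 ∧ g p.1 p.2 ≠ 0}.Finite
  hginv : {p : ℕ × ℕ | p.2 < p.1 ∧ ginv p.1 p.2 ≠ 0}.Finite
  hmul : matMul g ginv = idMat F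
  hinvmul : matMul ginv g = idMat F

/-- `G` lies in the subgroup `GL(∞, q) ⊂ 𝔾𝕃𝔹` of finitary matrices: it differs from the
identity matrix in only finitely many entries. -/
def Finitary {F : Type*} [Field F] (G : GLBs F) : Prop :=
  {p : ℕ × ℕ | G.g p.1 p.2 ≠ idMat F p.1 p.2}.Finite

/-- Conjugation `M ↦ g M g⁻¹` of `𝕃(q)` by an element of `𝔾𝕃𝔹`. -/
noncomputable def conjGLB {F : Type*} [Field F] (G : GLBs F) (M : LSpace F) : LSpace F :=
  ⟨matMul (matMul G.g M.val) G.ginv, by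
    obtain ⟨n, hn⟩ := M.prop
    set bg := (G.hg.toFinset.sup fun p : ℕ × ℕ => p.1) + 1 with hbg
    set bh := (G.hginv.toFinset.sup fun p : ℕ × ℕ => p.1) + 1 with hbh
    have hgz : ∀ i k, bg ≤ i → k < i → G.g i k = 0 := by
      intro i k hi hk
      by_contra h
      have hmem : ((i, k) : ℕ × ℕ) ∈ G.hg.toFinset := G.hg.mem_toFinset.mpr ⟨hk, h⟩
      have h2 : i ≤ G.hg.toFinset.sup fun p : ℕ × ℕ => p.1 :=
        Finset.le_sup (f := fun p : ℕ × ℕ => p.1) hmem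
      omega
    have hhz : ∀ l j, bh ≤ l → j < l → G.ginv l j = 0 := by
      intro l j hl hj
      by_contra h
      have hmem : ((l, j) : ℕ × ℕ) ∈ G.hginv.toFinset := G.hginv.mem_toFinset.mpr ⟨hj, h⟩
      have h2 : l ≤ G.hginv.toFinset.sup fun p : ℕ × ℕ => p.1 :=
        Finset.le_sup (f := fun p : ℕ × ℕ => p.1) hmem
      omega
    refine ⟨max (max n bg) bh, fun i j hji hi => ?_⟩
    have hA : ∀ l, l ≤ i → matMul G.g M.val i l = 0 := by
      intro l hl
      have h' : ∀ k, G.g i k * M.val k l = 0 := by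
        intro k
        by_cases hk : k < i
        · rw [hgz i k (by omega) hk, zero_mul]
        · rw [hn k l (by omega) (by omega), mul_zero]
      exact finsum_eq_zero_of_forall_eq_zero h'
    have h'' : ∀ l, matMul G.g M.val i l * G.ginv l j = 0 := by
      intro l
      by_cases hl : l ≤ i
      · rw [hA l hl, zero_mul]
      · rw [hhz l j (by omega) (by omega), mul_zero]
    exact finsum_eq_zero_of_forall_eq_zero h''⟩
section Stmt7Aux

open MeasureTheory Set Topology

variable {F : Type*} [Field F]

/-! ### Matrix algebra lemmas -/

theorem matMul_apply (A B : ℕ → ℕ → F) (i j : ℕ) :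
    matMul A B i j = ∑ᶠ k, A i k * B k j := rfl

/-- Column-finiteness of an infinite matrix. -/
def ColFin (A : ℕ → ℕ → F) : Prop := ∀ j, {i | A i j ≠ 0}.Finite

theorem exists_bound {A : ℕ → ℕ → F}
    (h : {p : ℕ × ℕ | p.2 < p.1 ∧ A p.1 p.2 ≠ 0}.Finite) :
    ∃ b, ∀ i j, b ≤ i → j < i → A i j = 0 := by
  refine ⟨(h.toFinset.sup fun p => p.1) + 1, fun i j hi hj => ?_⟩
  by_contra hne
  have hmem : ((i, j) : ℕ × ℕ) ∈ h.toFinset := h.mem_toFinset.mpr ⟨hj, hne⟩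
  have h2 : i ≤ h.toFinset.sup fun p : ℕ × ℕ => p.1 :=
    Finset.le_sup (f := fun p : ℕ × ℕ => p.1) hmem
  omega

theorem colFin_of_bound {A : ℕ → ℕ → F} {b : ℕ}
    (hb : ∀ i j, b ≤ i → j < i → A i j = 0) : ColFin A := fun j => by
  refine Set.Finite.subset (Set.finite_Iio (max b (j + 1))) ?_
  intro i hi
  simp only [Set.mem_setOf_eq] at hi
  simp only [Set.mem_Iio, lt_max_iff]
  by_contra h
  push_neg at h
  exact hi (hb i j (by omega) (by omega))

theorem colFin_ULT {M : ℕ → ℕ → F} {n : ℕ} (hM : ULT n M) : ColFin M := fun j => by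
  refine Set.Finite.subset (Set.finite_Iio (max n (j + 1))) ?_
  intro i hi
  simp only [Set.mem_setOf_eq] at hi
  simp only [Set.mem_Iio, lt_max_iff]
  by_contra h
  push_neg at h
  exact hi (hM i j (by omega) (by omega))

theorem colFin_matMul {A B : ℕ → ℕ → F} (hA : ColFin A) (hB : ColFin B) :
    ColFin (matMul A B) := by
  intro j
  have hsub : {i | matMul A B i j ≠ 0} ⊆ ⋃ k ∈ {k | B k j ≠ 0}, {i | A i k ≠ 0} := by
    intro i hi
    simp only [Set.mem_setOf_eq] at hi
    obtain ⟨k, hk⟩ : ∃ k, A i k * B k j ≠ 0 := by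
      by_contra h
      push_neg at h
      exact hi (finsum_eq_zero_of_forall_eq_zero h)
    have hBk : B k j ≠ 0 := fun h => hk (by rw [h, mul_zero])
    have hAk : A i k ≠ 0 := fun h => hk (by rw [h, zero_mul])
    exact Set.mem_biUnion hBk hAk
  exact Set.Finite.subset ((hB j).biUnion fun k _ => hA k) hsub

theorem matMul_id_right (A : ℕ → ℕ → F) : matMul A (idMat F) = A := by
  funext i j
  rw [matMul_apply, finsum_eq_single _ j (fun k hk => by
    simp only [idMat]
    rw [if_neg hk, mul_zero])]
  simp [idMat]

theorem matMul_id_left (A : ℕ → ℕ → F) : matMul (idMat F) A = A := by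
  funext i j
  rw [matMul_apply, finsum_eq_single _ i (fun k hk => by
    simp only [idMat]
    rw [if_neg (fun h => hk h.symm), zero_mul])]
  simp [idMat]

theorem matMul_assoc {A B C : ℕ → ℕ → F} (hB : ColFin B) (hC : ColFin C) :
    matMul (matMul A B) C = matMul A (matMul B C) := by
  classical
  funext i j
  set K : Finset ℕ := (hC j).toFinset with hKdef
  set L : Finset ℕ := K.biUnion fun k => (hB k).toFinset with hLdef
  have hCK : ∀ k, k ∉ K → C k j = 0 := fun k hk => by
    by_contra h
    exact hk ((hC j).mem_toFinset.mpr h)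
  have hBL : ∀ k ∈ K, ∀ l, l ∉ L → B l k = 0 := by
    intro k hk l hl
    by_contra h
    exact hl (Finset.mem_biUnion.mpr ⟨k, hk, (hB k).mem_toFinset.mpr h⟩)
  have h1 : matMul (matMul A B) C i j = ∑ k ∈ K, matMul A B i k * C k j := by
    rw [matMul_apply]
    refine finsum_eq_finset_sum_of_support_subset _ ?_
    intro k hk
    simp only [Function.mem_support] at hk
    by_contra hkK
    exact hk (by rw [hCK k hkK, mul_zero])
  have h2 : ∀ k ∈ K, matMul A B i k = ∑ l ∈ L, A i l * B l k := by
    intro k hk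
    rw [matMul_apply]
    refine finsum_eq_finset_sum_of_support_subset _ ?_
    intro l hl
    simp only [Function.mem_support] at hl
    by_contra hlL
    exact hl (by rw [hBL k hk l hlL, mul_zero])
  have h4 : ∀ l, matMul B C l j = ∑ k ∈ K, B l k * C k j := by
    intro l
    rw [matMul_apply]
    refine finsum_eq_finset_sum_of_support_subset _ ?_
    intro k hk
    simp only [Function.mem_support] at hk
    by_contra hkK
    exact hk (by rw [hCK k hkK, mul_zero])
  have h3 : matMul A (matMul B C) i j = ∑ l ∈ L, A i l * matMul B C l j := by
    rw [matMul_apply]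
    refine finsum_eq_finset_sum_of_support_subset _ ?_
    intro l hl
    simp only [Function.mem_support] at hl
    by_contra hlL
    obtain ⟨k, hk⟩ : ∃ k, B l k * C k j ≠ 0 := by
      by_contra h
      push_neg at h
      exact hl (by rw [show matMul B C l j = 0 from finsum_eq_zero_of_forall_eq_zero h, mul_zero])
    have hkK : k ∈ K := (hC j).mem_toFinset.mpr fun h => hk (by rw [h, mul_zero])
    have hBlk : B l k ≠ 0 := fun h => hk (by rw [h, zero_mul])
    exact hlL (Finset.mem_biUnion.mpr ⟨k, hkK, (hB k).mem_toFinset.mpr hBlk⟩)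
  have e2 : ∑ k ∈ K, matMul A B i k * C k j
      = ∑ k ∈ K, (∑ l ∈ L, A i l * B l k) * C k j :=
    Finset.sum_congr rfl fun k hk => by rw [h2 k hk]
  have e4 : ∑ l ∈ L, A i l * matMul B C l j
      = ∑ l ∈ L, A i l * ∑ k ∈ K, B l k * C k j :=
    Finset.sum_congr rfl fun l _ => by rw [h4 l]
  rw [h1, h3, e2, e4]
  simp only [Finset.sum_mul, Finset.mul_sum, mul_assoc]
  exact Finset.sum_comm

theorem finsum_eq_sum_range {f : ℕ → F} {m : ℕ} (h : ∀ k, m ≤ k → f k = 0) :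
    ∑ᶠ k, f k = ∑ k ∈ Finset.range m, f k := by
  refine finsum_eq_finset_sum_of_support_subset _ ?_
  intro k hk
  simp only [Function.mem_support] at hk
  simp only [Finset.coe_range, Set.mem_Iio]
  by_contra h'
  exact hk (h k (by omega))

theorem conj_entry {A M B : ℕ → ℕ → F} {m j : ℕ}
    (hM : ∀ k l, m ≤ k → l ≤ k → M k l = 0)
    (hB : ∀ l, m ≤ l → B l j = 0) (i : ℕ) :
    matMul (matMul A M) B i j
      = ∑ l ∈ Finset.range m, (∑ k ∈ Finset.range m, A i k * M k l) * B l j := by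
  have h1 : ∀ l, l < m → matMul A M i l = ∑ k ∈ Finset.range m, A i k * M k l := by
    intro l hl
    rw [matMul_apply]
    exact finsum_eq_sum_range fun k hk => by rw [hM k l hk (by omega), mul_zero]
  rw [matMul_apply, finsum_eq_sum_range fun l hl => by rw [hB l hl, mul_zero]]
  exact Finset.sum_congr rfl fun l hl => by rw [h1 l (Finset.mem_range.mp hl)]

end Stmt7Aux
section Stmt7Aux2

open MeasureTheory Set Topology

variable {F : Type*} [Field F]

/-! ### Truncation and GLB constructions -/

/-- Truncation of a matrix to its upper-left `m × m` corner, extended by the identity. -/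
def trunc (A : ℕ → ℕ → F) (m : ℕ) : ℕ → ℕ → F :=
  fun i j => if i < m ∧ j < m then A i j else idMat F i j

theorem trunc_eq_of_lt {A : ℕ → ℕ → F} {m i j : ℕ} (hi : i < m) (hj : j < m) :
    trunc A m i j = A i j := if_pos ⟨hi, hj⟩

theorem trunc_bound {A : ℕ → ℕ → F} {b : ℕ} (m : ℕ)
    (hb : ∀ i j, b ≤ i → j < i → A i j = 0) :
    ∀ i j, b ≤ i → j < i → trunc A m i j = 0 := by
  intro i j hi hj
  unfold trunc idMat
  split
  · exact hb i j hi hj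
  · rw [if_neg (by omega)]

theorem trunc_blt_finite {A : ℕ → ℕ → F}
    (h : {p : ℕ × ℕ | p.2 < p.1 ∧ A p.1 p.2 ≠ 0}.Finite) (m : ℕ) :
    {p : ℕ × ℕ | p.2 < p.1 ∧ trunc A m p.1 p.2 ≠ 0}.Finite := by
  refine h.subset ?_
  rintro ⟨i, j⟩ ⟨hj, hne⟩
  refine ⟨hj, ?_⟩
  unfold trunc at hne
  by_cases hc : i < m ∧ j < m
  · rwa [if_pos hc] at hne
  · rw [if_neg hc] at hne
    exact absurd (by unfold idMat; rw [if_neg (by omega)]) hne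

theorem trunc_mul {A B : ℕ → ℕ → F} {m bB : ℕ} (hAB : matMul A B = idMat F)
    (hB : ∀ l j, bB ≤ l → j < l → B l j = 0) (hm : bB ≤ m) :
    matMul (trunc A m) (trunc B m) = idMat F := by
  funext i j
  by_cases hi : i < m
  · by_cases hj : j < m
    · have h1 : matMul (trunc A m) (trunc B m) i j = ∑ k ∈ Finset.range m, A i k * B k j := by
        rw [matMul_apply, finsum_eq_sum_range (m := m) (fun k hk => by
          have hz : trunc A m i k = 0 := by
            have hc1 : ¬(i < m ∧ k < m) := by omega
            have hc2 : i ≠ k := by omega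
            simp only [trunc, idMat, if_neg hc1, if_neg hc2]
          rw [hz, zero_mul])]
        exact Finset.sum_congr rfl fun k hk => by
          rw [trunc_eq_of_lt hi (Finset.mem_range.mp hk),
            trunc_eq_of_lt (Finset.mem_range.mp hk) hj]
      have h2 : idMat F i j = ∑ k ∈ Finset.range m, A i k * B k j := by
        rw [← hAB, matMul_apply]
        exact finsum_eq_sum_range fun k hk => by
          rw [hB k j (le_trans hm hk) (by omega), mul_zero]
      rw [h1, ← h2]
    · have hBid : ∀ k, trunc B m k j = idMat F k j := fun k => if_neg (by omega)
      rw [matMul_apply, finsum_eq_single _ j (fun k hk => by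
        rw [hBid k]
        unfold idMat
        rw [if_neg hk, mul_zero])]
      rw [hBid j]
      have : trunc A m i j = idMat F i j := if_neg (by omega)
      rw [this]
      unfold idMat
      rw [if_pos rfl, mul_one]
  · have hAid : ∀ k, trunc A m i k = idMat F i k := fun k => if_neg (by omega)
    rw [matMul_apply, finsum_eq_single _ i (fun k hk => by
      rw [hAid k]
      unfold idMat
      rw [if_neg (fun h => hk h.symm), zero_mul])]
    rw [hAid i]
    have : trunc B m i j = idMat F i j := if_neg (by omega)
    rw [this]
    unfold idMat
    rw [if_pos rfl, one_mul]

/-- The inverse of an element of `𝔾𝕃𝔹`. -/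
def GLBs.inv (G : GLBs F) : GLBs F := ⟨G.ginv, G.g, G.hginv, G.hg, G.hinvmul, G.hmul⟩

/-- Finitary truncation of an element of `𝔾𝕃𝔹`. -/
def truncGLB (G : GLBs F) (m : ℕ) {b : ℕ}
    (hbg : ∀ i j, b ≤ i → j < i → G.g i j = 0)
    (hbh : ∀ i j, b ≤ i → j < i → G.ginv i j = 0) (hm : b ≤ m) : GLBs F :=
  ⟨trunc G.g m, trunc G.ginv m, trunc_blt_finite G.hg m, trunc_blt_finite G.hginv m,
    trunc_mul G.hmul hbh hm, trunc_mul G.hinvmul hbg hm⟩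

theorem truncGLB_finitary (G : GLBs F) (m : ℕ) {b : ℕ}
    (hbg : ∀ i j, b ≤ i → j < i → G.g i j = 0)
    (hbh : ∀ i j, b ≤ i → j < i → G.ginv i j = 0) (hm : b ≤ m) :
    Finitary (truncGLB G m hbg hbh hm) := by
  refine Set.Finite.subset ((Set.finite_Iio m).prod (Set.finite_Iio m)) ?_
  rintro ⟨i, j⟩ hij
  simp only [Finitary, truncGLB, Set.mem_setOf_eq] at hij
  by_cases hc : i < m ∧ j < m
  · exact ⟨hc.1, hc.2⟩
  · exact absurd (if_neg hc) hij

theorem conjGLB_val (G : GLBs F) (M : LSpace F) :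
    (conjGLB G M).val = matMul (matMul G.g M.val) G.ginv := rfl

theorem conjGLB_inv_conjGLB (G : GLBs F) (M : LSpace F) :
    conjGLB (GLBs.inv G) (conjGLB G M) = M := by
  obtain ⟨bg, hbg⟩ := exists_bound G.hg
  obtain ⟨bh, hbh⟩ := exists_bound G.hginv
  have cg : ColFin G.g := colFin_of_bound hbg
  have ch : ColFin G.ginv := colFin_of_bound hbh
  obtain ⟨n, hn⟩ := M.prop
  have cM : ColFin M.val := colFin_ULT hn
  apply Subtype.ext
  rw [conjGLB_val, conjGLB_val]
  show matMul (matMul G.ginv (matMul (matMul G.g M.val) G.ginv)) G.g = M.val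
  have e1 : matMul G.ginv (matMul (matMul G.g M.val) G.ginv)
      = matMul (matMul G.ginv (matMul G.g M.val)) G.ginv :=
    (matMul_assoc (colFin_matMul cg cM) ch).symm
  have e2 : matMul G.ginv (matMul G.g M.val) = matMul (matMul G.ginv G.g) M.val :=
    (matMul_assoc cg cM).symm
  rw [e1, e2, G.hinvmul, matMul_id_left, matMul_assoc ch cg, G.hinvmul, matMul_id_right]

theorem conjGLB_ULT {G : GLBs F} {b p : ℕ}
    (hbg : ∀ i k, b ≤ i → k < i → G.g i k = 0)
    (hbh : ∀ i k, b ≤ i → k < i → G.ginv i k = 0)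
    {M : LSpace F} (hM : ULT p M.val) :
    ULT (max p b) (conjGLB G M).val := by
  intro i j hji hi
  have hpi : p ≤ i := le_trans (le_max_left _ _) hi
  have hbi : b ≤ i := le_trans (le_max_right _ _) hi
  rw [conjGLB_val, matMul_apply]
  have hA : ∀ l, l ≤ i → matMul G.g M.val i l = 0 := by
    intro l hl
    rw [matMul_apply]
    refine finsum_eq_zero_of_forall_eq_zero fun k => ?_
    by_cases hk : k < i
    · rw [hbg i k hbi hk, zero_mul]
    · rw [hM k l (by omega) (by omega), mul_zero]
  refine finsum_eq_zero_of_forall_eq_zero fun l => ?_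
  by_cases hl : l ≤ i
  · rw [hA l hl, zero_mul]
  · rw [hbh l j (by omega) (by omega), mul_zero]

theorem conj_entry_eq {G : GLBs F} {b p m : ℕ}
    (hbh : ∀ i k, b ≤ i → k < i → G.ginv i k = 0)
    {M : LSpace F} (hM : ULT p M.val)
    (hpm : p ≤ m) (hbm : b ≤ m) {i j : ℕ} (hj : j < m) :
    (conjGLB G M).val i j
      = ∑ l ∈ Finset.range m, (∑ k ∈ Finset.range m, G.g i k * M.val k l) * G.ginv l j := by
  rw [conjGLB_val]
  exact conj_entry (fun k l hk hl => hM k l hl (le_trans hpm hk))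
    (fun l hl => hbh l j (le_trans hbm hl) (by omega)) i

theorem conj_trunc_agree {G : GLBs F} {b p m : ℕ}
    (hbg : ∀ i k, b ≤ i → k < i → G.g i k = 0)
    (hbh : ∀ i k, b ≤ i → k < i → G.ginv i k = 0)
    (hm : b ≤ m) {M : LSpace F} (hM : ULT p M.val) (hpm : p ≤ m)
    {i j : ℕ} (hi : i < m) (hj : j < m) :
    (conjGLB (truncGLB G m hbg hbh hm) M).val i j = (conjGLB G M).val i j := by
  rw [conj_entry_eq hbh hM hpm hm hj,
    conj_entry_eq (G := truncGLB G m hbg hbh hm) (trunc_bound m hbh) hM hpm hm hj]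
  refine Finset.sum_congr rfl fun l hl => ?_
  have hginv : (truncGLB G m hbg hbh hm).ginv l j = G.ginv l j :=
    trunc_eq_of_lt (Finset.mem_range.mp hl) hj
  rw [hginv]
  refine congrArg (· * G.ginv l j) ?_
  refine Finset.sum_congr rfl fun k hk => ?_
  have hg : (truncGLB G m hbg hbh hm).g i k = G.g i k :=
    trunc_eq_of_lt hi (Finset.mem_range.mp hk)
  rw [hg]

end Stmt7Aux2
section Stmt7Aux3

open MeasureTheory Set Topology

variable {F : Type*} [Field F]

/-! ### Topology of `LSpace` -/

/-- Inclusion of a level into `LSpace`. -/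
def incl (F : Type*) [Field F] (n : ℕ) : {M : ℕ → ℕ → F // ULT n M} → LSpace F :=
  fun M => ⟨M.val, n, M.prop⟩

theorem continuous_incl (n : ℕ) :
    Continuous[TopologicalSpace.induced Subtype.val (piTop F), instLSpaceTop F] (incl F n) :=
  continuous_iff_coinduced_le.mpr
    (le_iSup (fun n : ℕ => TopologicalSpace.coinduced
      (fun M : {M : ℕ → ℕ → F // ULT n M} => (⟨M.val, n, M.prop⟩ : LSpace F))
      (TopologicalSpace.induced Subtype.val (piTop F))) n)

theorem continuous_from_LSpace {Z : Type*} {tZ : TopologicalSpace Z} {f : LSpace F → Z}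
    (h : ∀ n, Continuous[TopologicalSpace.induced Subtype.val (piTop F), tZ]
      (f ∘ incl F n)) : Continuous f :=
  continuous_iSup_dom.mpr fun n => continuous_coinduced_dom.mpr (h n)

/-- The compact-open level sets of `LSpace`. -/
def Kset (F : Type*) [Field F] (n : ℕ) : Set (LSpace F) := {M | ULT n M.val}

theorem Kset_mono {a b : ℕ} (h : a ≤ b) : Kset F a ⊆ Kset F b :=
  fun _ hM i j hji hi => hM i j hji (le_trans h hi)

theorem iUnion_Kset : ⋃ n, Kset F n = univ :=
  eq_univ_of_forall fun M => mem_iUnion.mpr M.prop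

theorem Kset_inter (a b : ℕ) : Kset F a ∩ Kset F b = Kset F (min a b) := by
  apply Set.Subset.antisymm
  · rintro M ⟨h1, h2⟩ i j hji hi
    rcases le_total a b with h | h
    · exact h1 i j hji (by rw [min_eq_left h] at hi; exact hi)
    · exact h2 i j hji (by rw [min_eq_right h] at hi; exact hi)
  · intro M hM
    exact ⟨Kset_mono (min_le_left a b) hM, Kset_mono (min_le_right a b) hM⟩

/-- Cylinder sets in `LSpace`. -/
def Cyl (t : Finset (ℕ × ℕ)) (c : ℕ × ℕ → F) : Set (LSpace F) :=
  {M | ∀ q ∈ t, M.val q.1 q.2 = c q}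

theorem Cyl_empty (c : ℕ × ℕ → F) : (Cyl ∅ c : Set (LSpace F)) = univ := by
  ext M; simp [Cyl]

theorem isOpen_finite_eqs (T : Finset (ℕ × ℕ)) (c : ℕ × ℕ → F) :
    IsOpen[piTop F] {A : ℕ → ℕ → F | ∀ q ∈ T, A q.1 q.2 = c q} := by
  letI : TopologicalSpace F := ⊥
  haveI : DiscreteTopology F := ⟨rfl⟩
  have hrw : {A : ℕ → ℕ → F | ∀ q ∈ T, A q.1 q.2 = c q}
      = ⋂ q ∈ T, (fun A : ℕ → ℕ → F => A q.1 q.2) ⁻¹' {c q} := by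
    ext A; simp
  rw [hrw]
  refine isOpen_biInter_finset fun q _ => ?_
  have hc : Continuous fun A : ℕ → ℕ → F => A q.1 q.2 :=
    (continuous_apply q.2).comp (continuous_apply q.1)
  exact (isOpen_discrete _).preimage hc

theorem isOpen_val_preimage {V : Set (ℕ → ℕ → F)} (hV : IsOpen[piTop F] V) :
    IsOpen ((fun M : LSpace F => M.val) ⁻¹' V) := by
  refine isOpen_iSup_iff.mpr fun n => ?_
  refine isOpen_coinduced.mpr ?_
  exact (isOpen_induced_iff (t := piTop F)).mpr ⟨V, hV, rfl⟩

theorem isOpen_Cyl (t : Finset (ℕ × ℕ)) (c : ℕ × ℕ → F) : IsOpen (Cyl t c) :=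
  isOpen_val_preimage (isOpen_finite_eqs t c)

theorem isOpen_Kset (n : ℕ) : IsOpen (Kset F n) := by
  refine isOpen_iSup_iff.mpr fun p => ?_
  refine isOpen_coinduced.mpr ?_
  refine (isOpen_induced_iff (t := piTop F)).mpr ⟨{A : ℕ → ℕ → F | ∀ q ∈ (Finset.range p ×ˢ Finset.range p).filter
    (fun q : ℕ × ℕ => q.2 ≤ q.1 ∧ n ≤ q.1), A q.1 q.2 = (fun _ => (0 : F)) q}, isOpen_finite_eqs _ _, ?_⟩
  ext M
  simp only [Set.mem_preimage, Set.mem_setOf_eq, Finset.mem_filter, Finset.mem_product,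
    Finset.mem_range]
  constructor
  · intro h i j hji hi
    by_cases hip : i < p
    · exact h (i, j) ⟨⟨hip, by omega⟩, hji, hi⟩
    · exact M.prop i j hji (by omega)
  · intro h q hq
    exact h q.1 q.2 hq.2.1 hq.2.2

theorem isCompact_Kset [Fintype F] (n : ℕ) : IsCompact (Kset F n) := by
  letI : TopologicalSpace F := ⊥
  haveI : DiscreteTopology F := ⟨rfl⟩
  haveI : Finite F := Finite.of_fintype F
  have h1 : IsCompact {A : ℕ → ℕ → F | ULT n A} := by
    refine IsClosed.isCompact ?_
    have hrw : {A : ℕ → ℕ → F | ULT n A}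
        = ⋂ (i) (j) (_ : j ≤ i) (_ : n ≤ i), (fun A : ℕ → ℕ → F => A i j) ⁻¹' {0} := by
      ext A
      simp only [Set.mem_setOf_eq, Set.mem_iInter, Set.mem_preimage, Set.mem_singleton_iff]
      exact ⟨fun h i j h1 h2 => h i j h1 h2, fun h i j h1 h2 => h i j h1 h2⟩
    rw [hrw]
    refine isClosed_iInter fun i => isClosed_iInter fun j =>
      isClosed_iInter fun _ => isClosed_iInter fun _ => ?_
    exact (isClosed_discrete _).preimage ((continuous_apply j).comp (continuous_apply i))
  haveI : CompactSpace {A : ℕ → ℕ → F // ULT n A} := isCompact_iff_compactSpace.mp h1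
  have h2 : Kset F n = Set.range (incl F n) := by
    ext M
    constructor
    · intro hM
      exact ⟨⟨M.val, hM⟩, Subtype.ext rfl⟩
    · rintro ⟨N, rfl⟩
      exact N.prop
  rw [h2, ← Set.image_univ]
  exact (show @IsCompact _ (TopologicalSpace.induced Subtype.val (piTop F)) (univ : Set {A : ℕ → ℕ → F // ULT n A}) from @isCompact_univ _ _ this).image (continuous_incl n)

/-! ### Continuity of conjugation -/

theorem continuous_conjGLB (G : GLBs F) : Continuous (conjGLB G) := by
  obtain ⟨bg, hbg0⟩ := exists_bound G.hg
  obtain ⟨bh, hbh0⟩ := exists_bound G.hginv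
  set b := max bg bh with hb
  have hbg : ∀ i k, b ≤ i → k < i → G.g i k = 0 :=
    fun i k hi => hbg0 i k (le_trans (le_max_left _ _) hi)
  have hbh : ∀ i k, b ≤ i → k < i → G.ginv i k = 0 :=
    fun i k hi => hbh0 i k (le_trans (le_max_right _ _) hi)
  refine continuous_from_LSpace fun p => ?_
  letI : TopologicalSpace F := ⊥
  haveI : DiscreteTopology F := ⟨rfl⟩
  have key : ∀ M : {M : ℕ → ℕ → F // ULT p M},
      ULT (max p b) (conjGLB G (incl F p M)).val :=
    fun M => conjGLB_ULT hbg hbh M.prop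
  have hfeq : conjGLB G ∘ incl F p
      = (incl F (max p b)) ∘ (fun M => ⟨(conjGLB G (incl F p M)).val, key M⟩) :=
    funext fun M => Subtype.ext rfl
  rw [hfeq]
  refine Continuous.comp (continuous_incl (max p b)) ?_
  rw [continuous_induced_rng]
  refine continuous_pi fun i => continuous_pi fun j => ?_
  set m := max (max (i + 1) (j + 1)) (max p b) with hm
  have hfun : (fun M : {M : ℕ → ℕ → F // ULT p M} => (conjGLB G (incl F p M)).val i j)
      = fun M => ∑ l ∈ Finset.range m,
          (∑ k ∈ Finset.range m, G.g i k * M.val k l) * G.ginv l j := by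
    funext M
    exact conj_entry_eq hbh M.prop (by omega) (by omega) (by omega)
  show Continuous fun M : {M : ℕ → ℕ → F // ULT p M} => (conjGLB G (incl F p M)).val i j
  rw [hfun]
  haveI : ContinuousMul F := ⟨continuous_of_discreteTopology⟩
  haveI : ContinuousAdd F := ⟨continuous_of_discreteTopology⟩
  refine continuous_finset_sum _ fun l _ => Continuous.mul ?_ continuous_const
  refine continuous_finset_sum _ fun k _ => Continuous.mul continuous_const ?_
  exact (continuous_apply l).comp ((continuous_apply k).comp continuous_subtype_val)

end Stmt7Aux3
section Stmt7Aux4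

open MeasureTheory Set Topology

variable {F : Type*} [Field F]

/-! ### The generating π-system -/

/-- The π-system of cylinder sets intersected with level sets. -/
def Psys (F : Type*) [Field F] : Set (Set (LSpace F)) :=
  {s | ∃ (t : Finset (ℕ × ℕ)) (c : ℕ × ℕ → F) (n : ℕ), s = Cyl t c ∩ Kset F n}

theorem Kset_mem_Psys (n : ℕ) : Kset F n ∈ Psys F :=
  ⟨∅, fun _ => 0, n, by rw [Cyl_empty, Set.univ_inter]⟩

theorem isPiSystem_Psys : IsPiSystem (Psys F) := by
  rintro s ⟨t1, c1, n1, rfl⟩ s' ⟨t2, c2, n2, rfl⟩ hne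
  refine ⟨t1 ∪ t2, fun q => if q ∈ t1 then c1 q else c2 q, min n1 n2, ?_⟩
  obtain ⟨M, ⟨hMc1, hMk1⟩, hMc2, hMk2⟩ := hne
  have hcc : ∀ q ∈ t1, q ∈ t2 → c1 q = c2 q := fun q h1 h2 => by
    rw [← hMc1 q h1]
    exact hMc2 q h2
  ext N
  simp only [Set.mem_inter_iff, Cyl, Set.mem_setOf_eq, Finset.mem_union]
  constructor
  · rintro ⟨⟨h1, hk1⟩, h2, hk2⟩
    constructor
    · intro q hq
      by_cases hq1 : q ∈ t1
      · rw [if_pos hq1]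
        exact h1 q hq1
      · rw [if_neg hq1]
        exact h2 q (hq.resolve_left hq1)
    · rw [← Kset_inter]
      exact ⟨hk1, hk2⟩
  · rintro ⟨hc, hk⟩
    rw [← Kset_inter] at hk
    refine ⟨⟨fun q hq => ?_, hk.1⟩, fun q hq => ?_, hk.2⟩
    · have := hc q (Or.inl hq)
      rwa [if_pos hq] at this
    · have := hc q (Or.inr hq)
      by_cases hq1 : q ∈ t1
      · rw [if_pos hq1] at this
        rw [← hcc q hq1 hq]
        exact this
      · rwa [if_neg hq1] at this

/-- The map recording all matrix entries, indexed by `ℕ × ℕ`. -/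
def toY : LSpace F → ((ℕ × ℕ) → F) := fun M q => M.val q.1 q.2

/-- Currying map from `ℕ × ℕ`-indexed functions to infinite matrices. -/
def ofY : ((ℕ × ℕ) → F) → (ℕ → ℕ → F) := fun y i j => y (i, j)

theorem measurableSet_gen_Kset (n : ℕ) :
    MeasurableSet[MeasurableSpace.generateFrom (Psys F)] (Kset F n) :=
  MeasurableSpace.measurableSet_generateFrom (Kset_mem_Psys n)

theorem gen_inter_preimage [Fintype F] (n : ℕ) {B : Set ((ℕ × ℕ) → F)}
    (hB : MeasurableSet[@MeasurableSpace.pi (ℕ × ℕ) (fun _ => F) (fun _ => ⊤)] B) :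
    MeasurableSet[MeasurableSpace.generateFrom (Psys F)] (Kset F n ∩ toY ⁻¹' B) := by
  classical
  set gen := MeasurableSpace.generateFrom (Psys F) with hgen
  let m' : MeasurableSpace ((ℕ × ℕ) → F) :=
    { MeasurableSet' := fun B => MeasurableSet[gen] (Kset F n ∩ toY ⁻¹' B)
      measurableSet_empty := by
        simp only [Set.preimage_empty, Set.inter_empty]
        exact MeasurableSet.empty
      measurableSet_compl := by
        intro B hB
        have hrw : Kset F n ∩ toY ⁻¹' Bᶜ = Kset F n \ (Kset F n ∩ toY ⁻¹' B) := by
          ext M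
          simp only [Set.mem_inter_iff, Set.mem_preimage, Set.mem_compl_iff, Set.mem_diff]
          tauto
        rw [hrw]
        exact (measurableSet_gen_Kset n).diff hB
      measurableSet_iUnion := by
        intro s hs
        have hrw : Kset F n ∩ toY ⁻¹' (⋃ i, s i) = ⋃ i, (Kset F n ∩ toY ⁻¹' (s i)) := by
          rw [Set.preimage_iUnion, Set.inter_iUnion]
        rw [hrw]
        exact MeasurableSet.iUnion hs }
  have hle : (@MeasurableSpace.pi (ℕ × ℕ) (fun _ => F) (fun _ => ⊤)) ≤ m' := by
    refine iSup_le fun q => ?_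
    intro s hs
    obtain ⟨S, -, rfl⟩ := hs
    show MeasurableSet[gen] (Kset F n ∩ toY ⁻¹' ((fun y : (ℕ × ℕ) → F => y q) ⁻¹' S))
    have hrw : Kset F n ∩ toY ⁻¹' ((fun y : (ℕ × ℕ) → F => y q) ⁻¹' S)
        = ⋃ c ∈ S, (Cyl {q} (fun _ => c) ∩ Kset F n) := by
      ext M
      simp only [Set.mem_inter_iff, Set.mem_preimage, Set.mem_iUnion, Cyl, Set.mem_setOf_eq,
        Finset.mem_singleton, toY]
      constructor
      · rintro ⟨hK, hS⟩
        exact ⟨M.val q.1 q.2, hS, fun q' hq' => by rw [hq'], hK⟩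
      · rintro ⟨c, hcS, hq, hK⟩
        refine ⟨hK, ?_⟩
        rw [hq q rfl]
        exact hcS
    rw [hrw]
    haveI : Finite F := Finite.of_fintype F
    refine MeasurableSet.biUnion (Set.to_countable S) fun c _ => ?_
    exact MeasurableSpace.measurableSet_generateFrom ⟨{q}, fun _ => c, n, rfl⟩
  exact hle B hB

theorem gen_inter_ofOpen [Fintype F] (n : ℕ) {V : Set (ℕ → ℕ → F)}
    (hV : IsOpen[piTop F] V) :
    MeasurableSet[MeasurableSpace.generateFrom (Psys F)]
      (Kset F n ∩ (fun M : LSpace F => M.val) ⁻¹' V) := by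
  letI : TopologicalSpace F := ⊥
  haveI : DiscreteTopology F := ⟨rfl⟩
  letI : MeasurableSpace F := ⊤
  haveI : BorelSpace F := ⟨le_antisymm
    (fun s _ => MeasurableSpace.measurableSet_generateFrom (isOpen_discrete s)) le_top⟩
  haveI : Finite F := Finite.of_fintype F
  have hofY : Continuous (ofY (F := F)) :=
    continuous_pi fun i => continuous_pi fun j => continuous_apply (i, j)
  have hop : IsOpen (ofY (F := F) ⁻¹' V) := hofY.isOpen_preimage V hV
  have hmeas : MeasurableSet (ofY (F := F) ⁻¹' V) := hop.measurableSet
  have hset : (fun M : LSpace F => M.val) ⁻¹' V = toY (F := F) ⁻¹' (ofY ⁻¹' V) := rfl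
  rw [hset]
  exact gen_inter_preimage n hmeas

theorem borel_eq_gen [Fintype F] :
    (instLSpaceMeas F) = MeasurableSpace.generateFrom (Psys F) := by
  apply le_antisymm
  · show borel (LSpace F) ≤ _
    rw [borel]
    refine MeasurableSpace.generateFrom_le fun U hU => ?_
    have hUrw : U = ⋃ n, U ∩ Kset F n := by
      rw [← Set.inter_iUnion, iUnion_Kset, Set.inter_univ]
    rw [hUrw]
    refine MeasurableSet.iUnion fun n => ?_
    have hpre : IsOpen[TopologicalSpace.induced Subtype.val (piTop F)] (incl F n ⁻¹' U) :=
      @Continuous.isOpen_preimage _ _ (TopologicalSpace.induced Subtype.val (piTop F))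
        (instLSpaceTop F) (incl F n) (continuous_incl n) U hU
    obtain ⟨V, hV, hVeq⟩ := (isOpen_induced_iff (t := piTop F)).mp hpre
    have hUK : U ∩ Kset F n = Kset F n ∩ (fun M : LSpace F => M.val) ⁻¹' V := by
      ext M
      constructor
      · rintro ⟨hMU, hMK⟩
        refine ⟨hMK, ?_⟩
        have h1 : (⟨M.val, hMK⟩ : {A : ℕ → ℕ → F // ULT n A}) ∈ incl F n ⁻¹' U := by
          show incl F n ⟨M.val, hMK⟩ ∈ U
          have heq : incl F n ⟨M.val, hMK⟩ = M := Subtype.ext rfl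
          rw [heq]
          exact hMU
        rw [← hVeq] at h1
        exact h1
      · rintro ⟨hMK, hMV⟩
        have h1 : (⟨M.val, hMK⟩ : {A : ℕ → ℕ → F // ULT n A}) ∈ Subtype.val ⁻¹' V := hMV
        rw [hVeq] at h1
        have heq : incl F n ⟨M.val, hMK⟩ = M := Subtype.ext rfl
        rw [← heq]
        exact ⟨h1, hMK⟩
    rw [hUK]
    exact gen_inter_ofOpen n hV
  · refine MeasurableSpace.generateFrom_le ?_
    rintro s ⟨t, c, n, rfl⟩
    exact ((isOpen_Cyl t c).inter (isOpen_Kset n)).measurableSet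

end Stmt7Aux4
/-- Any Radon measure (finite on compact sets) on `𝕃(q)` invariant under conjugation by the
finitary group `GL(∞, q)` is automatically invariant under conjugation by the bigger group
`𝔾𝕃𝔹` of invertible almost upper triangular matrices. -/
theorem stmt7 {F : Type*} [Field F] [Fintype F]
    (μ : Measure (LSpace F)) [IsFiniteMeasureOnCompacts μ]
    (hinv : ∀ G : GLBs F, Finitary G → Measure.map (conjGLB G) μ = μ) :
    ∀ G : GLBs F, Measure.map (conjGLB G) μ = μ := by
  intro G
  classical
  obtain ⟨b0g, hb0g⟩ := exists_bound G.hg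
  obtain ⟨b0h, hb0h⟩ := exists_bound G.hginv
  set b := max b0g b0h with hbdef
  have hbg : ∀ i k, b ≤ i → k < i → G.g i k = 0 :=
    fun i k hi => hb0g i k (le_trans (le_max_left _ _) hi)
  have hbh : ∀ i k, b ≤ i → k < i → G.ginv i k = 0 :=
    fun i k hi => hb0h i k (le_trans (le_max_right _ _) hi)
  have hGmeas : Measurable (conjGLB G) := (continuous_conjGLB G).measurable
  refine (Measure.ext_of_generateFrom_of_iUnion (Psys F) (fun n => Kset F n)
    borel_eq_gen isPiSystem_Psys iUnion_Kset (fun n => Kset_mem_Psys n)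
    (fun n => ((isCompact_Kset n).measure_lt_top).ne) ?_).symm
  rintro s ⟨t, c, n, rfl⟩
  have hsmeas : MeasurableSet (Cyl t c ∩ Kset F n) :=
    ((isOpen_Cyl t c).inter (isOpen_Kset n)).measurableSet
  rw [Measure.map_apply hGmeas hsmeas]
  set S := Cyl t c ∩ Kset F n with hS
  set W := (t.sup fun q => max q.1 q.2) + n + b + 1 with hW
  have hbW : b ≤ W := by omega
  have key : ∀ p : ℕ, μ (conjGLB G ⁻¹' S ∩ Kset F p)
      = μ (S ∩ conjGLB (GLBs.inv (truncGLB G (W + p) hbg hbh (by omega))) ⁻¹' Kset F p) := by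
    intro p
    set m := W + p with hm
    have hmb : b ≤ m := by omega
    set H := truncGLB G m hbg hbh hmb with hH
    have hHg : ∀ i k, b ≤ i → k < i → H.g i k = 0 := trunc_bound m hbg
    have hHh : ∀ i k, b ≤ i → k < i → H.ginv i k = 0 := trunc_bound m hbh
    have hHfin : Finitary H := truncGLB_finitary G m hbg hbh hmb
    have hHmeas : Measurable (conjGLB H) := (continuous_conjGLB H).measurable
    have hHinvmeas : Measurable (conjGLB (GLBs.inv H)) := (continuous_conjGLB _).measurable
    have step1 : conjGLB G ⁻¹' S ∩ Kset F p = conjGLB H ⁻¹' S ∩ Kset F p := by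
      ext M
      simp only [Set.mem_inter_iff, Set.mem_preimage]
      refine and_congr_left fun hMp => ?_
      have hMp' : ULT p M.val := hMp
      have agree : ∀ i j, i < m → j < m → (conjGLB H M).val i j = (conjGLB G M).val i j :=
        fun i j hi hj => conj_trunc_agree hbg hbh hmb hMp' (by omega) hi hj
      have hGq : ULT (max p b) (conjGLB G M).val := conjGLB_ULT hbg hbh hMp'
      have hHq : ULT (max p b) (conjGLB H M).val := conjGLB_ULT hHg hHh hMp'
      have hqm : max p b ≤ m := max_le (by omega) hmb
      have hult : ∀ X Y : ℕ → ℕ → F, ULT (max p b) X → ULT (max p b) Y →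
          (∀ i j, i < m → j < m → X i j = Y i j) → ULT n X → ULT n Y := by
        intro X Y hX hY hag h i j hji hi
        by_cases him : i < m
        · rw [← hag i j him (by omega)]
          exact h i j hji hi
        · exact hY i j hji (le_trans hqm (by omega))
      have hqlt : ∀ q ∈ t, q.1 < m ∧ q.2 < m := by
        intro q hq
        have hs : max q.1 q.2 ≤ t.sup fun q : ℕ × ℕ => max q.1 q.2 :=
          Finset.le_sup (f := fun q : ℕ × ℕ => max q.1 q.2) hq
        have h1 : q.1 ≤ max q.1 q.2 := le_max_left _ _
        have h2 : q.2 ≤ max q.1 q.2 := le_max_right _ _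
        omega
      have hcyl : (conjGLB G M ∈ Cyl t c) ↔ (conjGLB H M ∈ Cyl t c) := by
        constructor
        · intro h q hq
          rw [agree q.1 q.2 (hqlt q hq).1 (hqlt q hq).2]
          exact h q hq
        · intro h q hq
          rw [← agree q.1 q.2 (hqlt q hq).1 (hqlt q hq).2]
          exact h q hq
      have hks : (conjGLB G M ∈ Kset F n) ↔ (conjGLB H M ∈ Kset F n) :=
        ⟨fun h => hult _ _ hGq hHq (fun i j hi hj => (agree i j hi hj).symm) h,
          fun h => hult _ _ hHq hGq agree h⟩
      rw [hS]
      simp only [Set.mem_inter_iff]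
      exact and_congr hcyl hks
    have step2 : conjGLB H ⁻¹' S ∩ Kset F p
        = conjGLB H ⁻¹' (S ∩ conjGLB (GLBs.inv H) ⁻¹' Kset F p) := by
      ext M
      simp only [Set.mem_inter_iff, Set.mem_preimage]
      constructor
      · rintro ⟨h1, h2⟩
        refine ⟨h1, ?_⟩
        rw [conjGLB_inv_conjGLB]
        exact h2
      · rintro ⟨h1, h2⟩
        rw [conjGLB_inv_conjGLB] at h2
        exact ⟨h1, h2⟩
    have hQmeas : MeasurableSet (S ∩ conjGLB (GLBs.inv H) ⁻¹' Kset F p) :=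
      hsmeas.inter ((isOpen_Kset p).measurableSet.preimage hHinvmeas)
    rw [step1, step2, ← Measure.map_apply hHmeas hQmeas, hinv H hHfin]
  have le1 : μ (conjGLB G ⁻¹' S) ≤ μ S := by
    have hmono : Monotone fun p => conjGLB G ⁻¹' S ∩ Kset F p :=
      fun a a' haa' => Set.inter_subset_inter_right _ (Kset_mono haa')
    have hu : ⋃ p, (conjGLB G ⁻¹' S ∩ Kset F p) = conjGLB G ⁻¹' S := by
      rw [← Set.inter_iUnion, iUnion_Kset, Set.inter_univ]
    rw [← hu, hmono.directed_le.measure_iUnion]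
    refine iSup_le fun p => ?_
    rw [key p]
    exact measure_mono Set.inter_subset_left
  have le2 : μ S ≤ μ (conjGLB G ⁻¹' S) := by
    have hmono : Monotone fun a => S ∩ Kset F a :=
      fun a a' haa' => Set.inter_subset_inter_right _ (Kset_mono haa')
    have hu : ⋃ a, (S ∩ Kset F a) = S := by
      rw [← Set.inter_iUnion, iUnion_Kset, Set.inter_univ]
    conv_lhs => rw [← hu]
    rw [hmono.directed_le.measure_iUnion]
    refine iSup_le fun a => ?_
    set p := max a b with hp
    have hsub : Kset F a
        ⊆ conjGLB (GLBs.inv (truncGLB G (W + p) hbg hbh (by omega))) ⁻¹' Kset F p := by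
      intro M hM
      exact conjGLB_ULT (G := GLBs.inv (truncGLB G (W + p) hbg hbh (by omega)))
        (trunc_bound (W + p) hbh) (trunc_bound (W + p) hbg) hM
    calc μ (S ∩ Kset F a)
        ≤ μ (S ∩ conjGLB (GLBs.inv (truncGLB G (W + p) hbg hbh (by omega))) ⁻¹' Kset F p) :=
          measure_mono (Set.inter_subset_inter_right _ hsub)
      _ = μ (conjGLB G ⁻¹' S ∩ Kset F p) := (key p).symm
      _ ≤ μ (conjGLB G ⁻¹' S) := measure_mono Set.inter_subset_left
  exact le_antisymm le2 le1
end

section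
/- Let V be a finite-dimensional vector space over F_{q^2} equipped with a nondegenerate sesquilinear Hermitian form τ (with respect to the Frobenius involution x ↦ x^q), and let X : V → V be a nilpotent τ-skew-Hermitian operator. If dim V = 2m, there exists a complete flag 0 ⊂ V_1 ⊂ ... ⊂ V_m ⊂ V_{m-1}^⊥ ⊂ ... ⊂ V_1^⊥ ⊂ V preserved by X in which V_1, ..., V_m are τ-isotropic; if dim V = 2m+1 the analogous flag 0 ⊂ V_1 ⊂ ... ⊂ V_m ⊂ V_m^⊥ ⊂ ... ⊂ V_1^⊥ ⊂ V exists. Equivalently, every nilpotent conjugacy class in the unitary Lie algebra u(N, q^2) (defined with the antidiagonal Hermitian form) contains a strictly upper triangular matrix. -/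
open Module Submodule

section Perp

variable {K : Type*} [Field K] {V : Type*} [AddCommGroup V] [Module K V]

/-- Orthogonal complement with respect to a sesquilinear form (linear in the
first slot): `bperp B W = {x | ∀ w ∈ W, B x w = 0}`. -/
def bperp (B : V → V → K)
    (hB1 : ∀ x y z : V, B (x + y) z = B x z + B y z)
    (hB3 : ∀ (a : K) (x y : V), B (a • x) y = a * B x y)
    (W : Submodule K V) : Submodule K V where
  carrier := {x | ∀ w ∈ W, B x w = 0}
  add_mem' := by
    intro a b ha hb w hw
    rw [hB1, ha w hw, hb w hw, add_zero]
  zero_mem' := by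
    intro w hw
    have h := hB3 0 0 w
    rw [zero_smul] at h
    rw [h, zero_mul]
  smul_mem' := by
    intro c x hx w hw
    rw [hB3, hx w hw, mul_zero]

theorem mem_bperp {B : V → V → K} {hB1} {hB3} {W : Submodule K V} {x : V} :
    x ∈ bperp B hB1 hB3 W ↔ ∀ w ∈ W, B x w = 0 := Iff.rfl

theorem finrank_bperp [Fintype K] [FiniteDimensional K V]
    (B : V → V → K) (σ : K →+* K)
    (hσσ : ∀ x : K, σ (σ x) = x)
    (hB1 : ∀ x y z : V, B (x + y) z = B x z + B y z)
    (hB2 : ∀ (x : V) (y z : V), B x (y + z) = B x y + B x z)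
    (hB3 : ∀ (a : K) (x y : V), B (a • x) y = a * B x y)
    (hB4 : ∀ (a : K) (x y : V), B x (a • y) = σ a * B x y)
    (hherm : ∀ x y, σ (B x y) = B y x)
    (hnd : ∀ x, (∀ y, B x y = 0) → x = 0)
    (W : Submodule K V) :
    finrank K (bperp B hB1 hB3 W) + finrank K W = finrank K V := by
  classical
  -- the linear functional `x ↦ B x w`
  let F : V → Module.Dual K V := fun w =>
    { toFun := fun x => B x w
      map_add' := fun a b => hB1 a b w
      map_smul' := fun a x => by simp [hB3 a x w] }
  have hF : ∀ w x : V, F w x = B x w := fun w x => rfl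
  have hB0r : ∀ x : V, B x 0 = 0 := by
    intro x
    have h := hB4 0 x 0
    rw [zero_smul, map_zero, zero_mul] at h
    exact h
  have hBsubr : ∀ x y z : V, B x (y - z) = B x y - B x z := by
    intro x y z
    have h := hB2 x z (y - z)
    rw [show z + (y - z) = y by abel] at h
    rw [h]; ring
  -- the image of `W` under `F`, as a subspace of the dual
  let S : Submodule K (Module.Dual K V) :=
    { carrier := F '' (W : Set V)
      add_mem' := by
        rintro f g ⟨w, hw, rfl⟩ ⟨w', hw', rfl⟩
        exact ⟨w + w', W.add_mem hw hw', by ext x; simp [F, hB2]⟩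
      zero_mem' := ⟨0, W.zero_mem, by ext x; simp [F, hB0r]⟩
      smul_mem' := by
        rintro c f ⟨w, hw, rfl⟩
        refine ⟨σ c • w, W.smul_mem _ hw, ?_⟩
        ext x
        simp [F, hB4, hσσ, mul_comm] }
  have hperp : bperp B hB1 hB3 W = S.dualCoannihilator := by
    ext x
    rw [Submodule.mem_dualCoannihilator, mem_bperp]
    constructor
    · rintro h f hf
      obtain ⟨w, hw, rfl⟩ : ∃ w ∈ W, F w = f := hf
      exact h w hw
    · intro h w hw
      exact h (F w) ⟨w, hw, rfl⟩
  have hFinj : Function.Injective F := by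
    intro w w' h
    have h2 : ∀ x : V, B x (w - w') = 0 := by
      intro x
      rw [hBsubr, ← hF w x, ← hF w' x, h, sub_self]
    have h3 : ∀ x : V, B (w - w') x = 0 := by
      intro x
      rw [← hherm, h2 x, map_zero]
    have := hnd _ h3
    exact sub_eq_zero.mp this
  -- `W` and `S` have the same (finite) cardinality, hence the same dimension
  haveI : Finite V := Module.finite_of_finite K
  haveI : Fintype V := Fintype.ofFinite V
  have hcard : Nat.card S = Nat.card W := by
    refine (Nat.card_congr (Equiv.ofBijective
      (fun w : W => (⟨F w, ⟨w, w.2, rfl⟩⟩ : S)) ⟨?_, ?_⟩)).symm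
    · intro w w' h
      exact Subtype.ext (hFinj (congrArg Subtype.val h))
    · rintro ⟨f, hf⟩
      obtain ⟨w, hw, rfl⟩ : ∃ w ∈ W, F w = f := hf
      exact ⟨⟨w, hw⟩, rfl⟩
  have hfr : finrank K S = finrank K W := by
    haveI : Finite (Module.Dual K V) := Module.finite_of_finite K
    have h1 : Nat.card S = Fintype.card K ^ finrank K S := by
      haveI : Fintype S := Fintype.ofFinite _
      rw [Nat.card_eq_fintype_card]; exact Module.card_eq_pow_finrank (K := K) (V := S)
    have h2 : Nat.card W = Fintype.card K ^ finrank K W := by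
      haveI : Fintype W := Fintype.ofFinite _
      rw [Nat.card_eq_fintype_card]; exact Module.card_eq_pow_finrank (K := K) (V := W)
    refine Nat.pow_right_injective (Fintype.one_lt_card (α := K)) ?_
    show Fintype.card K ^ finrank K S = Fintype.card K ^ finrank K W
    rw [← h1, ← h2, hcard]
  have hco := Subspace.finrank_add_finrank_dualCoannihilator_eq S
  have : finrank K (bperp B hB1 hB3 W) = finrank K S.dualCoannihilator := by rw [hperp]
  omega

theorem bperp_bperp [Fintype K] [FiniteDimensional K V]
    (B : V → V → K) (σ : K →+* K)
    (hσσ : ∀ x : K, σ (σ x) = x)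
    (hB1 : ∀ x y z : V, B (x + y) z = B x z + B y z)
    (hB2 : ∀ (x : V) (y z : V), B x (y + z) = B x y + B x z)
    (hB3 : ∀ (a : K) (x y : V), B (a • x) y = a * B x y)
    (hB4 : ∀ (a : K) (x y : V), B x (a • y) = σ a * B x y)
    (hherm : ∀ x y, σ (B x y) = B y x)
    (hnd : ∀ x, (∀ y, B x y = 0) → x = 0)
    (W : Submodule K V) :
    bperp B hB1 hB3 (bperp B hB1 hB3 W) = W := by
  have hle : W ≤ bperp B hB1 hB3 (bperp B hB1 hB3 W) := by
    intro w hw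
    rw [mem_bperp]
    intro x hx
    rw [← hherm, hx w hw, map_zero]
  have h1 := finrank_bperp B σ hσσ hB1 hB2 hB3 hB4 hherm hnd W
  have h2 := finrank_bperp B σ hσσ hB1 hB2 hB3 hB4 hherm hnd (bperp B hB1 hB3 W)
  exact (Submodule.eq_of_le_of_finrank_le hle (by omega)).symm

end Perp

section Iso

variable {K : Type*} [Field K] {V : Type*} [AddCommGroup V] [Module K V]

theorem exists_isotropic_vec [FiniteDimensional K V]
    (B : V → V → K) (σ : K →+* K)
    (hnorm : ∀ b : K, σ b = b → b ≠ 0 → ∃ x : K, x * σ x = b)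
    (hB1 : ∀ x y z : V, B (x + y) z = B x z + B y z)
    (hB2 : ∀ (x : V) (y z : V), B x (y + z) = B x y + B x z)
    (hB3 : ∀ (a : K) (x y : V), B (a • x) y = a * B x y)
    (hB4 : ∀ (a : K) (x y : V), B x (a • y) = σ a * B x y)
    (hherm : ∀ x y, σ (B x y) = B y x)
    (U : Submodule K V) (hU : 2 ≤ finrank K U) :
    ∃ u ∈ U, u ≠ 0 ∧ B u u = 0 := by
  classical
  have hUbot : U ≠ ⊥ := by
    intro h
    rw [h, finrank_bot] at hU
    omega
  obtain ⟨u₀, hu₀U, hu₀⟩ := Submodule.exists_mem_ne_zero_of_ne_bot hUbot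
  by_cases h₀ : B u₀ u₀ = 0
  · exact ⟨u₀, hu₀U, hu₀, h₀⟩
  -- the kernel of `r ↦ B r u₀` on `U` is nontrivial
  let g : U →ₗ[K] K :=
    { toFun := fun r => B r u₀
      map_add' := fun a b => hB1 a b u₀
      map_smul' := fun a x => by simp [hB3 a x u₀] }
  have hker : LinearMap.ker g ≠ ⊥ := by
    intro h
    have h1 := LinearMap.finrank_range_add_finrank_ker g
    rw [h, finrank_bot, add_zero] at h1
    have h2 : finrank K (LinearMap.range g) ≤ finrank K K := Submodule.finrank_le _
    rw [finrank_self] at h2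
    omega
  obtain ⟨u₁, hu₁ker, hu₁⟩ := Submodule.exists_mem_ne_zero_of_ne_bot hker
  have hu'U : (u₁ : V) ∈ U := u₁.2
  have hu' : (u₁ : V) ≠ 0 := fun h => hu₁ (Subtype.ext h)
  have hu'u₀ : B (u₁ : V) u₀ = 0 := hu₁ker
  by_cases h₁ : B (u₁ : V) (u₁ : V) = 0
  · exact ⟨u₁, hu'U, hu', h₁⟩
  -- now combine
  set a := B u₀ u₀ with ha
  set b := B (u₁ : V) (u₁ : V) with hb
  have hσa : σ a = a := hherm u₀ u₀
  have hσb : σ b = b := hherm _ _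
  have hu₀u' : B u₀ (u₁ : V) = 0 := by rw [← hherm, hu'u₀, map_zero]
  have hc : σ (-(b * a⁻¹)) = -(b * a⁻¹) := by
    rw [map_neg, map_mul, map_inv₀, hσa, hσb]
  have hcne : -(b * a⁻¹) ≠ 0 := by
    simp only [neg_ne_zero]
    exact mul_ne_zero h₁ (inv_ne_zero h₀)
  obtain ⟨x, hx⟩ := hnorm _ hc hcne
  have hxne : x ≠ 0 := by
    intro h
    rw [h, zero_mul] at hx
    exact hcne hx.symm
  refine ⟨x • u₀ + (u₁ : V), U.add_mem (U.smul_mem _ hu₀U) hu'U, ?_, ?_⟩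
  · intro h
    have h2 : B (x • u₀) u₀ = 0 := by
      have : (x • u₀ : V) = -(u₁ : V) := by
        rw [eq_neg_iff_add_eq_zero]; exact h
      rw [this]
      have := hB3 (-1 : K) (u₁ : V) u₀
      rw [neg_one_smul] at this
      rw [this, hu'u₀, mul_zero]
    rw [hB3] at h2
    rcases mul_eq_zero.mp h2 with h3 | h3
    · exact hxne h3
    · exact h₀ h3
  · have hx' : x * σ x * a = -b := by
      rw [hx]; field_simp
    rw [hB1, hB2, hB2, hB3, hB3, hB4, hB4, hu₀u', hu'u₀, ← ha, ← hb]
    linear_combination hx' 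

end Iso

theorem exists_isotropic_ker {K : Type*} [Field K] {V : Type*} [AddCommGroup V] [Module K V]
    [FiniteDimensional K V]
    (B : V → V → K) (σ : K →+* K)
    (hnorm : ∀ b : K, σ b = b → b ≠ 0 → ∃ x : K, x * σ x = b)
    (hB1 : ∀ x y z : V, B (x + y) z = B x z + B y z)
    (hB2 : ∀ (x : V) (y z : V), B x (y + z) = B x y + B x z)
    (hB3 : ∀ (a : K) (x y : V), B (a • x) y = a * B x y)
    (hB4 : ∀ (a : K) (x y : V), B x (a • y) = σ a * B x y)
    (hherm : ∀ x y, σ (B x y) = B y x)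
    (X : Module.End K V) (hXnil : IsNilpotent X)
    (hXskew : ∀ u v, B (X u) v + B u (X v) = 0)
    (hdim : 2 ≤ finrank K V) :
    ∃ v : V, v ≠ 0 ∧ X v = 0 ∧ B v v = 0 := by
  classical
  have hB0r : ∀ x : V, B x 0 = 0 := by
    intro x
    have h := hB4 0 x 0
    rw [zero_smul, map_zero, zero_mul] at h
    exact h
  by_cases hX : X = 0
  · obtain ⟨u, hu, hune, hiso⟩ := exists_isotropic_vec B σ hnorm hB1 hB2 hB3 hB4 hherm ⊤
      (by rw [finrank_top]; exact hdim)
    exact ⟨u, hune, by rw [hX]; rfl, hiso⟩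
  · have hsk : ∀ u v, B (X u) v = -B u (X v) := fun u v =>
      eq_neg_of_add_eq_zero_left (hXskew u v)
    have hskpow : ∀ (j : ℕ) (u v : V), B ((X ^ j) u) v = (-1 : K) ^ j * B u ((X ^ j) v) := by
      intro j
      induction j with
      | zero => intro u v; simp
      | succ j ih =>
        intro u v
        have e1 : (X ^ (j + 1)) u = (X ^ j) (X u) := by
          rw [pow_succ]; rfl
        have e2 : X ((X ^ j) v) = (X ^ (j + 1)) v := by
          rw [pow_succ']; rfl
        rw [e1, ih (X u) v, hsk, e2]
        ring
    have hnontriv : Nontrivial V := by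
      apply Module.nontrivial_of_finrank_pos (R := K)
      omega
    obtain ⟨k, hk⟩ := hXnil
    have hex : ∃ m, X ^ m = 0 := ⟨k, hk⟩
    set m := Nat.find hex with hm
    have hm0 : X ^ m = 0 := Nat.find_spec hex
    have hmne : m ≠ 0 := by
      intro h
      rw [h, pow_zero] at hm0
      obtain ⟨v, hv⟩ := exists_ne (0 : V)
      exact hv (by simpa using congrArg (fun f => f v) hm0)
    have hm1 : m ≠ 1 := by
      intro h
      rw [h, pow_one] at hm0
      exact hX hm0
    have hmlt : X ^ (m - 1) ≠ 0 := Nat.find_min hex (by omega)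
    obtain ⟨w, hw⟩ : ∃ w : V, (X ^ (m - 1)) w ≠ 0 := by
      by_contra h
      push_neg at h
      exact hmlt (LinearMap.ext fun w => h w)
    refine ⟨(X ^ (m - 1)) w, hw, ?_, ?_⟩
    · have : X ((X ^ (m - 1)) w) = (X ^ m) w := by
        rw [show m = (m - 1) + 1 by omega, pow_succ']
        rfl
      rw [this, hm0]
      rfl
    · rw [hskpow]
      have : (X ^ (m - 1)) ((X ^ (m - 1)) w) = 0 := by
        have h1 : (X ^ (m - 1)) ((X ^ (m - 1)) w) = (X ^ ((m - 1) + (m - 1))) w := by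
          rw [pow_add]; rfl
        have h2 : X ^ ((m - 1) + (m - 1)) = 0 := by
          rw [show (m - 1) + (m - 1) = m + (m - 2) by omega, pow_add, hm0, zero_mul]
        rw [h1, h2]
        rfl
      rw [this, hB0r, mul_zero]

theorem finrank_comap_mkQ {K : Type*} [Field K] {P : Type*} [AddCommGroup P] [Module K P]
    [FiniteDimensional K P] (L : Submodule K P) (Z : Submodule K (P ⧸ L)) :
    finrank K (Z.comap L.mkQ) = finrank K Z + finrank K L := by
  set C := Z.comap L.mkQ with hC
  have hLC : L ≤ C := by
    rw [hC]
    conv_lhs => rw [← Submodule.ker_mkQ L]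
    exact LinearMap.ker_le_comap _
  set g := (L.mkQ).comp C.subtype with hg
  have hrange : LinearMap.range g = Z := by
    rw [hg, LinearMap.range_comp, Submodule.range_subtype]
    exact Submodule.map_comap_eq_of_surjective (Submodule.mkQ_surjective L) Z
  have hker : LinearMap.ker g = L.comap C.subtype := by
    rw [hg, LinearMap.ker_comp, Submodule.ker_mkQ]
  have h1 := LinearMap.finrank_range_add_finrank_ker g
  rw [hrange, hker] at h1
  have h2 : finrank K (L.comap C.subtype) = finrank K L :=
    (Submodule.comapSubtypeEquivOfLe hLC).finrank_eq
  rw [h2] at h1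
  exact h1.symm

set_option maxHeartbeats 8000000 in
theorem flag_aux {K : Type*} [Field K] [Fintype K] (σ : K →+* K)
    (hσσ : ∀ x : K, σ (σ x) = x)
    (hnorm : ∀ b : K, σ b = b → b ≠ 0 → ∃ x : K, x * σ x = b) :
    ∀ (n : ℕ) {V : Type v} [AddCommGroup V] [Module K V] [FiniteDimensional K V],
      Module.finrank K V = n →
      ∀ (B : V → V → K),
      (∀ x y z : V, B (x + y) z = B x z + B y z) →
      (∀ (x : V) (y z : V), B x (y + z) = B x y + B x z) →
      (∀ (a : K) (x y : V), B (a • x) y = a * B x y) →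
      (∀ (a : K) (x y : V), B x (a • y) = σ a * B x y) →
      (∀ x y, σ (B x y) = B y x) →
      (∀ x, (∀ y, B x y = 0) → x = 0) →
      ∀ (X : Module.End K V), IsNilpotent X →
      (∀ u v, B (X u) v + B u (X v) = 0) →
      ∃ W : ℕ → Submodule K V,
        W 0 = ⊥ ∧ W n = ⊤ ∧
        (∀ i j, i ≤ j → j ≤ n → W i ≤ W j) ∧
        (∀ i, i ≤ n → finrank K (W i) = i) ∧
        (∀ i, i ≤ n → ∀ v ∈ W i, X v ∈ W i) ∧
        (∀ i, i ≤ n → ∀ v : V, (v ∈ W (n - i) ↔ ∀ u ∈ W i, B u v = 0)) := by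
  intro n
  induction n using Nat.strong_induction_on with
  | _ n IH =>
  intro V _ _ _ hdim B hB1 hB2 hB3 hB4 hherm hnd X hXnil hXskew
  -- basic consequences
  have hB0l : ∀ y : V, B 0 y = 0 := by
    intro y
    have h := hB3 0 0 y
    rw [zero_smul, zero_mul] at h
    exact h
  have hB0r : ∀ x : V, B x 0 = 0 := by
    intro x
    have h := hB4 0 x 0
    rw [zero_smul, map_zero, zero_mul] at h
    exact h
  have hndr : ∀ v : V, (∀ u, B u v = 0) → v = 0 := by
    intro v hv
    refine hnd v fun u => ?_
    rw [← hherm, hv u, map_zero]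
  have hswap0 : ∀ x y : V, B x y = 0 → B y x = 0 := by
    intro x y h
    rw [← hherm, h, map_zero]
  obtain _ | _ | n := n
  · -- dimension 0
    haveI hsub : Subsingleton V := (Module.finrank_zero_iff (R := K)).mp hdim
    refine ⟨fun _ => ⊥, rfl, ?_, ?_, ?_, ?_, ?_⟩
    · rw [eq_top_iff]
      intro x _
      simp [Subsingleton.elim x 0]
    · intro i j _ _; exact le_refl _
    · intro i hi
      interval_cases i
      simp
    · intro i _ v hv
      simp [Subsingleton.elim (X v) 0]
    · intro i _ v
      constructor
      · intro _ u hu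
        rw [Subsingleton.elim u 0, hB0l]
      · intro _
        simp [Subsingleton.elim v 0]
  · -- dimension 1
    refine ⟨fun i => if i = 0 then ⊥ else ⊤, if_pos rfl, if_neg one_ne_zero, ?_, ?_, ?_, ?_⟩
    · intro i j hij _
      by_cases hi : i = 0
      · simp [hi]
      · have hj : j ≠ 0 := by omega
        simp [hi, hj]
    · intro i hi
      interval_cases i
      · simp
      · simpa using hdim
    · intro i _ v hv
      by_cases hi : i = 0
      · subst hi
        dsimp only at hv ⊢
        rw [if_pos rfl, Submodule.mem_bot] at hv ⊢
        rw [hv, map_zero]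
      · simp [hi]
    · intro i hi v
      by_cases h0 : i = 0
      · subst h0
        dsimp only
        rw [Nat.sub_zero, if_neg (show ¬(0 + 1 = 0) by omega), if_pos rfl]
        simp only [Submodule.mem_top, true_iff]
        intro u hu
        rw [Submodule.mem_bot] at hu
        rw [hu, hB0l]
      · have h1 : i = 0 + 1 := by omega
        subst h1
        dsimp only
        rw [Nat.sub_self, if_pos rfl, if_neg (show ¬(0 + 1 = 0) by omega),
          Submodule.mem_bot]
        constructor
        · intro hv u _
          rw [hv, hB0r]
        · intro h
          exact hndr v fun u => h u trivial
  · -- dimension n + 2 : the inductive step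
    obtain ⟨v, hv0, hXv, hvv⟩ := exists_isotropic_ker B σ hnorm hB1 hB2 hB3 hB4 hherm X
      hXnil hXskew (by rw [hdim]; omega)
    set L : Submodule K V := K ∙ v with hL
    have hvL : v ∈ L := Submodule.mem_span_singleton_self v
    have hLmem : ∀ x ∈ L, ∃ c : K, x = c • v := by
      intro x hx
      obtain ⟨c, hc⟩ := Submodule.mem_span_singleton.mp hx
      exact ⟨c, hc.symm⟩
    have hLrank : finrank K L = 1 := finrank_span_singleton hv0
    set P : Submodule K V := bperp B hB1 hB3 L with hP
    have hPmem : ∀ x : V, x ∈ P ↔ B x v = 0 := by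
      intro x
      rw [hP, mem_bperp]
      constructor
      · intro h; exact h v hvL
      · intro h w hw
        obtain ⟨c, rfl⟩ := hLmem w hw
        rw [hB4, h, mul_zero]
    have hPmem' : ∀ x : V, x ∈ P ↔ B v x = 0 := by
      intro x
      rw [hPmem]
      exact ⟨hswap0 x v, hswap0 v x⟩
    have hLP : L ≤ P := by
      intro x hx
      obtain ⟨c, rfl⟩ := hLmem x hx
      rw [hPmem, hB3, hvv, mul_zero]
    have hPrank : finrank K P = n + 1 := by
      have h := finrank_bperp B σ hσσ hB1 hB2 hB3 hB4 hherm hnd L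
      rw [← hP, hLrank, hdim] at h
      omega
    have hXP : ∀ x ∈ P, X x ∈ P := by
      intro x hx
      rw [hPmem]
      have h := hXskew x v
      rw [hXv, hB0r, add_zero] at h
      exact h
    set Xp : Module.End K P := X.restrict hXP with hXp
    have hXpcoe : ∀ p : P, (Xp p : V) = X (p : V) := fun p => rfl
    set L' : Submodule K P := L.comap P.subtype with hL'
    have hL'mem : ∀ l : P, l ∈ L' ↔ (l : V) ∈ L := fun l => Iff.rfl
    have hL'rank : finrank K L' = 1 := by
      rw [hL', (Submodule.comapSubtypeEquivOfLe hLP).finrank_eq, hLrank]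
    have hQrank : finrank K (P ⧸ L') = n := by
      have h := Submodule.finrank_quotient_add_finrank L'
      rw [hL'rank, hPrank] at h
      omega
    set π := L'.mkQ with hπ
    have hπsurj : Function.Surjective π := Submodule.mkQ_surjective L'
    have hBv : ∀ p : P, B (p : V) v = 0 := fun p => (hPmem _).mp p.2
    have hvB : ∀ p : P, B v (p : V) = 0 := fun p => (hPmem' _).mp p.2
    set φ : P → (P →ₗ[K] K) := fun p =>
      { toFun := fun r => B (r : V) (p : V)
        map_add' := fun a b => by
          rw [Submodule.coe_add, hB1]
        map_smul' := fun a r => by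
          rw [Submodule.coe_smul, hB3]; rfl } with hφ
    have hφker : ∀ p : P, L' ≤ LinearMap.ker (φ p) := by
      intro p l hl
      obtain ⟨c, hc⟩ := hLmem (l : V) hl
      show B (l : V) (p : V) = 0
      rw [hc, hB3, hvB, mul_zero]
    set ψ : P → ((P ⧸ L') →ₗ[K] K) := fun p => L'.liftQ (φ p) (hφker p) with hψ
    have hψmk : ∀ p r : P, ψ p (π r) = B (r : V) (p : V) := fun p r => rfl
    set Ψ : P →ₛₗ[σ] ((P ⧸ L') →ₗ[K] K) :=
      { toFun := ψ
        map_add' := by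
          intro p p'
          apply LinearMap.ext
          intro x
          obtain ⟨r, rfl⟩ := hπsurj x
          rw [LinearMap.add_apply, hψmk, hψmk, hψmk, Submodule.coe_add, hB2]
        map_smul' := by
          intro a p
          apply LinearMap.ext
          intro x
          obtain ⟨r, rfl⟩ := hπsurj x
          rw [LinearMap.smul_apply, hψmk, hψmk, Submodule.coe_smul, hB4, smul_eq_mul] }
      with hΨ
    have hΨker : L' ≤ LinearMap.ker Ψ := by
      intro l hl
      show ψ l = 0
      apply LinearMap.ext
      intro x
      obtain ⟨r, rfl⟩ := hπsurj x
      rw [hψmk, LinearMap.zero_apply]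
      obtain ⟨c, hc⟩ := hLmem (l : V) hl
      rw [hc, hB4, hBv, mul_zero]
    set Bq := L'.liftQ Ψ hΨker with hBq
    set B' : (P ⧸ L') → (P ⧸ L') → K := fun x y => Bq y x with hB'
    have hB'mk : ∀ p r : P, B' (π p) (π r) = B (p : V) (r : V) := fun p r => rfl
    -- properties of B'
    have hB1' : ∀ x y z, B' (x + y) z = B' x z + B' y z := by
      intro x y z
      obtain ⟨p, rfl⟩ := hπsurj x
      obtain ⟨q, rfl⟩ := hπsurj y
      obtain ⟨r, rfl⟩ := hπsurj z
      rw [← map_add, hB'mk, hB'mk, hB'mk, Submodule.coe_add, hB1]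
    have hB2' : ∀ x y z, B' x (y + z) = B' x y + B' x z := by
      intro x y z
      obtain ⟨p, rfl⟩ := hπsurj x
      obtain ⟨q, rfl⟩ := hπsurj y
      obtain ⟨r, rfl⟩ := hπsurj z
      rw [← map_add, hB'mk, hB'mk, hB'mk, Submodule.coe_add, hB2]
    have hB3' : ∀ (a : K) (x y), B' (a • x) y = a * B' x y := by
      intro a x y
      obtain ⟨p, rfl⟩ := hπsurj x
      obtain ⟨q, rfl⟩ := hπsurj y
      rw [← map_smul, hB'mk, hB'mk, Submodule.coe_smul, hB3]
    have hB4' : ∀ (a : K) (x y), B' x (a • y) = σ a * B' x y := by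
      intro a x y
      obtain ⟨p, rfl⟩ := hπsurj x
      obtain ⟨q, rfl⟩ := hπsurj y
      rw [← map_smul, hB'mk, hB'mk, Submodule.coe_smul, hB4]
    have hherm' : ∀ x y, σ (B' x y) = B' y x := by
      intro x y
      obtain ⟨p, rfl⟩ := hπsurj x
      obtain ⟨q, rfl⟩ := hπsurj y
      rw [hB'mk, hB'mk, hherm]
    have hnd' : ∀ x, (∀ y, B' x y = 0) → x = 0 := by
      intro x hx
      obtain ⟨p, rfl⟩ := hπsurj x
      have hpL : (p : V) ∈ L := by
        have hbb : bperp B hB1 hB3 P = L := by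
          rw [hP]
          exact bperp_bperp B σ hσσ hB1 hB2 hB3 hB4 hherm hnd L
        rw [← hbb, mem_bperp]
        intro w hw
        have h := hx (π ⟨w, hw⟩)
        rw [hB'mk] at h
        exact h
      exact (Submodule.Quotient.mk_eq_zero L').mpr hpL
    -- the induced endomorphism
    have hXL' : L' ≤ L'.comap Xp := by
      intro l hl
      show Xp l ∈ L'
      rw [hL'mem, hXpcoe]
      obtain ⟨c, hc⟩ := hLmem (l : V) hl
      rw [hc, map_smul, hXv, smul_zero]
      exact L.zero_mem
    set X' := Submodule.mapQ L' L' Xp hXL' with hX'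
    have hX'mk : ∀ p : P, X' (π p) = π (Xp p) := fun p => rfl
    have hXppow : ∀ (j : ℕ) (p : P), ((Xp ^ j) p : V) = (X ^ j) (p : V) := by
      intro j
      induction j with
      | zero => intro p; rfl
      | succ j ih =>
        intro p
        rw [pow_succ, pow_succ, Module.End.mul_apply, Module.End.mul_apply, ih, hXpcoe]
    have hX'pow : ∀ (j : ℕ) (p : P), (X' ^ j) (π p) = π ((Xp ^ j) p) := by
      intro j
      induction j with
      | zero => intro p; rfl
      | succ j ih =>
        intro p
        rw [pow_succ, pow_succ, Module.End.mul_apply, Module.End.mul_apply, hX'mk, ih]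
    have hX'nil : IsNilpotent X' := by
      obtain ⟨k, hk⟩ := hXnil
      refine ⟨k, ?_⟩
      apply LinearMap.ext
      intro x
      obtain ⟨p, rfl⟩ := hπsurj x
      rw [LinearMap.zero_apply, hX'pow]
      have h0 : (Xp ^ k) p = 0 := by
        apply Subtype.ext
        rw [hXppow, hk]
        rfl
      rw [h0, map_zero]
    have hXskew' : ∀ x y, B' (X' x) y + B' x (X' y) = 0 := by
      intro x y
      obtain ⟨p, rfl⟩ := hπsurj x
      obtain ⟨q, rfl⟩ := hπsurj y
      rw [hX'mk, hX'mk, hB'mk, hB'mk, hXpcoe, hXpcoe]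
      exact hXskew _ _
    -- apply the induction hypothesis to the quotient
    obtain ⟨W', hW'0, hW'top, hW'mono, hW'rank, hW'X, hW'orth⟩ :=
      IH n (by omega) hQrank B' hB1' hB2' hB3' hB4' hherm' hnd' X' hX'nil hXskew'
    -- lift the flag
    set F : Submodule K (P ⧸ L') → Submodule K V :=
      fun Z => (Z.comap π).map P.subtype with hF
    have hFrank : ∀ Z, finrank K (F Z) = finrank K Z + 1 := by
      intro Z
      rw [hF]
      dsimp only
      rw [Submodule.finrank_map_subtype_eq, hπ, finrank_comap_mkQ, hL'rank]
    have hFmono : ∀ Z Z', Z ≤ Z' → F Z ≤ F Z' := fun Z Z' h =>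
      Submodule.map_mono (Submodule.comap_mono h)
    have hLF : ∀ Z, L ≤ F Z := by
      intro Z x hx
      refine Submodule.mem_map.mpr ⟨⟨x, hLP hx⟩, ?_, rfl⟩
      show π ⟨x, hLP hx⟩ ∈ Z
      have h0 : π ⟨x, hLP hx⟩ = 0 := (Submodule.Quotient.mk_eq_zero L').mpr hx
      rw [h0]
      exact Z.zero_mem
    have hFmem : ∀ (Z) (x : V), x ∈ F Z ↔ ∃ hx : x ∈ P, π ⟨x, hx⟩ ∈ Z := by
      intro Z x
      constructor
      · rintro ⟨p, hp, rfl⟩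
        exact ⟨p.2, hp⟩
      · rintro ⟨hx, h⟩
        exact ⟨⟨x, hx⟩, h, rfl⟩
    refine ⟨fun i => if i = 0 then ⊥ else if i = n + 1 + 1 then ⊤ else F (W' (i - 1)),
      if_pos rfl, ?_, ?_, ?_, ?_, ?_⟩
    · dsimp only
      rw [if_neg (show ¬(n + 1 + 1 = 0) by omega), if_pos rfl]
    · intro i j hij hj
      dsimp only
      by_cases h0 : i = 0
      · rw [if_pos h0]; exact bot_le
      by_cases hjN : j = n + 1 + 1
      · have hj0' : ¬(j = 0) := by omega
        rw [if_neg hj0', if_pos hjN]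
        exact le_top
      have hj0 : ¬(j = 0) := by omega
      have hiN : ¬(i = n + 1 + 1) := by omega
      rw [if_neg h0, if_neg hiN, if_neg hj0, if_neg hjN]
      exact hFmono _ _ (hW'mono (i - 1) (j - 1) (by omega) (by omega))
    · intro i hi
      show finrank K (if i = 0 then ⊥ else if i = n + 1 + 1 then ⊤ else F (W' (i - 1)) : Submodule K V) = i
      by_cases h0 : i = 0
      · rw [if_pos h0, h0, finrank_bot]
      by_cases hN : i = n + 1 + 1
      · rw [if_neg h0, if_pos hN, finrank_top, hdim, hN]
      rw [if_neg h0, if_neg hN, hFrank, hW'rank (i - 1) (by omega)]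
      omega
    · intro i hi x hx
      dsimp only at hx ⊢
      by_cases h0 : i = 0
      · rw [if_pos h0, Submodule.mem_bot] at hx ⊢
        rw [hx, map_zero]
      by_cases hN : i = n + 1 + 1
      · rw [if_neg h0, if_pos hN] at hx ⊢
        exact Submodule.mem_top
      rw [if_neg h0, if_neg hN] at hx ⊢
      rw [hFmem] at hx
      obtain ⟨hxP, hmem⟩ := hx
      rw [hFmem]
      refine ⟨hXP x hxP, ?_⟩
      rw [show π ⟨X x, hXP x hxP⟩ = X' (π ⟨x, hxP⟩) from (hX'mk ⟨x, hxP⟩).symm]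
      exact hW'X (i - 1) (by omega) _ hmem
    · intro i hi x
      dsimp only
      by_cases h0 : i = 0
      · rw [h0, Nat.sub_zero, if_neg (show ¬(n + 1 + 1 = 0) by omega), if_pos rfl,
          if_pos rfl]
        simp only [Submodule.mem_top, true_iff]
        intro u hu
        rw [Submodule.mem_bot] at hu
        rw [hu, hB0l]
      by_cases hN : i = n + 1 + 1
      · rw [hN, Nat.sub_self, if_pos rfl, if_neg (show ¬(n + 1 + 1 = 0) by omega),
          if_pos rfl, Submodule.mem_bot]
        constructor
        · intro hx u _
          rw [hx, hB0r]
        · intro h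
          exact hndr x fun u => h u Submodule.mem_top
      have hii : 1 ≤ i ∧ i ≤ n + 1 := ⟨by omega, by omega⟩
      rw [if_neg (show ¬(n + 1 + 1 - i = 0) by omega),
        if_neg (show ¬(n + 1 + 1 - i = n + 1 + 1) by omega), if_neg h0, if_neg hN,
        show n + 1 + 1 - i - 1 = n - (i - 1) by omega]
      have horth := hW'orth (i - 1) (by omega)
      constructor
      · intro hx u hu
        rw [hFmem] at hx hu
        obtain ⟨hxP, hxm⟩ := hx
        obtain ⟨huP, hum⟩ := hu
        have h := (horth (π ⟨x, hxP⟩)).mp hxm (π ⟨u, huP⟩) hum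
        rw [hB'mk] at h
        exact h
      · intro hx
        have hxP : x ∈ P := by
          rw [hPmem']
          exact hx v (hLF _ hvL)
        rw [hFmem]
        refine ⟨hxP, (horth _).mpr ?_⟩
        intro y hy
        obtain ⟨r, rfl⟩ := hπsurj y
        rw [hB'mk]
        apply hx
        rw [hFmem]
        exact ⟨r.2, hy⟩

/-- Let `K = F_{q²}` (q an odd prime power) with Frobenius involution `σ x = x^q`, and let
`V` be a finite-dimensional `K`-vector space with a nondegenerate sesquilinear Hermitian form
`B`.  If `X` is a nilpotent `B`-skew-Hermitian operator on `V`, then there is a complete flag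
`0 = W 0 ⊂ W 1 ⊂ … ⊂ W N = V` (`N = dim V`) preserved by `X`, such that the orthogonal
complement of `W i` is `W (N − i)` for all `i ≤ N`; in particular the subspaces `W i` with
`2 i ≤ N` are isotropic.  (For `N = 2m` this is the flag
`V₁ ⊂ … ⊂ V_m ⊂ V_{m-1}^⊥ ⊂ … ⊂ V₁^⊥`, for `N = 2m+1` the flag
`V₁ ⊂ … ⊂ V_m ⊂ V_m^⊥ ⊂ … ⊂ V₁^⊥`; equivalently, every nilpotent conjugacy class in
`u(N, q²)` contains a strictly upper triangular matrix.) -/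
theorem stmt8 {K V : Type*} [Field K] [Fintype K] [AddCommGroup V] [Module K V]
    [FiniteDimensional K V]
    (p q : ℕ) (hp : p.Prime) (hpodd : Odd p) (hq : ∃ m : ℕ, 0 < m ∧ q = p ^ m)
    (hcard : Fintype.card K = q ^ 2)
    (σ : K →+* K) (hσ : ∀ x : K, σ x = x ^ q)
    (B : V → V → K)
    (hB1 : ∀ x y z, B (x + y) z = B x z + B y z)
    (hB2 : ∀ x y z, B x (y + z) = B x y + B x z)
    (hB3 : ∀ (a : K) (x y : V), B (a • x) y = a * B x y)
    (hB4 : ∀ (a : K) (x y : V), B x (a • y) = σ a * B x y)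
    (hherm : ∀ x y, σ (B x y) = B y x)
    (hnd : ∀ x, (∀ y, B x y = 0) → x = 0)
    (X : Module.End K V) (hXnil : IsNilpotent X)
    (hXskew : ∀ u v, B (X u) v + B u (X v) = 0) :
    ∃ W : ℕ → Submodule K V,
      W 0 = ⊥ ∧ W (Module.finrank K V) = ⊤ ∧
      (∀ i j, i ≤ j → j ≤ Module.finrank K V → W i ≤ W j) ∧
      (∀ i, i ≤ Module.finrank K V → Module.finrank K (W i) = i) ∧
      (∀ i, i ≤ Module.finrank K V → ∀ v ∈ W i, X v ∈ W i) ∧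
      (∀ i, i ≤ Module.finrank K V → ∀ v : V,
        (v ∈ W (Module.finrank K V - i) ↔ ∀ u ∈ W i, B u v = 0)) ∧
      (∀ i, 2 * i ≤ Module.finrank K V → ∀ u ∈ W i, ∀ u' ∈ W i, B u u' = 0) := by
  classical
  have hq2 : 2 ≤ q := by
    obtain ⟨m, hm, rfl⟩ := hq
    calc 2 ≤ p := hp.two_le
    _ ≤ p ^ m := Nat.le_self_pow (by omega) p
  have hσσ : ∀ x : K, σ (σ x) = x := by
    intro x
    rw [hσ, hσ, ← pow_mul, show q * q = q ^ 2 by ring, ← hcard, FiniteField.pow_card]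
  have hnorm : ∀ b : K, σ b = b → b ≠ 0 → ∃ x : K, x * σ x = b := by
    intro b hσb hb
    obtain ⟨g, hg⟩ := IsCyclic.exists_generator (α := Kˣ)
    set bu : Kˣ := Units.mk0 b hb with hbu
    have horder : orderOf g = q ^ 2 - 1 := by
      rw [orderOf_eq_card_of_forall_mem_zpowers hg, Nat.card_eq_fintype_card,
        Fintype.card_units, hcard]
    have hbq : bu ^ (q - 1) = 1 := by
      have h1 : b ^ (q - 1) * b = b := by
        rw [← pow_succ, show q - 1 + 1 = q by omega, ← hσ, hσb]
      have h2 : b ^ (q - 1) = 1 := mul_right_cancel₀ hb (by rw [h1, one_mul])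
      exact Units.ext (by rw [Units.val_pow_eq_pow_val, Units.val_one, hbu,
        Units.val_mk0, h2])
    obtain ⟨k, hk0⟩ := hg bu
    have hk : g ^ k = bu := hk0
    have hgk : g ^ (k * ((q : ℤ) - 1)) = 1 := by
      have h3 : (g ^ k) ^ ((q - 1 : ℕ) : ℤ) = 1 := by
        rw [hk, zpow_natCast, hbq]
      rw [← zpow_mul] at h3
      rw [show k * ((q : ℤ) - 1) = k * ((q - 1 : ℕ) : ℤ) by
        rw [Nat.cast_sub (show 1 ≤ q by omega)]; push_cast; ring]
      exact h3
    have hdvd : ((q : ℤ) ^ 2 - 1) ∣ k * ((q : ℤ) - 1) := by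
      have h4 := (orderOf_dvd_iff_zpow_eq_one (G := Kˣ)).mpr hgk
      rw [horder] at h4
      have h5 : ((q ^ 2 - 1 : ℕ) : ℤ) = (q : ℤ) ^ 2 - 1 := by
        push_cast [show 1 ≤ q ^ 2 by nlinarith]
        ring
      rwa [h5] at h4
    have hdvd2 : ((q : ℤ) + 1) ∣ k := by
      have h6 : ((q : ℤ) + 1) * ((q : ℤ) - 1) ∣ k * ((q : ℤ) - 1) := by
        rw [show ((q : ℤ) + 1) * ((q : ℤ) - 1) = (q : ℤ) ^ 2 - 1 by ring]
        exact hdvd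
      exact (mul_dvd_mul_iff_right (show (q : ℤ) - 1 ≠ 0 by
        have : (2 : ℤ) ≤ (q : ℤ) := by exact_mod_cast hq2
        omega)).mp h6
    obtain ⟨t, ht⟩ := hdvd2
    have hxpow : (g ^ t) ^ ((q + 1 : ℕ) : ℤ) = bu := by
      rw [← zpow_mul, ← hk, ht]
      congr 1
      push_cast
      ring
    refine ⟨((g ^ t : Kˣ) : K), ?_⟩
    have hx : ((g ^ t : Kˣ) : K) ^ (q + 1) = b := by
      have := congrArg (Units.val) hxpow
      rw [zpow_natCast] at this
      rw [← Units.val_pow_eq_pow_val, this, hbu, Units.val_mk0]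
    rw [hσ, ← pow_succ']
    exact hx
  obtain ⟨W, h0, htop, hmono, hrank, hX, horth⟩ :=
    flag_aux σ hσσ hnorm (Module.finrank K V) rfl B hB1 hB2 hB3 hB4 hherm hnd X
      hXnil hXskew
  refine ⟨W, h0, htop, hmono, hrank, hX, horth, ?_⟩
  intro i h2i u hu u' hu'
  have hle : i ≤ Module.finrank K V - i := by omega
  have h1 := hmono i (Module.finrank K V - i) hle (by omega) hu'
  exact (horth i (by omega) u').mp h1 u hu
end

section
/- Let t be a formal variable (or real parameter), and let Q_λ(;t) be the Hall–Littlewood Q-functions; set Q̃_λ(;t) := (−1)^{n(λ)} Q_λ(;t), where n(λ) = Σ (i−1)λ_i. Write (1−t^2) p_2 · Q̃_μ(;t) = Σ_λ ξ_{λ/μ}(t) Q̃_λ(;t), summed over λ with |λ| = |μ| + 2. Then ξ_{λ/μ}(t) = 0 unless μ ⊆ λ and the two boxes of λ\μ lie either in a single column or in two consecutive columns. Moreover: (1) if λ\μ is a vertical domino in column k, then ξ_{λ/μ}(t) = (1 − t^{m_{k−1}(μ)})(1 − t^{m_{k−1}(μ)−1}); (2) if the two boxes lie in consecutive columns k and k+1,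 then ξ_{λ/μ}(t) = (−t)^{m_k(μ)} (1+t)(1 − t^{m_{k−1}(μ)}). (Convention: t^{m_0(μ)} = t^{m_0(μ)−1} = 0, i.e., the factors involving m_{k−1}(μ) equal 1 when k = 1.) -/
open scoped BigOperators Classical

/-- The type of partitions (Young diagrams). -/
def PartitionF : Type := {f : ℕ → ℕ // IsPartitionFun f}

/-- The size `|μ|` of a partition. -/
noncomputable def psize (μ : PartitionF) : ℕ := ∑ᶠ i, μ.val i

/-- The one-row partition `(r)`. -/
def onerow (r : ℕ) : PartitionF :=
  ⟨fun i => if i = 0 then r else 0, by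
    constructor
    · intro a b hab
      dsimp only
      split_ifs <;> omega
    · exact ⟨1, fun n hn => by simp [Nat.one_le_iff_ne_zero.mp hn]⟩⟩

/-- `λ/μ` is a horizontal strip of size `r`: `μ ⊆ λ`, `|λ| = |μ| + r`, and every column of
`λ` contains at most one more box than the corresponding column of `μ`. -/
def HStrip (r : ℕ) (μ lam : PartitionF) : Prop :=
  (∀ i, μ.val i ≤ lam.val i) ∧ psize lam = psize μ + r ∧
    ∀ k, 1 ≤ k → conjP lam.val k ≤ conjP μ.val k + 1

/-- The Hall–Littlewood Pieri coefficient `ψ_{λ/μ}(t) = Π_{i ∈ I} (1 − t^(m_i(μ)))`, where `I`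
is the set of columns `i ≥ 1` such that the strip `λ/μ` has a box in column `i+1` but none in
column `i` (Macdonald III (5.8′)). -/
noncomputable def psiStrip {A : Type*} [CommRing A] (t : A) (μ lam : PartitionF) : A :=
  ∏ᶠ i : ℕ, if 1 ≤ i ∧ conjP lam.val i = conjP μ.val i ∧
      conjP lam.val (i + 1) = conjP μ.val (i + 1) + 1 then 1 - t ^ mcount μ.val i else 1

/-- `λ` is obtained from `μ` by adding a vertical domino in column `k`. -/
def VDom (μ lam : ℕ → ℕ) (k : ℕ) : Prop :=
  conjP lam k = conjP μ k + 2 ∧ ∀ i, 1 ≤ i → i ≠ k → conjP lam i = conjP μ i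

/-- `λ` is obtained from `μ` by adding one box in column `k` and one box in column `k+1`. -/
def TwoCol (μ lam : ℕ → ℕ) (k : ℕ) : Prop :=
  conjP lam k = conjP μ k + 1 ∧ conjP lam (k + 1) = conjP μ (k + 1) + 1 ∧
    ∀ i, 1 ≤ i → i ≠ k → i ≠ k + 1 → conjP lam i = conjP μ i

/-- The coefficient `ξ_{λ/μ}(t)`: it is
`(1 − t^(m_{k−1}(μ)))(1 − t^(m_{k−1}(μ)−1))` if `λ∖μ` is a vertical domino in column `k`,
`(−t)^(m_k(μ)) (1 + t)(1 − t^(m_{k−1}(μ)))` if the two boxes of `λ∖μ` lie in consecutive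
columns `k, k+1`, and `0` otherwise (with the convention `t^(m_0(μ)) = t^(m_0(μ)−1) = 0`,
i.e. the factors involving `m_{k−1}(μ)` equal `1` when `k = 1`). -/
noncomputable def xiCoef {A : Type*} [CommRing A] (t : A) (μ lam : PartitionF) : A :=
  (∑ᶠ k : ℕ, if 1 ≤ k ∧ VDom μ.val lam.val k then
      (if k = 1 then 1 else
        (1 - t ^ mcount μ.val (k - 1)) * (1 - t ^ (mcount μ.val (k - 1) - 1)))
    else 0)
  + ∑ᶠ k : ℕ, if 1 ≤ k ∧ TwoCol μ.val lam.val k then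
      (-t) ^ mcount μ.val k * (1 + t) *
        (if k = 1 then 1 else 1 - t ^ mcount μ.val (k - 1))
    else 0

lemma conjP_eq_card (f : ℕ → ℕ) {N : ℕ} (hN : ∀ n, N ≤ n → f n = 0) {k : ℕ} (hk : 1 ≤ k) :
    conjP f k = ((Finset.range N).filter fun i => k ≤ f i).card := by
  have hset : {i : ℕ | k ≤ f i} = ↑((Finset.range N).filter fun i => k ≤ f i) := by
    ext i
    simp only [Set.mem_setOf_eq, Finset.coe_filter, Finset.mem_range]
    constructor
    · intro h
      refine ⟨?_, h⟩
      by_contra hc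
      push_neg at hc
      have := hN i hc
      omega
    · exact fun h => h.2
  rw [conjP, hset, Nat.card_coe_set_eq, Set.ncard_coe_finset]

/-- The Galois-type relation: `i < μ'_k ↔ k ≤ μ_i` for `k ≥ 1`. -/
lemma lt_conjP_iff {f : ℕ → ℕ} (hf : IsPartitionFun f) {k : ℕ} (hk : 1 ≤ k) (i : ℕ) :
    i < conjP f k ↔ k ≤ f i := by
  obtain ⟨N, hN⟩ := hf.2
  rw [conjP_eq_card f hN hk]
  constructor
  · intro h
    by_contra hc
    push_neg at hc
    have hsub : ((Finset.range N).filter fun j => k ≤ f j) ⊆ Finset.range i := by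
      intro j hj
      simp only [Finset.mem_filter, Finset.mem_range] at hj ⊢
      by_contra hji
      push_neg at hji
      have := hf.1 hji
      omega
    have := Finset.card_le_card hsub
    simp [Finset.card_range] at this
    omega
  · intro h
    have hiN : i < N := by
      by_contra hc
      push_neg at hc
      have := hN i hc
      omega
    have hsub : Finset.range (i + 1) ⊆ (Finset.range N).filter fun j => k ≤ f j := by
      intro j hj
      simp only [Finset.mem_range] at hj
      simp only [Finset.mem_filter, Finset.mem_range]
      have : f i ≤ f j := hf.1 (by omega)
      constructor
      · omega
      · omega
    have := Finset.card_le_card hsub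
    simp [Finset.card_range] at this
    omega

lemma conjP_antitone {f : ℕ → ℕ} (hf : IsPartitionFun f) {k l : ℕ} (hk : 1 ≤ k) (hkl : k ≤ l) :
    conjP f l ≤ conjP f k := by
  by_contra h
  push_neg at h
  have h1 : conjP f k < conjP f l := h
  have h2 := (lt_conjP_iff hf (by omega) (conjP f k)).mp h1
  have h3 := (lt_conjP_iff hf hk (conjP f k)).mpr (by omega)
  omega

lemma conjP_eq_zero_of_gt {f : ℕ → ℕ} (hf : IsPartitionFun f) {k : ℕ} (hk : 1 ≤ k)
    (h : f 0 < k) : conjP f k = 0 := by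
  by_contra hc
  have := (lt_conjP_iff hf hk 0).mp (by omega)
  have := hf.1 (Nat.zero_le 0)
  omega

/-- Column-wise comparison from row-wise comparison. -/
lemma conjP_mono_of_le {f g : ℕ → ℕ} (hf : IsPartitionFun f) (hg : IsPartitionFun g)
    (h : ∀ i, f i ≤ g i) {k : ℕ} (hk : 1 ≤ k) : conjP f k ≤ conjP g k := by
  rcases Nat.eq_zero_or_pos (conjP f k) with h0 | h0
  · omega
  · have h1 := (lt_conjP_iff hf hk (conjP f k - 1)).mp (by omega)
    have h2 := (lt_conjP_iff hg hk (conjP f k - 1)).mpr (le_trans h1 (h _))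
    omega

/-- Row-wise comparison from column-wise comparison. -/
lemma le_of_conjP_le {f g : ℕ → ℕ} (hf : IsPartitionFun f) (hg : IsPartitionFun g)
    (h : ∀ k, 1 ≤ k → conjP f k ≤ conjP g k) (i : ℕ) : f i ≤ g i := by
  rcases Nat.eq_zero_or_pos (f i) with h0 | h0
  · omega
  · have h1 := (lt_conjP_iff hf h0 i).mpr (le_refl _)
    have h2 := (lt_conjP_iff hg h0 i).mp (by have := h _ h0; omega)
    exact h2

/-- mcount in terms of conjP, for `j ≥ 1`. -/
lemma mcount_eq {f : ℕ → ℕ} (hf : IsPartitionFun f) {j : ℕ} (hj : 1 ≤ j) :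
    mcount f j = conjP f j - conjP f (j + 1) := by
  have hset : {i : ℕ | f i = j} = Set.Ico (conjP f (j+1)) (conjP f j) := by
    ext i
    simp only [Set.mem_setOf_eq, Set.mem_Ico]
    have h1 := lt_conjP_iff hf hj i
    have h2 := lt_conjP_iff hf (by omega : 1 ≤ j + 1) i
    omega
  rw [mcount, hset, Nat.card_coe_set_eq, Set.ncard_eq_toFinset_card',
    Set.toFinset_Ico, Nat.card_Ico]

lemma mcount_pos {f : ℕ → ℕ} (hf : IsPartitionFun f) {j : ℕ} (hj : 1 ≤ j) {r : ℕ}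
    (hr : f r = j) : 1 ≤ mcount f j := by
  rw [mcount_eq hf hj]
  have h1 := (lt_conjP_iff hf hj r).mpr (by omega)
  have h2 := lt_conjP_iff hf (by omega : 1 ≤ j + 1) r
  omega


lemma sum_support_fin {f : ℕ → ℕ} {N : ℕ} (hN : ∀ n, N ≤ n → f n = 0) :
    (Function.support f).Finite := by
  apply Set.Finite.subset (Set.finite_Iio N)
  intro i hi
  simp only [Function.mem_support] at hi
  by_contra h
  exact hi (hN i (by simpa [Set.mem_Iio, not_lt] using h))

lemma finsum_eq_range {f : ℕ → ℕ} {N : ℕ} (hN : ∀ n, N ≤ n → f n = 0) :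
    ∑ᶠ i, f i = ∑ i ∈ Finset.range N, f i := by
  apply finsum_eq_sum_of_support_subset
  intro i hi
  simp only [Function.mem_support] at hi
  simp only [Finset.coe_range, Set.mem_Iio]
  by_contra h
  exact hi (hN i (by omega))

lemma psize_eq_conj_sum (μ : PartitionF) : psize μ = ∑ᶠ k, conjP μ.1 (k + 1) := by
  obtain ⟨N, hN⟩ := μ.2.2
  set M := μ.1 0 with hM
  have hbound : ∀ i, μ.1 i ≤ M := fun i => μ.2.1 (Nat.zero_le i)
  have hconj0 : ∀ k, M ≤ k → conjP μ.1 (k + 1) = 0 := fun k hk =>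
    conjP_eq_zero_of_gt μ.2 (by omega) (by omega)
  rw [psize, finsum_eq_range hN, finsum_eq_range hconj0]
  have step1 : ∀ i ∈ Finset.range N, μ.1 i = ∑ k ∈ Finset.range M,
      (if k + 1 ≤ μ.1 i then 1 else 0) := by
    intro i _
    rw [← Finset.card_filter]
    have : (Finset.range M).filter (fun k => k + 1 ≤ μ.1 i) = Finset.range (μ.1 i) := by
      ext k
      simp only [Finset.mem_filter, Finset.mem_range]
      have := hbound i
      omega
    rw [this, Finset.card_range]
  rw [Finset.sum_congr rfl step1, Finset.sum_comm]
  apply Finset.sum_congr rfl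
  intro k _
  rw [conjP_eq_card μ.1 hN (by omega)]
  rw [Finset.card_filter]


def addbox (μ : ℕ → ℕ) (r : ℕ) : ℕ → ℕ := fun i => if i = r then μ r + 1 else μ i

lemma nat_eq_of_lt_iff {a b : ℕ} (h : ∀ i, i < a ↔ i < b) : a = b := by
  rcases lt_trichotomy a b with h' | h' | h'
  · exact absurd ((h a).mpr h') (lt_irrefl a)
  · exact h'
  · exact absurd ((h b).mp h') (lt_irrefl b)

lemma addbox_isPartitionFun {μ : ℕ → ℕ} (hμ : IsPartitionFun μ) {r : ℕ}
    (hr : r = 0 ∨ μ r < μ (r - 1)) : IsPartitionFun (addbox μ r) := by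
  obtain ⟨N, hN⟩ := hμ.2
  constructor
  · intro a b hab
    have hab' := hμ.1 hab
    show addbox μ r b ≤ addbox μ r a
    simp only [addbox]
    rcases eq_or_ne a r with ha | ha <;> rcases eq_or_ne b r with hb | hb
    · rw [if_pos ha, if_pos hb]
    · rw [if_pos ha, if_neg hb]
      have h1 : μ a = μ r := by rw [ha]
      omega
    · rw [if_neg ha, if_pos hb]
      have h0 : a < r := by omega
      have h2 : μ (r - 1) ≤ μ a := hμ.1 (by omega)
      rcases hr with h5 | h5
      · omega
      · omega
    · rw [if_neg ha, if_neg hb]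
      exact hab'
  · refine ⟨max N (r + 1), fun n hn => ?_⟩
    simp only [addbox]
    rw [if_neg (by omega)]
    exact hN n (by omega)

lemma conjP_addbox {μ : ℕ → ℕ} (hμ : IsPartitionFun μ) {r : ℕ}
    (hp : IsPartitionFun (addbox μ r)) {k : ℕ} (hk : 1 ≤ k) :
    conjP (addbox μ r) k = conjP μ k + if k = μ r + 1 then 1 else 0 := by
  rcases lt_trichotomy k (μ r + 1) with hc | hc | hc
  · -- k ≤ μ r
    rw [if_neg (by omega), add_zero]
    apply nat_eq_of_lt_iff
    intro i
    rw [lt_conjP_iff hp hk, lt_conjP_iff hμ hk]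
    simp only [addbox]
    split_ifs with h
    · rw [h]; omega
    · rfl
  · -- k = μ r + 1 : conjP μ k = r and result is r + 1
    have hcr : conjP μ k = r := by
      have h1 : ¬ (r < conjP μ k) := by
        rw [lt_conjP_iff hμ hk]; omega
      rcases Nat.eq_zero_or_pos r with h0 | h0
      · omega
      · have h2 : r - 1 < conjP μ k := by
          rw [lt_conjP_iff hμ hk]
          have e1 : addbox μ r (r - 1) = μ (r - 1) := by
            simp only [addbox]
            rw [if_neg (by omega : ¬ (r - 1 = r))]
          have e2 : addbox μ r r = μ r + 1 := by simp [addbox]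
          have hmono := hp.1 (by omega : r - 1 ≤ r)
          rw [e1, e2] at hmono
          omega
        omega
    rw [if_pos hc, hcr]
    apply nat_eq_of_lt_iff
    intro i
    rw [lt_conjP_iff hp hk]
    simp only [addbox]
    constructor
    · intro h
      split_ifs at h with h'
      · omega
      · have := (lt_conjP_iff hμ hk i).mpr h
        omega
    · intro h
      split_ifs with h'
      · omega
      · have : i < conjP μ k := by omega
        rw [lt_conjP_iff hμ hk] at this
        exact this
  · -- k > μ r + 1
    rw [if_neg (by omega), add_zero]
    apply nat_eq_of_lt_iff
    intro i
    rw [lt_conjP_iff hp hk, lt_conjP_iff hμ hk]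
    simp only [addbox]
    split_ifs with h
    · rw [h]; omega
    · rfl

lemma psize_addbox (μ : PartitionF) (r : ℕ) (hp : IsPartitionFun (addbox μ.1 r))
    : psize ⟨addbox μ.1 r, hp⟩ = psize μ + 1 := by
  obtain ⟨N, hN⟩ := μ.2.2
  set M := max N (r + 1) with hM
  have hN' : ∀ n, M ≤ n → μ.1 n = 0 := fun n hn => hN n (by omega)
  have hA : ∀ n, M ≤ n → addbox μ.1 r n = 0 := by
    intro n hn
    simp only [addbox]
    rw [if_neg (by omega)]
    exact hN n (by omega)
  show (∑ᶠ i, addbox μ.1 r i) = psize μ + 1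
  rw [psize, finsum_eq_range hA, finsum_eq_range hN']
  have : ∀ i, addbox μ.1 r i = μ.1 i + (if i = r then 1 else 0) := by
    intro i
    simp only [addbox]
    split_ifs with h
    · rw [h]
    · omega
  simp only [this]
  rw [Finset.sum_add_distrib, Finset.sum_ite_eq' (Finset.range M) r (fun _ => 1),
    if_pos (by simp only [Finset.mem_range]; omega)]

lemma nstat_addbox (μ : PartitionF) (r : ℕ) (hp : IsPartitionFun (addbox μ.1 r)) :
    nstat (addbox μ.1 r) = nstat μ.1 + r := by
  obtain ⟨N, hN⟩ := μ.2.2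
  set M := max N (r + 1) with hM
  have hN' : ∀ n, M ≤ n → n * μ.1 n = 0 := fun n hn => by rw [hN n (by omega)]; ring
  have hA : ∀ n, M ≤ n → n * addbox μ.1 r n = 0 := by
    intro n hn
    simp only [addbox]
    rw [if_neg (by omega), hN n (by omega)]
    ring
  rw [nstat, nstat, finsum_eq_range hA, finsum_eq_range hN']
  have : ∀ i, i * addbox μ.1 r i = i * μ.1 i + (if i = r then r else 0) := by
    intro i
    simp only [addbox]
    split_ifs with h
    · rw [h]; ring
    · omega
  simp only [this]
  rw [Finset.sum_add_distrib, Finset.sum_ite_eq' (Finset.range M) r (fun _ => r),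
    if_pos (by simp only [Finset.mem_range]; omega)]

-- decomposition of small sums
lemma finsum_one_decomp {g : ℕ → ℕ} {N : ℕ} (hN : ∀ n, N ≤ n → g n = 0)
    (h : ∑ᶠ i, g i = 1) : ∃ r, ∀ i, g i = if i = r then 1 else 0 := by
  rw [finsum_eq_range hN] at h
  obtain ⟨r, hr, hgr⟩ := Finset.exists_ne_zero_of_sum_ne_zero (by omega :
    ∑ i ∈ Finset.range N, g i ≠ 0)
  rw [← Finset.add_sum_erase _ _ hr] at h
  have hrest : ∑ i ∈ (Finset.range N).erase r, g i = 0 := by omega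
  rw [Finset.sum_eq_zero_iff] at hrest
  refine ⟨r, fun i => ?_⟩
  split_ifs with hi
  · rw [hi]; omega
  · rcases Nat.lt_or_ge i N with h' | h'
    · exact hrest i (Finset.mem_erase.mpr ⟨hi, Finset.mem_range.mpr h'⟩)
    · exact hN i h'

lemma finsum_two_decomp {g : ℕ → ℕ} {N : ℕ} (hN : ∀ n, N ≤ n → g n = 0)
    (h : ∑ᶠ i, g i = 2) :
    (∃ r, ∀ i, g i = if i = r then 2 else 0) ∨
      (∃ r s, r < s ∧ ∀ i, g i = (if i = r then 1 else 0) + (if i = s then 1 else 0)) := by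
  rw [finsum_eq_range hN] at h
  obtain ⟨r, hr, hgr⟩ := Finset.exists_ne_zero_of_sum_ne_zero (by omega :
    ∑ i ∈ Finset.range N, g i ≠ 0)
  rw [← Finset.add_sum_erase _ _ hr] at h
  have hgr2 : g r ≤ 2 := by omega
  rcases (by omega : g r = 2 ∨ g r = 1) with h2 | h1
  · left
    have hrest : ∑ i ∈ (Finset.range N).erase r, g i = 0 := by omega
    rw [Finset.sum_eq_zero_iff] at hrest
    refine ⟨r, fun i => ?_⟩
    split_ifs with hi
    · rw [hi]; omega
    · rcases Nat.lt_or_ge i N with h' | h'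
      · exact hrest i (Finset.mem_erase.mpr ⟨hi, Finset.mem_range.mpr h'⟩)
      · exact hN i h'
  · right
    have hrest : ∑ i ∈ (Finset.range N).erase r, g i = 1 := by omega
    obtain ⟨s, hs, hgs⟩ := Finset.exists_ne_zero_of_sum_ne_zero (by omega :
      ∑ i ∈ (Finset.range N).erase r, g i ≠ 0)
    rw [← Finset.add_sum_erase _ _ hs] at hrest
    have hrest2 : ∑ i ∈ ((Finset.range N).erase r).erase s, g i = 0 := by omega
    rw [Finset.sum_eq_zero_iff] at hrest2
    have hsr : s ≠ r := (Finset.mem_erase.mp hs).1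
    have hall : ∀ i, i ≠ r → i ≠ s → g i = 0 := by
      intro i hir his
      rcases Nat.lt_or_ge i N with h' | h'
      · exact hrest2 i (by simp [Finset.mem_erase, his, hir, Finset.mem_range, h'])
      · exact hN i h'
    have hgs1 : g s = 1 := by omega
    have hgr1 : g r = 1 := h1
    rcases Nat.lt_or_ge r s with ho | ho
    · refine ⟨r, s, ho, fun i => ?_⟩
      rcases eq_or_ne i r with hi | hi
      · rw [hi, if_pos rfl, if_neg (by omega)]; omega
      · rcases eq_or_ne i s with hi2 | hi2
        · rw [hi2, if_neg (by omega), if_pos rfl]; omega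
        · rw [if_neg hi, if_neg hi2]; simp [hall i hi hi2]
    · refine ⟨s, r, by omega, fun i => ?_⟩
      rcases eq_or_ne i r with hi | hi
      · rw [hi, if_neg (by omega), if_pos rfl]; omega
      · rcases eq_or_ne i s with hi2 | hi2
        · rw [hi2, if_pos rfl, if_neg (by omega)]; omega
        · rw [if_neg hi2, if_neg hi]; simp [hall i hi hi2]

lemma psize_decomp {μ lam : PartitionF} (hle : ∀ i, μ.1 i ≤ lam.1 i) :
    psize lam = psize μ + ∑ᶠ i, (lam.1 i - μ.1 i) := by
  obtain ⟨N1, hN1⟩ := μ.2.2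
  obtain ⟨N2, hN2⟩ := lam.2.2
  set M := max N1 N2 with hM
  have h1 : ∀ n, M ≤ n → μ.1 n = 0 := fun n hn => hN1 n (by omega)
  have h2 : ∀ n, M ≤ n → lam.1 n = 0 := fun n hn => hN2 n (by omega)
  have h3 : ∀ n, M ≤ n → lam.1 n - μ.1 n = 0 := fun n hn => by rw [h1 n hn, h2 n hn]
  rw [psize, psize, finsum_eq_range h2, finsum_eq_range h1, finsum_eq_range h3,
    ← Finset.sum_add_distrib]
  apply Finset.sum_congr rfl
  intro i _
  have := hle i
  omega


lemma le_psize (lam : PartitionF) (i : ℕ) : lam.1 i ≤ psize lam := by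
  obtain ⟨N, hN⟩ := lam.2.2
  rcases Nat.eq_zero_or_pos (lam.1 i) with h0 | h0
  · omega
  · have hiN : i < N := by
      by_contra h
      have := hN i (by omega)
      omega
    rw [psize, finsum_eq_range hN]
    exact Finset.single_le_sum (fun j _ => Nat.zero_le _) (Finset.mem_range.mpr hiN)

lemma eventually_zero_of_psize {lam : PartitionF} (i : ℕ) (hi : psize lam ≤ i) :
    lam.1 i = 0 := by
  by_contra h
  obtain ⟨N, hN⟩ := lam.2.2
  set M := max N (i + 1) with hM
  have hN' : ∀ n, M ≤ n → lam.1 n = 0 := fun n hn => hN n (by omega)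
  have hsum : psize lam = ∑ j ∈ Finset.range M, lam.1 j := by
    rw [psize, finsum_eq_range hN']
  have hsub : Finset.range (i + 1) ⊆ Finset.range M := by
    intro x hx
    simp only [Finset.mem_range] at hx ⊢
    omega
  have h2 : ∑ j ∈ Finset.range (i + 1), lam.1 j ≤ psize lam := by
    rw [hsum]
    exact Finset.sum_le_sum_of_subset hsub
  have h3 : ∀ j ∈ Finset.range (i + 1), 1 ≤ lam.1 j := by
    intro j hj
    simp only [Finset.mem_range] at hj
    have := lam.2.1 (by omega : j ≤ i)
    omega
  have h4 : i + 1 ≤ ∑ j ∈ Finset.range (i + 1), lam.1 j := by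
    calc i + 1 = ∑ _j ∈ Finset.range (i + 1), 1 := by simp
    _ ≤ _ := Finset.sum_le_sum h3
  omega

lemma finite_above (μ : PartitionF) (r : ℕ) :
    {lam : PartitionF | (∀ i, μ.1 i ≤ lam.1 i) ∧ psize lam = psize μ + r}.Finite := by
  set T := psize μ + r with hT
  set F : PartitionF → (Fin (T + 1) → Fin (T + 1)) :=
    fun lam j => ⟨min (lam.1 j.1) T, by omega⟩ with hF
  apply Set.Finite.of_finite_image (f := F) (Set.toFinite _)
  intro a ha b hb hab
  simp only [Set.mem_setOf_eq] at ha hb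
  have key : ∀ (lam : PartitionF), psize lam = T → ∀ j : ℕ, lam.1 j = min (T + 1) 0 + lam.1 j :=
    fun _ _ _ => by omega
  apply Subtype.ext
  funext i
  rcases Nat.lt_or_ge i (T + 1) with hi | hi
  · have := congrFun hab ⟨i, hi⟩
    simp only [hF, Fin.mk.injEq] at this
    have ha2 : a.1 i ≤ T := by rw [← ha.2]; exact le_psize a i
    have hb2 : b.1 i ≤ T := by rw [← hb.2]; exact le_psize b i
    omega
  · have h1 : a.1 i = 0 := eventually_zero_of_psize i (by omega)
    have h2 : b.1 i = 0 := eventually_zero_of_psize i (by omega)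
    rw [h1, h2]

/-- characterization of one-box additions -/
lemma hstrip1_of_addbox (μ : PartitionF) (r : ℕ) (hp : IsPartitionFun (addbox μ.1 r)) :
    HStrip 1 μ ⟨addbox μ.1 r, hp⟩ := by
  refine ⟨?_, ?_, ?_⟩
  · intro i
    show μ.1 i ≤ addbox μ.1 r i
    simp only [addbox]
    split_ifs with h
    · rw [h]; omega
    · omega
  · exact psize_addbox μ r hp
  · intro k hk
    show conjP (addbox μ.1 r) k ≤ conjP μ.1 k + 1
    rw [conjP_addbox μ.2 hp hk]
    split_ifs <;> omega

lemma hstrip1_exists {μ ν : PartitionF} (h : HStrip 1 μ ν) :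
    ∃ r, ν.1 = addbox μ.1 r := by
  obtain ⟨hle, hsz, _⟩ := h
  rw [psize_decomp hle] at hsz
  obtain ⟨N, hN⟩ := ν.2.2
  have hN' : ∀ n, N ≤ n → ν.1 n - μ.1 n = 0 := fun n hn => by rw [hN n hn]; omega
  obtain ⟨r, hr⟩ := finsum_one_decomp hN' (by omega)
  refine ⟨r, ?_⟩
  funext i
  have h2 : ν.1 r - μ.1 r = 1 := by
    have := hr r
    rw [if_pos rfl] at this
    exact this
  have h3 := hle i
  have h4 := hle r
  simp only [addbox]
  split_ifs with h5
  · rw [h5] at h3 ⊢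
    omega
  · have h1 := hr i
    rw [if_neg h5] at h1
    omega

/-- ψ for a single added box in column c -/
lemma psi_eval1 {A : Type*} [CommRing A] (t : A) (μ ν : PartitionF) (c : ℕ) (hc : 1 ≤ c)
    (h : ∀ k, 1 ≤ k → conjP ν.1 k = conjP μ.1 k + if k = c then 1 else 0) :
    psiStrip t μ ν = if 2 ≤ c then 1 - t ^ mcount μ.1 (c - 1) else 1 := by
  rw [psiStrip, finprod_eq_single _ (c - 1)]
  · rcases Nat.lt_or_ge c 2 with h2 | h2
    · have hno : ¬(1 ≤ c - 1 ∧ conjP ν.1 (c-1) = conjP μ.1 (c-1) ∧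
          conjP ν.1 (c - 1 + 1) = conjP μ.1 (c - 1 + 1) + 1) := by
        rintro ⟨h1, -, -⟩
        omega
      rw [if_neg hno, if_neg (by omega)]
    · have hyes : 1 ≤ c - 1 ∧ conjP ν.1 (c-1) = conjP μ.1 (c-1) ∧
          conjP ν.1 (c - 1 + 1) = conjP μ.1 (c - 1 + 1) + 1 := by
        refine ⟨by omega, ?_, ?_⟩
        · rw [h (c-1) (by omega), if_neg (by omega)]
          omega
        · rw [(by omega : c - 1 + 1 = c), h c (by omega), if_pos rfl]
      rw [if_pos hyes, if_pos h2]
  · intro i hi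
    rw [if_neg]
    rintro ⟨h1, h2, h3⟩
    rw [h (i + 1) (by omega)] at h3
    split_ifs at h3 with h4
    · omega
    · omega

/-- ψ for two added boxes in columns d < c -/
lemma psi_eval2 {A : Type*} [CommRing A] (t : A) (μ ν : PartitionF) (c d : ℕ)
    (hd : 1 ≤ d) (hdc : d < c)
    (h : ∀ k, 1 ≤ k → conjP ν.1 k
      = conjP μ.1 k + (if k = c then 1 else 0) + (if k = d then 1 else 0)) :
    psiStrip t μ ν = (if 2 ≤ d then 1 - t ^ mcount μ.1 (d - 1) else 1) *
      (if d + 1 < c then 1 - t ^ mcount μ.1 (c - 1) else 1) := by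
  have e1 : (if 1 ≤ d - 1 ∧ conjP ν.1 (d-1) = conjP μ.1 (d-1) ∧
        conjP ν.1 (d - 1 + 1) = conjP μ.1 (d - 1 + 1) + 1
        then 1 - t ^ mcount μ.1 (d-1) else 1)
      = (if 2 ≤ d then 1 - t ^ mcount μ.1 (d - 1) else 1) := by
    rcases Nat.lt_or_ge d 2 with h2 | h2
    · rw [if_neg (by rintro ⟨h1, -, -⟩; omega), if_neg (by omega)]
    · have hyes : 1 ≤ d - 1 ∧ conjP ν.1 (d-1) = conjP μ.1 (d-1) ∧
          conjP ν.1 (d - 1 + 1) = conjP μ.1 (d - 1 + 1) + 1 := by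
        refine ⟨(by omega : 1 ≤ d - 1), ?_, ?_⟩
        · rw [h (d-1) (by omega), if_neg (by omega), if_neg (by omega)]
          omega
        · rw [(by omega : d - 1 + 1 = d), h d (by omega), if_neg (by omega), if_pos rfl]
      rw [if_pos hyes, if_pos h2]
  have e2 : (if 1 ≤ c - 1 ∧ conjP ν.1 (c-1) = conjP μ.1 (c-1) ∧
        conjP ν.1 (c - 1 + 1) = conjP μ.1 (c - 1 + 1) + 1
        then 1 - t ^ mcount μ.1 (c-1) else 1)
      = (if d + 1 < c then 1 - t ^ mcount μ.1 (c - 1) else 1) := by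
    rcases Nat.lt_or_ge (d + 1) c with h2 | h2
    · have hyes : 1 ≤ c - 1 ∧ conjP ν.1 (c-1) = conjP μ.1 (c-1) ∧
          conjP ν.1 (c - 1 + 1) = conjP μ.1 (c - 1 + 1) + 1 := by
        refine ⟨(by omega : 1 ≤ c - 1), ?_, ?_⟩
        · rw [h (c-1) (by omega), if_neg (by omega), if_neg (by omega)]
          omega
        · rw [(by omega : c - 1 + 1 = c), h c (by omega), if_pos rfl, if_neg (by omega)]
      rw [if_pos hyes, if_pos h2]
    · have hno : ¬(1 ≤ c - 1 ∧ conjP ν.1 (c-1) = conjP μ.1 (c-1) ∧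
          conjP ν.1 (c - 1 + 1) = conjP μ.1 (c - 1 + 1) + 1) := by
        rintro ⟨h1, h3, -⟩
        rw [h (c-1) (by omega), if_neg (by omega), if_pos (by omega)] at h3
        omega
      rw [if_neg hno, if_neg (by omega)]
  rw [psiStrip, finprod_eq_prod_of_mulSupport_subset _
    (s := ({d - 1, c - 1} : Finset ℕ))]
  · rw [Finset.prod_pair (by omega : d - 1 ≠ c - 1), e1, e2]
  · intro i hi
    simp only [Function.mem_mulSupport] at hi
    simp only [Finset.coe_insert, Finset.coe_singleton, Set.mem_insert_iff,
      Set.mem_singleton_iff]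
    by_contra hcon
    push_neg at hcon
    apply hi
    rw [if_neg]
    rintro ⟨h1, h2, h3⟩
    rw [h (i + 1) (by omega)] at h3
    split_ifs at h3 with h4 h5 h5
    · omega
    · omega
    · omega
    · omega


lemma negpow_congr {A : Type*} [Monoid A] [HasDistribNeg A] {a b : ℕ} (h : a % 2 = b % 2) :
    (-1 : A) ^ a = (-1 : A) ^ b := by
  rcases Nat.even_or_odd a with ha | ha
  · have hb : Even b := by
      rw [Nat.even_iff] at ha ⊢
      omega
    rw [Even.neg_one_pow ha, Even.neg_one_pow hb]
  · have hb : Odd b := by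
      rw [Nat.odd_iff] at ha ⊢
      omega
    rw [Odd.neg_one_pow ha, Odd.neg_one_pow hb]

lemma psize_of_conjP_add {μ lam : PartitionF} {δ : ℕ → ℕ}
    (h : ∀ k, 1 ≤ k → conjP lam.1 k = conjP μ.1 k + δ k) :
    psize lam = psize μ + ∑ᶠ k, δ (k + 1) := by
  rw [psize_eq_conj_sum, psize_eq_conj_sum]
  set M := max (μ.1 0) (lam.1 0) with hM
  have h1 : ∀ k, M ≤ k → conjP lam.1 (k + 1) = 0 := fun k hk =>
    conjP_eq_zero_of_gt lam.2 (by omega) (by omega)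
  have h2 : ∀ k, M ≤ k → conjP μ.1 (k + 1) = 0 := fun k hk =>
    conjP_eq_zero_of_gt μ.2 (by omega) (by omega)
  have h3 : ∀ k, M ≤ k → δ (k + 1) = 0 := by
    intro k hk
    have := h (k + 1) (by omega)
    rw [h1 k hk, h2 k hk] at this
    omega
  rw [finsum_eq_range h1, finsum_eq_range h2, finsum_eq_range h3, ← Finset.sum_add_distrib]
  exact Finset.sum_congr rfl fun k _ => h (k + 1) (by omega)

lemma finsum_shift_ite {c v : ℕ} (hc : 1 ≤ c) :
    ∑ᶠ k : ℕ, (if k + 1 = c then v else 0) = v := by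
  rw [finsum_eq_single _ (c - 1)]
  · rw [if_pos (by omega)]
  · intro x hx
    rw [if_neg (by omega)]

/-- VDom implies containment and size. -/
lemma vdom_implies {μ lam : PartitionF} {c : ℕ} (hc : 1 ≤ c) (h : VDom μ.1 lam.1 c) :
    (∀ i, μ.1 i ≤ lam.1 i) ∧ psize lam = psize μ + 2 := by
  have hconj : ∀ k, 1 ≤ k → conjP lam.1 k = conjP μ.1 k + if k = c then 2 else 0 := by
    intro k hk
    rcases eq_or_ne k c with hkc | hkc
    · rw [if_pos hkc, hkc, h.1]
    · rw [if_neg hkc, h.2 k hk hkc]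
      omega
  constructor
  · exact le_of_conjP_le μ.2 lam.2 fun k hk => by rw [hconj k hk]; omega
  · rw [psize_of_conjP_add hconj, finsum_shift_ite hc]

lemma twocol_implies {μ lam : PartitionF} {c : ℕ} (hc : 1 ≤ c) (h : TwoCol μ.1 lam.1 c) :
    (∀ i, μ.1 i ≤ lam.1 i) ∧ psize lam = psize μ + 2 := by
  have hconj : ∀ k, 1 ≤ k →
      conjP lam.1 k = conjP μ.1 k + ((if k = c then 1 else 0) + if k = c + 1 then 1 else 0) := by
    intro k hk
    rcases eq_or_ne k c with hkc | hkc
    · rw [if_pos hkc, if_neg (by omega), hkc, h.1]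
    · rcases eq_or_ne k (c + 1) with hkc2 | hkc2
      · rw [if_neg hkc, if_pos hkc2, hkc2, h.2.1]
      · rw [if_neg hkc, if_neg hkc2, h.2.2 k hk hkc hkc2]
        omega
  constructor
  · exact le_of_conjP_le μ.2 lam.2 fun k hk => by rw [hconj k hk]; omega
  · rw [psize_of_conjP_add hconj]
    have : ∑ᶠ k : ℕ, ((if k + 1 = c then 1 else 0) + if k + 1 = c + 1 then 1 else 0) = 2 := by
      rw [finsum_add_distrib, finsum_shift_ite hc, finsum_shift_ite (by omega : 1 ≤ c + 1)]
      · apply Set.Finite.subset (Set.finite_singleton (c - 1))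
        intro x hx
        simp only [Function.mem_support] at hx
        simp only [Set.mem_singleton_iff]
        by_contra h2
        rw [if_neg (by omega)] at hx
        exact hx rfl
      · apply Set.Finite.subset (Set.finite_singleton c)
        intro x hx
        simp only [Function.mem_support] at hx
        simp only [Set.mem_singleton_iff]
        by_contra h2
        rw [if_neg (by omega)] at hx
        exact hx rfl
    rw [this]

lemma xi_eq_zero {A : Type*} [CommRing A] (t : A) {μ lam : PartitionF}
    (h : ∀ k, 1 ≤ k → ¬VDom μ.1 lam.1 k ∧ ¬TwoCol μ.1 lam.1 k) :
    xiCoef t μ lam = 0 := by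
  rw [xiCoef]
  rw [finsum_eq_zero_of_forall_eq_zero, finsum_eq_zero_of_forall_eq_zero, add_zero]
  · intro k
    rw [if_neg]
    rintro ⟨h1, h2⟩
    exact (h k h1).2 h2
  · intro k
    rw [if_neg]
    rintro ⟨h1, h2⟩
    exact (h k h1).1 h2

lemma xi_of_vdom {A : Type*} [CommRing A] (t : A) {μ lam : PartitionF} {c : ℕ}
    (hc : 1 ≤ c) (h : VDom μ.1 lam.1 c) :
    xiCoef t μ lam = if c = 1 then 1 else
      (1 - t ^ mcount μ.1 (c - 1)) * (1 - t ^ (mcount μ.1 (c - 1) - 1)) := by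
  rw [xiCoef]
  have h2 : (∑ᶠ k : ℕ, if 1 ≤ k ∧ TwoCol μ.val lam.val k then
      (-t) ^ mcount μ.val k * (1 + t) *
        (if k = 1 then 1 else 1 - t ^ mcount μ.val (k - 1)) else 0) = 0 := by
    apply finsum_eq_zero_of_forall_eq_zero
    intro k
    rw [if_neg]
    rintro ⟨h1, h2⟩
    rcases eq_or_ne k c with hkc | hkc
    · have := h2.1
      rw [hkc, h.1] at this
      omega
    · have := h2.1
      rw [h.2 k h1 hkc] at this
      omega
  rw [h2, add_zero, finsum_eq_single _ c]
  · rw [if_pos ⟨hc, h⟩]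
  · intro k hk
    rw [if_neg]
    rintro ⟨h1, h2⟩
    have := h2.1
    rw [h.2 k h1 hk] at this
    omega

lemma xi_of_twocol {A : Type*} [CommRing A] (t : A) {μ lam : PartitionF} {c : ℕ}
    (hc : 1 ≤ c) (h : TwoCol μ.1 lam.1 c) :
    xiCoef t μ lam = (-t) ^ mcount μ.1 c * (1 + t) *
      (if c = 1 then 1 else 1 - t ^ mcount μ.1 (c - 1)) := by
  rw [xiCoef]
  have h1 : (∑ᶠ k : ℕ, if 1 ≤ k ∧ VDom μ.val lam.val k then
      (if k = 1 then 1 else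
        (1 - t ^ mcount μ.val (k - 1)) * (1 - t ^ (mcount μ.val (k - 1) - 1))) else 0) = 0 := by
    apply finsum_eq_zero_of_forall_eq_zero
    intro k
    rw [if_neg]
    rintro ⟨h1, h2⟩
    have h3 := h2.1
    rcases eq_or_ne k c with hkc | hkc
    · rw [hkc, h.1] at h3
      omega
    · rcases eq_or_ne k (c + 1) with hkc2 | hkc2
      · rw [hkc2, h.2.1] at h3
        omega
      · rw [h.2.2 k h1 hkc hkc2] at h3
        omega
  rw [h1, zero_add, finsum_eq_single _ c]
  · rw [if_pos ⟨hc, h⟩]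
  · intro k hk
    rw [if_neg]
    rintro ⟨h1, h2⟩
    have h3 := h2.1
    have h4 := h2.2.1
    rcases eq_or_ne k (c + 1) with hkc2 | hkc2
    · rw [hkc2, h.2.2 (c + 1 + 1) (by omega) (by omega) (by omega)] at h4
      omega
    · rcases eq_or_ne (k + 1) c with hkc3 | hkc3
      · rw [hkc3, h.1] at h4
        rw [h.2.2 k h1 hk (by omega)] at h3
        omega
      · rcases eq_or_ne (k + 1) (c + 1) with hkc4 | hkc4
        · omega
        · rw [h.2.2 (k + 1) (by omega) (by omega) hkc4] at h4
          omega

lemma key_case1 {A : Type*} [CommRing A] (t : A) (μ lam : PartitionF) (T1 : Finset PartitionF)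
    (hT1 : ∀ ν : PartitionF, ν ∈ T1 ↔ (∀ i, μ.1 i ≤ ν.1 i) ∧ psize ν = psize μ + 1)
    (hle : ∀ i, μ.1 i ≤ lam.1 i) (hsz : psize lam = psize μ + 2)
    (r : ℕ) (hg : ∀ i, lam.1 i - μ.1 i = if i = r then 2 else 0) :
    xiCoef t μ lam = (-1 : A) ^ nstat lam.1 * (-1 : A) ^ nstat μ.1 *
      (2 * (if HStrip 2 μ lam then psiStrip t μ lam else 0)
        - ∑ ν ∈ T1, (if HStrip 1 μ ν then psiStrip t μ ν else 0) *
            (if HStrip 1 ν lam then psiStrip t ν lam else 0)) := by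
  have hlam_i : ∀ i, lam.1 i = μ.1 i + (if i = r then 2 else 0) := by
    intro i
    have h2 := hle i
    rcases eq_or_ne i r with h | h
    · rw [if_pos h]
      have h1 := hg i
      rw [if_pos h] at h1
      omega
    · rw [if_neg h]
      have h1 := hg i
      rw [if_neg h] at h1
      omega
  set c := μ.1 r + 1 with hc_def
  have hc : 1 ≤ c := by omega
  have hup : r = 0 ∨ μ.1 r + 2 ≤ μ.1 (r - 1) := by
    rcases Nat.eq_zero_or_pos r with h0 | h0
    · exact Or.inl h0
    · right
      have h1 := lam.2.1 (by omega : r - 1 ≤ r)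
      rw [hlam_i r, hlam_i (r - 1), if_pos rfl, if_neg (by omega)] at h1
      omega
  have hpa : IsPartitionFun (addbox μ.1 r) := by
    apply addbox_isPartitionFun μ.2
    rcases hup with h | h
    · exact Or.inl h
    · right
      omega
  set ν : PartitionF := ⟨addbox μ.1 r, hpa⟩ with hν_def
  have hν1 : ν.1 r = μ.1 r + 1 := by
    show addbox μ.1 r r = μ.1 r + 1
    simp [addbox]
  have hνi : ∀ i, i ≠ r → ν.1 i = μ.1 i := by
    intro i h
    show addbox μ.1 r i = μ.1 i
    simp only [addbox]
    rw [if_neg h]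
  have hlam_eq : lam.1 = addbox ν.1 r := by
    funext i
    show lam.1 i = if i = r then ν.1 r + 1 else ν.1 i
    rcases eq_or_ne i r with h | h
    · rw [if_pos h, hν1, hlam_i i, if_pos h, h]
    · rw [if_neg h, hνi i h, hlam_i i, if_neg h]
      omega
  have hpl : IsPartitionFun (addbox ν.1 r) := by
    rw [← hlam_eq]
    exact lam.2
  have hlam_sub : lam = (⟨addbox ν.1 r, hpl⟩ : PartitionF) := Subtype.ext hlam_eq
  have hconjν : ∀ k, 1 ≤ k → conjP ν.1 k = conjP μ.1 k + if k = c then 1 else 0 := by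
    intro k hk
    have h1 := conjP_addbox μ.2 hpa hk
    rw [← hc_def] at h1
    exact h1
  have hconjl : ∀ k, 1 ≤ k → conjP lam.1 k = conjP ν.1 k + if k = c + 1 then 1 else 0 := by
    intro k hk
    have h2 := conjP_addbox ν.2 hpl hk
    rw [← hlam_eq, hν1, ← hc_def] at h2
    exact h2
  have hconj2 : ∀ k, 1 ≤ k → conjP lam.1 k
      = conjP μ.1 k + (if k = c + 1 then 1 else 0) + (if k = c then 1 else 0) := by
    intro k hk
    rw [hconjl k hk, hconjν k hk]
    ring
  have hTC : TwoCol μ.1 lam.1 c := by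
    refine ⟨?_, ?_, ?_⟩
    · rw [hconj2 c hc, if_neg (by omega), if_pos rfl]
    · rw [hconj2 (c + 1) (by omega), if_pos rfl, if_neg (by omega)]
    · intro i hi h1 h2
      rw [hconj2 i hi, if_neg h2, if_neg h1]
      omega
  have hxi := xi_of_twocol t hc hTC
  have hm0 : mcount μ.1 c = 0 := by
    rw [mcount_eq μ.2 hc]
    have h1 : ¬ (r < conjP μ.1 c) := by
      rw [lt_conjP_iff μ.2 hc]
      omega
    have h2 : conjP μ.1 (c + 1) ≤ conjP μ.1 c := conjP_antitone μ.2 hc (by omega)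
    have h3 : r ≤ conjP μ.1 (c + 1) := by
      rcases hup with h0 | h0
      · omega
      · have h4 := (lt_conjP_iff μ.2 (by omega : 1 ≤ c + 1) (r - 1)).mpr (by omega)
        omega
    omega
  have hH2 : HStrip 2 μ lam := by
    refine ⟨hle, hsz, fun k hk => ?_⟩
    rw [hconj2 k hk]
    split_ifs <;> omega
  have hψ2 : psiStrip t μ lam = (if 2 ≤ c then 1 - t ^ mcount μ.1 (c - 1) else 1) := by
    have h1 := psi_eval2 t μ lam (c + 1) c hc (by omega) hconj2
    rw [h1, if_neg (lt_irrefl (c + 1)), mul_one]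
  have hH1a : HStrip 1 μ ν := hstrip1_of_addbox μ r hpa
  have hH1b : HStrip 1 ν lam := by
    rw [hlam_sub]
    exact hstrip1_of_addbox ν r hpl
  have hψa : psiStrip t μ ν = (if 2 ≤ c then 1 - t ^ mcount μ.1 (c - 1) else 1) :=
    psi_eval1 t μ ν c hc hconjν
  have hmν : mcount ν.1 c = 1 := by
    rw [mcount_eq ν.2 hc, hconjν c hc, hconjν (c + 1) (by omega), if_pos rfl,
      if_neg (by omega)]
    have h1 := mcount_eq μ.2 hc
    have h2 := conjP_antitone μ.2 hc (by omega : c ≤ c + 1)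
    omega
  have hψb : psiStrip t ν lam = 1 - t ^ 1 := by
    have h1 := psi_eval1 t ν lam (c + 1) (by omega) hconjl
    rw [h1, if_pos (by omega)]
    simp only [Nat.add_sub_cancel]
    rw [hmν]
  have hnν : nstat ν.1 = nstat μ.1 + r := nstat_addbox μ r hpa
  have hnl : nstat lam.1 = nstat ν.1 + r := by
    rw [hlam_eq]
    exact nstat_addbox ν r hpl
  have hsign : (-1 : A) ^ nstat lam.1 * (-1 : A) ^ nstat μ.1 = 1 := by
    rw [← pow_add]
    exact Even.neg_one_pow ⟨nstat μ.1 + r, by omega⟩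
  have hsum : ∑ x ∈ T1, (if HStrip 1 μ x then psiStrip t μ x else 0) *
      (if HStrip 1 x lam then psiStrip t x lam else 0)
      = (if HStrip 1 μ ν then psiStrip t μ ν else 0) *
        (if HStrip 1 ν lam then psiStrip t ν lam else 0) := by
    apply Finset.sum_eq_single_of_mem ν ((hT1 ν).mpr ⟨hH1a.1, hH1a.2.1⟩)
    intro x hx hxν
    by_cases h1 : HStrip 1 μ x
    · by_cases h2 : HStrip 1 x lam
      · exfalso
        obtain ⟨r', hr'⟩ := hstrip1_exists h1
        have hler : x.1 r' ≤ lam.1 r' := h2.1 r'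
        have hab : addbox μ.1 r' r' = μ.1 r' + 1 := by simp [addbox]
        rw [hr', hab] at hler
        have hlr := hlam_i r'
        have hrr : r' = r := by
          rcases eq_or_ne r' r with h | h
          · exact h
          · rw [if_neg h] at hlr
            omega
        apply hxν
        apply Subtype.ext
        rw [hr', hrr, hν_def]
      · rw [if_neg h2, mul_zero]
    · rw [if_neg h1, zero_mul]
  rw [hxi, if_pos hH2, hψ2, hsum, if_pos hH1a, if_pos hH1b, hψa, hψb, hsign, hm0]
  rcases eq_or_ne c 1 with h | h
  · rw [if_pos h, if_neg (by omega)]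
    ring
  · rw [if_neg h, if_pos (by omega)]
    ring

lemma key_case2 {A : Type*} [CommRing A] (t : A) (μ lam : PartitionF) (T1 : Finset PartitionF)
    (hT1 : ∀ ν : PartitionF, ν ∈ T1 ↔ (∀ i, μ.1 i ≤ ν.1 i) ∧ psize ν = psize μ + 1)
    (hle : ∀ i, μ.1 i ≤ lam.1 i) (hsz : psize lam = psize μ + 2)
    (r s : ℕ) (hrs : r < s)
    (hg : ∀ i, lam.1 i - μ.1 i = (if i = r then 1 else 0) + (if i = s then 1 else 0))
    (heq : μ.1 r = μ.1 s) :
    xiCoef t μ lam = (-1 : A) ^ nstat lam.1 * (-1 : A) ^ nstat μ.1 *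
      (2 * (if HStrip 2 μ lam then psiStrip t μ lam else 0)
        - ∑ ν ∈ T1, (if HStrip 1 μ ν then psiStrip t μ ν else 0) *
            (if HStrip 1 ν lam then psiStrip t ν lam else 0)) := by
  have hlam_i : ∀ i, lam.1 i = μ.1 i + (if i = r then 1 else 0) + (if i = s then 1 else 0) := by
    intro i
    have h2 := hle i
    have h1 := hg i
    rcases eq_or_ne i r with h | h
    · rw [if_pos h, if_neg (by omega)] at h1 ⊢
      omega
    · rw [if_neg h] at h1 ⊢
      rcases eq_or_ne i s with h3 | h3
      · rw [if_pos h3] at h1 ⊢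
        omega
      · rw [if_neg h3] at h1 ⊢
        omega
  have hseq : s = r + 1 := by
    by_contra hcon
    have hs1 : r + 1 < s := by omega
    have hm1a : μ.1 (r + 1) ≤ μ.1 r := μ.2.1 (by omega)
    have hm1b : μ.1 s ≤ μ.1 (r + 1) := μ.2.1 (by omega)
    have h1 := lam.2.1 (by omega : r + 1 ≤ s)
    rw [hlam_i s, hlam_i (r + 1), if_neg (by omega), if_pos rfl,
      if_neg (by omega), if_neg (by omega)] at h1
    omega
  set c := μ.1 r + 1 with hc_def
  have hc : 1 ≤ c := by omega
  have hpa : IsPartitionFun (addbox μ.1 r) := by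
    apply addbox_isPartitionFun μ.2
    rcases Nat.eq_zero_or_pos r with h0 | h0
    · exact Or.inl h0
    · right
      have h1 := lam.2.1 (by omega : r - 1 ≤ r)
      rw [hlam_i r, hlam_i (r - 1), if_pos rfl, if_neg (by omega), if_neg (by omega),
        if_neg (by omega)] at h1
      omega
  set ν : PartitionF := ⟨addbox μ.1 r, hpa⟩ with hν_def
  have hν1 : ν.1 r = μ.1 r + 1 := by
    show addbox μ.1 r r = μ.1 r + 1
    simp [addbox]
  have hνi : ∀ i, i ≠ r → ν.1 i = μ.1 i := by
    intro i h
    show addbox μ.1 r i = μ.1 i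
    simp only [addbox]
    rw [if_neg h]
  have hlam_eq : lam.1 = addbox ν.1 s := by
    funext i
    show lam.1 i = if i = s then ν.1 s + 1 else ν.1 i
    rcases eq_or_ne i s with h | h
    · rw [h, if_pos rfl, hνi s (by omega), hlam_i s, if_neg (by omega), if_pos rfl]
    · rw [if_neg h, hlam_i i, if_neg h]
      rcases eq_or_ne i r with h3 | h3
      · rw [h3, if_pos rfl, hν1]
      · rw [if_neg h3, hνi i h3]
        omega
  have hpl : IsPartitionFun (addbox ν.1 s) := by
    rw [← hlam_eq]
    exact lam.2
  have hlam_sub : lam = (⟨addbox ν.1 s, hpl⟩ : PartitionF) := Subtype.ext hlam_eq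
  have hconjν : ∀ k, 1 ≤ k → conjP ν.1 k = conjP μ.1 k + if k = c then 1 else 0 := by
    intro k hk
    have h1 := conjP_addbox μ.2 hpa hk
    rw [← hc_def] at h1
    exact h1
  have hconjl : ∀ k, 1 ≤ k → conjP lam.1 k = conjP ν.1 k + if k = c then 1 else 0 := by
    intro k hk
    have h2 := conjP_addbox ν.2 hpl hk
    rw [← hlam_eq, hνi s (by omega), ← heq, ← hc_def] at h2
    exact h2
  have hVD : VDom μ.1 lam.1 c := by
    constructor
    · rw [hconjl c hc, hconjν c hc]
      first
      | (split_ifs <;> omega)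
      | omega
    · intro i hi h1
      rw [hconjl i hi, hconjν i hi]
      first
      | (split_ifs <;> omega)
      | omega
  have hxi := xi_of_vdom t hc hVD
  have hH2n : ¬ HStrip 2 μ lam := by
    intro h
    have h1 := h.2.2 c hc
    rw [hconjl c hc, hconjν c hc] at h1
    first
    | (split_ifs at h1 <;> omega)
    | omega
  have hH1a : HStrip 1 μ ν := hstrip1_of_addbox μ r hpa
  have hH1b : HStrip 1 ν lam := by
    rw [hlam_sub]
    exact hstrip1_of_addbox ν s hpl
  have hψa : psiStrip t μ ν = (if 2 ≤ c then 1 - t ^ mcount μ.1 (c - 1) else 1) :=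
    psi_eval1 t μ ν c hc hconjν
  have hψb : psiStrip t ν lam = (if 2 ≤ c then 1 - t ^ mcount ν.1 (c - 1) else 1) :=
    psi_eval1 t ν lam c hc hconjl
  have hnν : nstat ν.1 = nstat μ.1 + r := nstat_addbox μ r hpa
  have hnl : nstat lam.1 = nstat ν.1 + s := by
    rw [hlam_eq]
    exact nstat_addbox ν s hpl
  have hsign : (-1 : A) ^ nstat lam.1 * (-1 : A) ^ nstat μ.1 = -1 := by
    rw [← pow_add]
    exact Odd.neg_one_pow ⟨nstat μ.1 + r, by omega⟩
  have hsum : ∑ x ∈ T1, (if HStrip 1 μ x then psiStrip t μ x else 0) *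
      (if HStrip 1 x lam then psiStrip t x lam else 0)
      = (if HStrip 1 μ ν then psiStrip t μ ν else 0) *
        (if HStrip 1 ν lam then psiStrip t ν lam else 0) := by
    apply Finset.sum_eq_single_of_mem ν ((hT1 ν).mpr ⟨hH1a.1, hH1a.2.1⟩)
    intro x hx hxν
    by_cases h1 : HStrip 1 μ x
    · by_cases h2 : HStrip 1 x lam
      · exfalso
        obtain ⟨r', hr'⟩ := hstrip1_exists h1
        have hler : x.1 r' ≤ lam.1 r' := h2.1 r'
        have hab : addbox μ.1 r' r' = μ.1 r' + 1 := by simp [addbox]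
        rw [hr', hab] at hler
        have hlr := hlam_i r'
        have hrr : r' = r ∨ r' = s := by
          rcases eq_or_ne r' r with h | h
          · exact Or.inl h
          · rcases eq_or_ne r' s with h3 | h3
            · exact Or.inr h3
            · rw [if_neg h, if_neg h3] at hlr
              omega
        rcases hrr with h | h
        · apply hxν
          apply Subtype.ext
          rw [hr', h, hν_def]
        · have hx2 := x.2
          rw [hr', h] at hx2
          have hmono := hx2.1 (by omega : s - 1 ≤ s)
          have e1 : addbox μ.1 s s = μ.1 s + 1 := by simp [addbox]
          have e2 : addbox μ.1 s (s - 1) = μ.1 (s - 1) := by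
            simp only [addbox]
            rw [if_neg (by omega)]
          rw [e1, e2] at hmono
          have e3 : s - 1 = r := by omega
          rw [e3] at hmono
          omega
      · rw [if_neg h2, mul_zero]
    · rw [if_neg h1, zero_mul]
  rw [hxi, if_neg hH2n, hsum, if_pos hH1a, if_pos hH1b, hψa, hψb, hsign]
  rcases eq_or_ne c 1 with h | h
  · rw [if_pos h, if_neg (by omega), if_neg (by omega)]
    ring
  · have hm1 : 1 ≤ mcount μ.1 (c - 1) :=
      mcount_pos μ.2 (by omega : 1 ≤ c - 1) (by omega : μ.1 r = c - 1)
    have hmν : mcount ν.1 (c - 1) = mcount μ.1 (c - 1) - 1 := by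
      rw [mcount_eq ν.2 (by omega : 1 ≤ c - 1), (by omega : c - 1 + 1 = c),
        hconjν (c - 1) (by omega), hconjν c hc]
      have h1 := mcount_eq μ.2 (by omega : 1 ≤ c - 1)
      rw [(by omega : c - 1 + 1 = c)] at h1
      have h2 := conjP_antitone μ.2 (by omega : 1 ≤ c - 1) (by omega : c - 1 ≤ c)
      first
      | (split_ifs <;> omega)
      | omega
    rw [if_neg h, if_pos (by omega), if_pos (by omega), hmν]
    have hm2 : mcount μ.1 (c - 1) - 1 + 1 = mcount μ.1 (c - 1) := by omega
    calc (1 - t ^ mcount μ.1 (c - 1)) * (1 - t ^ (mcount μ.1 (c - 1) - 1))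
        = -1 * (2 * 0 - (1 - t ^ mcount μ.1 (c - 1)) * (1 - t ^ (mcount μ.1 (c - 1) - 1)))
          := by ring
      _ = _ := rfl

lemma key_case3 {A : Type*} [CommRing A] (t : A) (μ lam : PartitionF) (T1 : Finset PartitionF)
    (hT1 : ∀ ν : PartitionF, ν ∈ T1 ↔ (∀ i, μ.1 i ≤ ν.1 i) ∧ psize ν = psize μ + 1)
    (hle : ∀ i, μ.1 i ≤ lam.1 i) (hsz : psize lam = psize μ + 2)
    (r s : ℕ) (hrs : r < s)
    (hg : ∀ i, lam.1 i - μ.1 i = (if i = r then 1 else 0) + (if i = s then 1 else 0))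
    (hlt : μ.1 s < μ.1 r) :
    xiCoef t μ lam = (-1 : A) ^ nstat lam.1 * (-1 : A) ^ nstat μ.1 *
      (2 * (if HStrip 2 μ lam then psiStrip t μ lam else 0)
        - ∑ ν ∈ T1, (if HStrip 1 μ ν then psiStrip t μ ν else 0) *
            (if HStrip 1 ν lam then psiStrip t ν lam else 0)) := by
  have hlam_i : ∀ i, lam.1 i = μ.1 i + (if i = r then 1 else 0) + (if i = s then 1 else 0) := by
    intro i
    have h2 := hle i
    have h1 := hg i
    rcases eq_or_ne i r with h | h
    · rw [if_pos h, if_neg (by omega)] at h1 ⊢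
      omega
    · rw [if_neg h] at h1 ⊢
      rcases eq_or_ne i s with h3 | h3
      · rw [if_pos h3] at h1 ⊢
        omega
      · rw [if_neg h3] at h1 ⊢
        omega
  set c := μ.1 r + 1 with hc_def
  set d := μ.1 s + 1 with hd_def
  have hd : 1 ≤ d := by omega
  have hdc : d < c := by omega
  have hc2 : 2 ≤ c := by omega
  have hpa : IsPartitionFun (addbox μ.1 r) := by
    apply addbox_isPartitionFun μ.2
    rcases Nat.eq_zero_or_pos r with h0 | h0
    · exact Or.inl h0
    · right
      have h1 := lam.2.1 (by omega : r - 1 ≤ r)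
      rw [hlam_i r, hlam_i (r - 1), if_pos rfl, if_neg (by omega), if_neg (by omega),
        if_neg (by omega)] at h1
      omega
  have hpb : IsPartitionFun (addbox μ.1 s) := by
    apply addbox_isPartitionFun μ.2
    right
    rcases eq_or_ne (s - 1) r with h0 | h0
    · rw [h0]
      omega
    · have h1 := lam.2.1 (by omega : s - 1 ≤ s)
      rw [hlam_i s, hlam_i (s - 1), if_neg (by omega), if_pos rfl, if_neg h0,
        if_neg (by omega)] at h1
      omega
  set νa : PartitionF := ⟨addbox μ.1 r, hpa⟩ with hνa_def
  set νb : PartitionF := ⟨addbox μ.1 s, hpb⟩ with hνb_def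
  have hEa : νa.1 = addbox μ.1 r := rfl
  have hEb : νb.1 = addbox μ.1 s := rfl
  have hνa1 : νa.1 r = μ.1 r + 1 := by
    rw [hEa]
    simp [addbox]
  have hνai : ∀ i, i ≠ r → νa.1 i = μ.1 i := by
    intro i h
    rw [hEa]
    simp only [addbox]
    rw [if_neg h]
  have hνb1 : νb.1 s = μ.1 s + 1 := by
    rw [hEb]
    simp [addbox]
  have hνbi : ∀ i, i ≠ s → νb.1 i = μ.1 i := by
    intro i h
    rw [hEb]
    simp only [addbox]
    rw [if_neg h]
  have hlam_eqa : lam.1 = addbox νa.1 s := by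
    funext i
    show lam.1 i = if i = s then νa.1 s + 1 else νa.1 i
    rcases eq_or_ne i s with h | h
    · rw [h, if_pos rfl]
      have h1 := hlam_i s
      rw [if_neg (by omega), if_pos rfl] at h1
      have h2 := hνai s (by omega)
      omega
    · rw [if_neg h]
      rcases eq_or_ne i r with h3 | h3
      · rw [h3]
        have h1 := hlam_i r
        rw [if_pos rfl, if_neg (by omega)] at h1
        omega
      · have h1 := hlam_i i
        rw [if_neg h3, if_neg h] at h1
        have h2 := hνai i h3
        omega
  have hlam_eqb : lam.1 = addbox νb.1 r := by
    funext i
    show lam.1 i = if i = r then νb.1 r + 1 else νb.1 i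
    rcases eq_or_ne i r with h | h
    · rw [h, if_pos rfl]
      have h1 := hlam_i r
      rw [if_pos rfl, if_neg (by omega)] at h1
      have h2 := hνbi r (by omega)
      omega
    · rw [if_neg h]
      rcases eq_or_ne i s with h3 | h3
      · rw [h3]
        have h1 := hlam_i s
        rw [if_neg (by omega), if_pos rfl] at h1
        omega
      · have h1 := hlam_i i
        rw [if_neg h, if_neg h3] at h1
        have h2 := hνbi i h3
        omega
  have hpla : IsPartitionFun (addbox νa.1 s) := by
    rw [← hlam_eqa]
    exact lam.2
  have hplb : IsPartitionFun (addbox νb.1 r) := by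
    rw [← hlam_eqb]
    exact lam.2
  have hlam_suba : lam = (⟨addbox νa.1 s, hpla⟩ : PartitionF) := Subtype.ext hlam_eqa
  have hlam_subb : lam = (⟨addbox νb.1 r, hplb⟩ : PartitionF) := Subtype.ext hlam_eqb
  have hca : ∀ k, 1 ≤ k → conjP νa.1 k = conjP μ.1 k + if k = c then 1 else 0 := by
    intro k hk
    have h1 := conjP_addbox μ.2 hpa hk
    rw [hEa, hc_def]
    exact h1
  have hcb : ∀ k, 1 ≤ k → conjP νb.1 k = conjP μ.1 k + if k = d then 1 else 0 := by
    intro k hk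
    have h1 := conjP_addbox μ.2 hpb hk
    rw [hEb, hd_def]
    exact h1
  have hνas : νa.1 s = μ.1 s := hνai s (by omega)
  have hνbr : νb.1 r = μ.1 r := hνbi r (by omega)
  have hcla : ∀ k, 1 ≤ k → conjP lam.1 k = conjP νa.1 k + if k = d then 1 else 0 := by
    intro k hk
    have h2 := conjP_addbox νa.2 hpla hk
    rw [hνas, ← hlam_eqa] at h2
    rw [hd_def]
    exact h2
  have hclb : ∀ k, 1 ≤ k → conjP lam.1 k = conjP νb.1 k + if k = c then 1 else 0 := by
    intro k hk
    have h2 := conjP_addbox νb.2 hplb hk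
    rw [hνbr, ← hlam_eqb] at h2
    rw [hc_def]
    exact h2
  have hconj2 : ∀ k, 1 ≤ k → conjP lam.1 k
      = conjP μ.1 k + (if k = c then 1 else 0) + (if k = d then 1 else 0) := by
    intro k hk
    rw [hcla k hk, hca k hk]
  have hH2 : HStrip 2 μ lam := by
    refine ⟨hle, hsz, fun k hk => ?_⟩
    rw [hconj2 k hk]
    split_ifs <;> omega
  have hψ2 := psi_eval2 t μ lam c d hd hdc hconj2
  have hH1a : HStrip 1 μ νa := hstrip1_of_addbox μ r hpa
  have hH1b : HStrip 1 μ νb := hstrip1_of_addbox μ s hpb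
  have hH1a' : HStrip 1 νa lam := by
    rw [hlam_suba]
    exact hstrip1_of_addbox νa s hpla
  have hH1b' : HStrip 1 νb lam := by
    rw [hlam_subb]
    exact hstrip1_of_addbox νb r hplb
  have hψa := psi_eval1 t μ νa c (by omega) hca
  have hψa' := psi_eval1 t νa lam d hd hcla
  have hψb := psi_eval1 t μ νb d hd hcb
  have hψb' := psi_eval1 t νb lam c (by omega) hclb
  have hmda : 2 ≤ d → mcount νa.1 (d - 1) = mcount μ.1 (d - 1) := by
    intro h2d
    rw [mcount_eq νa.2 (by omega : 1 ≤ d - 1), (by omega : d - 1 + 1 = d),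
      hca (d - 1) (by omega), hca d (by omega), mcount_eq μ.2 (by omega : 1 ≤ d - 1),
      (by omega : d - 1 + 1 = d)]
    split_ifs <;> omega
  have hψa2 : psiStrip t νa lam = (if 2 ≤ d then 1 - t ^ mcount μ.1 (d - 1) else 1) := by
    rw [hψa']
    rcases Nat.lt_or_ge d 2 with h2d | h2d
    · rw [if_neg (by omega), if_neg (by omega)]
    · rw [if_pos h2d, if_pos h2d, hmda h2d]
  -- nstat
  have hnνa : nstat νa.1 = nstat μ.1 + r := nstat_addbox μ r hpa
  have hnl : nstat lam.1 = nstat μ.1 + r + s := by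
    have h1 : nstat lam.1 = nstat νa.1 + s := by
      rw [hlam_eqa]
      exact nstat_addbox νa s hpla
    omega
  -- the two intermediates
  have hνab : νa ≠ νb := by
    intro h
    have h2 : νa.1 r = νb.1 r := by rw [h]
    rw [hνa1, hνbr] at h2
    omega
  have hpairsub : ({νa, νb} : Finset PartitionF) ⊆ T1 := by
    intro x hx
    rcases Finset.mem_insert.mp hx with h | h
    · rw [h]
      exact (hT1 νa).mpr ⟨hH1a.1, hH1a.2.1⟩
    · rw [Finset.mem_singleton.mp h]
      exact (hT1 νb).mpr ⟨hH1b.1, hH1b.2.1⟩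
  have hz : ∀ x ∈ T1, x ∉ ({νa, νb} : Finset PartitionF) →
      (if HStrip 1 μ x then psiStrip t μ x else 0) *
        (if HStrip 1 x lam then psiStrip t x lam else 0) = 0 := by
    intro x hx hxmem
    by_cases h1 : HStrip 1 μ x
    · by_cases h2 : HStrip 1 x lam
      · exfalso
        obtain ⟨r', hr'⟩ := hstrip1_exists h1
        have hler : x.1 r' ≤ lam.1 r' := h2.1 r'
        have hab : addbox μ.1 r' r' = μ.1 r' + 1 := by simp [addbox]
        rw [hr', hab] at hler
        have hlr := hlam_i r'
        have hrr : r' = r ∨ r' = s := by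
          rcases eq_or_ne r' r with h | h
          · exact Or.inl h
          · rcases eq_or_ne r' s with h3 | h3
            · exact Or.inr h3
            · rw [if_neg h, if_neg h3] at hlr
              omega
        apply hxmem
        rcases hrr with h | h
        · apply Finset.mem_insert.mpr
          left
          apply Subtype.ext
          rw [hr', h, hEa]
        · apply Finset.mem_insert.mpr
          right
          apply Finset.mem_singleton.mpr
          apply Subtype.ext
          rw [hr', h, hEb]
      · rw [if_neg h2, mul_zero]
    · rw [if_neg h1, zero_mul]
  have hsum : ∑ x ∈ T1, (if HStrip 1 μ x then psiStrip t μ x else 0) *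
      (if HStrip 1 x lam then psiStrip t x lam else 0)
      = (if HStrip 1 μ νa then psiStrip t μ νa else 0) *
          (if HStrip 1 νa lam then psiStrip t νa lam else 0)
        + (if HStrip 1 μ νb then psiStrip t μ νb else 0) *
          (if HStrip 1 νb lam then psiStrip t νb lam else 0) := by
    rw [← Finset.sum_subset hpairsub hz, Finset.sum_pair hνab]
  rcases eq_or_ne c (d + 1) with hadj | hnadj
  · -- adjacent columns
    have hTC : TwoCol μ.1 lam.1 d := by
      refine ⟨?_, ?_, ?_⟩
      · rw [hconj2 d hd]
        split_ifs <;> omega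
      · rw [hconj2 (d + 1) (by omega)]
        split_ifs <;> omega
      · intro i hi h1 h2
        rw [hconj2 i hi]
        split_ifs <;> omega
    have hxi := xi_of_twocol t hd hTC
    have hcd : conjP μ.1 d = s := by
      have h1 : ¬ (s < conjP μ.1 d) := by
        rw [lt_conjP_iff μ.2 hd]
        omega
      have h2 : s - 1 < conjP μ.1 d := by
        rw [lt_conjP_iff μ.2 hd]
        rcases eq_or_ne (s - 1) r with h0 | h0
        · rw [h0]
          omega
        · have h3 := lam.2.1 (by omega : s - 1 ≤ s)
          rw [hlam_i s, hlam_i (s - 1), if_neg (by omega), if_pos rfl, if_neg h0,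
            if_neg (by omega)] at h3
          omega
      omega
    have hcc : conjP μ.1 c = r := by
      have h1 : ¬ (r < conjP μ.1 c) := by
        rw [lt_conjP_iff μ.2 (by omega)]
        omega
      rcases Nat.eq_zero_or_pos r with h0 | h0
      · omega
      · have h2 : r - 1 < conjP μ.1 c := by
          rw [lt_conjP_iff μ.2 (by omega)]
          have h3 := lam.2.1 (by omega : r - 1 ≤ r)
          rw [hlam_i r, hlam_i (r - 1), if_pos rfl, if_neg (by omega), if_neg (by omega),
            if_neg (by omega)] at h3
          omega
        omega
    have hmd : mcount μ.1 d = s - r := by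
      rw [mcount_eq μ.2 hd, (by omega : d + 1 = c), hcd, hcc]
    have hmbc : mcount νb.1 (c - 1) = (s - r) + 1 := by
      rw [(by omega : c - 1 = d), mcount_eq νb.2 hd, hcb d hd, hcb (d + 1) (by omega),
        (by omega : d + 1 = c)]
      have h1 := hcb c (by omega)
      split_ifs <;> omega
    have hmca : mcount μ.1 (c - 1) = s - r := by
      rw [(by omega : c - 1 = d)]
      exact hmd
    have hsign : (-1 : A) ^ nstat lam.1 * (-1 : A) ^ nstat μ.1 = (-1 : A) ^ (s - r) := by
      rw [← pow_add]
      exact negpow_congr (by omega)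
    rw [hxi, if_pos hH2, hψ2, hsum, if_pos hH1a, if_pos hH1a', if_pos hH1b, if_pos hH1b',
      hψa, hψa2, hψb, hψb', hsign, hmd, hmbc, hmca, if_pos hc2,
      if_neg (by omega : ¬ (d + 1 < c)), if_pos hc2]
    have hnt : (-t) ^ (s - r) = (-1 : A) ^ (s - r) * t ^ (s - r) := by
      rw [neg_pow]
    rcases eq_or_ne d 1 with hd1 | hd1
    · rw [if_pos hd1, if_neg (by omega)]
      rw [hnt]
      ring
    · rw [if_neg hd1, if_pos (by omega)]
      rw [hnt]
      ring
  · -- non-adjacent columns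
    have hdc2 : d + 1 < c := by omega
    have hxi : xiCoef t μ lam = 0 := by
      apply xi_eq_zero
      intro k hk
      constructor
      · intro hv
        have h1 := hv.1
        rw [hconj2 k hk] at h1
        split_ifs at h1 <;> omega
      · intro htc
        have h1 := htc.1
        have h2 := htc.2.1
        rw [hconj2 k hk] at h1
        rw [hconj2 (k + 1) (by omega)] at h2
        split_ifs at h1 h2 <;> omega
    have hmbc : mcount νb.1 (c - 1) = mcount μ.1 (c - 1) := by
      rw [mcount_eq νb.2 (by omega : 1 ≤ c - 1), (by omega : c - 1 + 1 = c),
        hcb (c - 1) (by omega), hcb c (by omega), mcount_eq μ.2 (by omega : 1 ≤ c - 1),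
        (by omega : c - 1 + 1 = c)]
      split_ifs <;> omega
    rw [hxi, if_pos hH2, hψ2, hsum, if_pos hH1a, if_pos hH1a', if_pos hH1b, if_pos hH1b',
      hψa, hψa2, hψb, hψb', hmbc, if_pos hc2, if_pos hdc2]
    ring

lemma key {A : Type*} [CommRing A] (t : A) (μ lam : PartitionF) (T1 : Finset PartitionF)
    (hT1 : ∀ ν : PartitionF, ν ∈ T1 ↔ (∀ i, μ.1 i ≤ ν.1 i) ∧ psize ν = psize μ + 1) :
    xiCoef t μ lam = (-1 : A) ^ nstat lam.1 * (-1 : A) ^ nstat μ.1 *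
      (2 * (if HStrip 2 μ lam then psiStrip t μ lam else 0)
        - ∑ ν ∈ T1, (if HStrip 1 μ ν then psiStrip t μ ν else 0) *
            (if HStrip 1 ν lam then psiStrip t ν lam else 0)) := by
  by_cases hgood : (∀ i, μ.1 i ≤ lam.1 i) ∧ psize lam = psize μ + 2
  · obtain ⟨hle, hsz⟩ := hgood
    have hsum2 : ∑ᶠ i, (lam.1 i - μ.1 i) = 2 := by
      have := psize_decomp hle
      omega
    obtain ⟨N, hN⟩ := lam.2.2
    have hN' : ∀ n, N ≤ n → lam.1 n - μ.1 n = 0 := fun n hn => by rw [hN n hn]; omega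
    rcases finsum_two_decomp hN' hsum2 with ⟨r, hg⟩ | ⟨r, s, hrs, hg⟩
    · exact key_case1 t μ lam T1 hT1 hle hsz r hg
    · rcases eq_or_ne (μ.1 r) (μ.1 s) with heq | hne
      · exact key_case2 t μ lam T1 hT1 hle hsz r s hrs hg heq
      · have hlt : μ.1 s < μ.1 r := by
          have := μ.2.1 (le_of_lt hrs)
          omega
        exact key_case3 t μ lam T1 hT1 hle hsz r s hrs hg hlt
  · have hxi : xiCoef t μ lam = 0 := by
      apply xi_eq_zero
      intro k hk
      constructor
      · intro hv
        exact hgood (vdom_implies hk hv)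
      · intro htc
        exact hgood (twocol_implies hk htc)
    have hF2 : ¬ HStrip 2 μ lam := fun h => hgood ⟨h.1, h.2.1⟩
    have hs0 : ∀ x ∈ T1, (if HStrip 1 μ x then psiStrip t μ x else 0) *
        (if HStrip 1 x lam then psiStrip t x lam else 0) = 0 := by
      intro x hx
      by_cases h1 : HStrip 1 μ x
      · by_cases h2 : HStrip 1 x lam
        · exfalso
          apply hgood
          refine ⟨fun i => le_trans (h1.1 i) (h2.1 i), ?_⟩
          have := h1.2.1
          have := h2.2.1
          omega
        · rw [if_neg h2, mul_zero]
      · rw [if_neg h1, zero_mul]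
    rw [hxi, if_neg hF2, Finset.sum_eq_zero hs0]
    ring
/-- Let `Q λ` be the Hall–Littlewood `Q`-functions with parameter `t` (characterized here by
the Pieri rules for multiplication by `Q_{(1)}`, `Q_{(2)}` and the identity
`(1−t²) p₂ = 2 Q_{(2)} − Q_{(1)}²`), and set `Q̃_λ = (−1)^(n(λ)) Q_λ`.  Then for every
partition `μ`,
`(1 − t²) p₂ · Q̃_μ = Σ_λ ξ_{λ/μ}(t) Q̃_λ`,
where `ξ_{λ/μ}(t)` vanishes unless `μ ⊆ λ`, `|λ| = |μ| + 2` with the two boxes of `λ∖μ` in a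
single column or in two consecutive columns, in which cases it is given by the explicit
formulas of `xiCoef`. -/
theorem stmt12 {A : Type*} [CommRing A] (t : A) (p₂ : A) (Q : PartitionF → A)
    (hPieri : ∀ r : ℕ, r = 1 ∨ r = 2 → ∀ μ : PartitionF,
      Q (onerow r) * Q μ
        = ∑ᶠ lam : PartitionF, (if HStrip r μ lam then psiStrip t μ lam else 0) * Q lam)
    (hp2 : (1 - t ^ 2) * p₂ = 2 * Q (onerow 2) - Q (onerow 1) * Q (onerow 1)) :
    ∀ μ : PartitionF,
      (1 - t ^ 2) * p₂ * ((-1 : A) ^ nstat μ.val * Q μ)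
        = ∑ᶠ lam : PartitionF, xiCoef t μ lam * ((-1 : A) ^ nstat lam.val * Q lam) := by
  intro μ
  classical
  set s1 : A := (-1 : A) ^ nstat μ.1 with hs1
  set T1 : Finset PartitionF := (finite_above μ 1).toFinset with hT1def
  set T2 : Finset PartitionF := (finite_above μ 2).toFinset with hT2def
  have hT1 : ∀ ν : PartitionF, ν ∈ T1 ↔ (∀ i, μ.1 i ≤ ν.1 i) ∧ psize ν = psize μ + 1 :=
    fun ν => Set.Finite.mem_toFinset _
  have hT2 : ∀ lam : PartitionF, lam ∈ T2 ↔ (∀ i, μ.1 i ≤ lam.1 i) ∧ psize lam = psize μ + 2 :=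
    fun lam => Set.Finite.mem_toFinset _
  -- Pieri as finset sums
  have pieri_fin : ∀ (r : ℕ), r = 1 ∨ r = 2 → ∀ μ' : PartitionF, ∀ S : Finset PartitionF,
      (∀ lam : PartitionF, ((∀ i, μ'.1 i ≤ lam.1 i) ∧ psize lam = psize μ' + r) → lam ∈ S) →
      Q (onerow r) * Q μ'
        = ∑ lam ∈ S, (if HStrip r μ' lam then psiStrip t μ' lam else 0) * Q lam := by
    intro r hr μ' S hS
    rw [hPieri r hr μ']
    apply finsum_eq_sum_of_support_subset
    intro lam hlam
    simp only [Function.mem_support] at hlam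
    by_contra hmem
    apply hlam
    have : ¬ HStrip r μ' lam := by
      intro hH
      exact hmem (hS lam ⟨hH.1, hH.2.1⟩)
    rw [if_neg this, zero_mul]
  -- RHS as a finset sum
  have hRHS : ∑ᶠ lam : PartitionF, xiCoef t μ lam * ((-1 : A) ^ nstat lam.val * Q lam)
      = ∑ lam ∈ T2, xiCoef t μ lam * ((-1 : A) ^ nstat lam.val * Q lam) := by
    apply finsum_eq_sum_of_support_subset
    intro lam hlam
    simp only [Function.mem_support] at hlam
    by_contra hmem
    apply hlam
    have hxi : xiCoef t μ lam = 0 := by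
      apply xi_eq_zero
      intro k hk
      constructor
      · intro hv
        exact hmem ((hT2 lam).mpr (vdom_implies hk hv))
      · intro htc
        exact hmem ((hT2 lam).mpr (twocol_implies hk htc))
    rw [hxi, zero_mul]
  rw [hRHS]
  -- expand the left-hand side
  have hQ2 : Q (onerow 2) * Q μ
      = ∑ lam ∈ T2, (if HStrip 2 μ lam then psiStrip t μ lam else 0) * Q lam :=
    pieri_fin 2 (Or.inr rfl) μ T2 (fun lam h => (hT2 lam).mpr h)
  have hQ1 : Q (onerow 1) * Q μ
      = ∑ ν ∈ T1, (if HStrip 1 μ ν then psiStrip t μ ν else 0) * Q ν :=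
    pieri_fin 1 (Or.inl rfl) μ T1 (fun ν h => (hT1 ν).mpr h)
  have hQ11 : Q (onerow 1) * (Q (onerow 1) * Q μ)
      = ∑ lam ∈ T2, (∑ ν ∈ T1, (if HStrip 1 μ ν then psiStrip t μ ν else 0) *
          (if HStrip 1 ν lam then psiStrip t ν lam else 0)) * Q lam := by
    rw [hQ1, Finset.mul_sum]
    have step : ∀ ν ∈ T1, Q (onerow 1) * ((if HStrip 1 μ ν then psiStrip t μ ν else 0) * Q ν)
        = ∑ lam ∈ T2, (if HStrip 1 μ ν then psiStrip t μ ν else 0) *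
            ((if HStrip 1 ν lam then psiStrip t ν lam else 0) * Q lam) := by
      intro ν hν
      have hup : ∀ lam : PartitionF,
          ((∀ i, ν.1 i ≤ lam.1 i) ∧ psize lam = psize ν + 1) → lam ∈ T2 := by
        intro lam hl
        obtain ⟨hν1, hν2⟩ := (hT1 ν).mp hν
        refine (hT2 lam).mpr ⟨fun i => le_trans (hν1 i) (hl.1 i), by omega⟩
      calc Q (onerow 1) * ((if HStrip 1 μ ν then psiStrip t μ ν else 0) * Q ν)
          = (if HStrip 1 μ ν then psiStrip t μ ν else 0) * (Q (onerow 1) * Q ν) := by ring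
        _ = (if HStrip 1 μ ν then psiStrip t μ ν else 0) *
            (∑ lam ∈ T2, (if HStrip 1 ν lam then psiStrip t ν lam else 0) * Q lam) := by
            rw [pieri_fin 1 (Or.inl rfl) ν T2 hup]
        _ = _ := by rw [Finset.mul_sum]
    rw [Finset.sum_congr rfl step, Finset.sum_comm]
    apply Finset.sum_congr rfl
    intro lam _
    rw [Finset.sum_mul]
    apply Finset.sum_congr rfl
    intro ν _
    ring
  have hL : (1 - t ^ 2) * p₂ * (s1 * Q μ)
      = s1 * (2 * (Q (onerow 2) * Q μ) - Q (onerow 1) * (Q (onerow 1) * Q μ)) := by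
    linear_combination (s1 * Q μ) * hp2
  rw [hL, hQ2, hQ11, Finset.mul_sum, ← Finset.sum_sub_distrib, Finset.mul_sum]
  apply Finset.sum_congr rfl
  intro lam _
  have hkey := key t μ lam T1 hT1
  have h11 : (-1 : A) ^ nstat lam.1 * (-1 : A) ^ nstat lam.1 = 1 := by
    rw [← pow_add]
    exact Even.neg_one_pow ⟨nstat lam.1, rfl⟩
  rw [hkey]
  linear_combination (-(s1 * (2 * (if HStrip 2 μ lam then psiStrip t μ lam else 0)
      - ∑ ν ∈ T1, (if HStrip 1 μ ν then psiStrip t μ ν else 0) *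
          (if HStrip 1 ν lam then psiStrip t ν lam else 0)) * Q lam)) * h11
end
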